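/- arXiv:1802.05024 — 6 statements merged into one kernel-verified Lean document; each statement's English description precedes it below -/
import Mathlib

section
/- Let Γ be a finite-index subgroup of SL(2,ℤ) and let e₁ = (1,0)ᵀ. Suppose that for every prime p there exist matrices A₁, A₂ ∈ SL(2,ℤ) such that: (A) for every j ∈ ℕ, the reduction mod p of the vector A₁e₁ is not equal to j times the reduction mod p of A₂e₁ (as vectors in (ℤ/pℤ)²); and (B) there exist m₁, m₂ ∈ ℕ with p ∤ m₁, p ∤ m₂, and A₁T^{m₁}A₁⁻¹ ∈ Γ and A₂T^{m₂}A₂⁻¹ ∈ Γ. Then for every n ≥ 1 the canonical projection SL(2,ℤ) → SL(2,ℤ/nℤ) maps Γ onto all of SL(2,ℤ/nℤ), i.e. Γ is a totally non congruence group. -/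
open Matrix


/-- The matrix `T = [[1,1],[0,1]]` in `SL(2,ℤ)`. -/
def Tmat : Matrix.SpecialLinearGroup (Fin 2) ℤ :=
  ⟨!![1, 1; 0, 1], by norm_num [Matrix.det_fin_two_of]⟩


namespace TNC

variable {R : Type*} [CommRing R]

def E (t : R) : Matrix.SpecialLinearGroup (Fin 2) R :=
  ⟨!![1, t; 0, 1], by norm_num [Matrix.det_fin_two_of]⟩

def F (t : R) : Matrix.SpecialLinearGroup (Fin 2) R :=
  ⟨!![1, 0; t, 1], by norm_num [Matrix.det_fin_two_of]⟩

@[simp] lemma E_coe (t : R) : (E t : Matrix (Fin 2) (Fin 2) R) = !![1, t; 0, 1] := rfl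
@[simp] lemma F_coe (t : R) : (F t : Matrix (Fin 2) (Fin 2) R) = !![1, 0; t, 1] := rfl

lemma det_coe (M : Matrix.SpecialLinearGroup (Fin 2) R) :
    (M : Matrix (Fin 2) (Fin 2) R) 0 0 * (M : Matrix (Fin 2) (Fin 2) R) 1 1
      - (M : Matrix (Fin 2) (Fin 2) R) 0 1 * (M : Matrix (Fin 2) (Fin 2) R) 1 0 = 1 := by
  have := M.2
  rwa [Matrix.det_fin_two] at this

/-- the key conjugation computation: a matrix with vanishing (0,0) entry conjugates
upper unipotents into lower unipotents -/
lemma conj_E_of_zero (M : Matrix.SpecialLinearGroup (Fin 2) R)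
    (h0 : (M : Matrix (Fin 2) (Fin 2) R) 0 0 = 0) (t : R) :
    M * E t * M⁻¹ = F (-(t * ((M : Matrix (Fin 2) (Fin 2) R) 1 0) ^ 2)) := by
  have hdet := det_coe M
  apply Subtype.ext
  have hinv : ((M⁻¹ : Matrix.SpecialLinearGroup (Fin 2) R) : Matrix (Fin 2) (Fin 2) R)
      = !![(M : Matrix (Fin 2) (Fin 2) R) 1 1, -(M : Matrix (Fin 2) (Fin 2) R) 0 1;
          -(M : Matrix (Fin 2) (Fin 2) R) 1 0, (M : Matrix (Fin 2) (Fin 2) R) 0 0] := by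
    rw [Matrix.SpecialLinearGroup.coe_inv, Matrix.adjugate_fin_two]
  rw [Matrix.SpecialLinearGroup.coe_mul, Matrix.SpecialLinearGroup.coe_mul, hinv, E_coe, F_coe]
  ext i j
  fin_cases i <;> fin_cases j
  · simp [Matrix.mul_apply, Fin.sum_univ_two, h0]
    linear_combination hdet - (M : Matrix (Fin 2) (Fin 2) R) 1 1 * h0
  · simp [Matrix.mul_apply, Fin.sum_univ_two, h0]
  · simp [Matrix.mul_apply, Fin.sum_univ_two, h0]
    ring
  · simp [Matrix.mul_apply, Fin.sum_univ_two, h0]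
    linear_combination hdet - (M : Matrix (Fin 2) (Fin 2) R) 1 1 * h0

section Local

variable {p k : ℕ}

lemma isUnit_zmod_iff (hp : p.Prime) (hk : k ≠ 0) (x : ZMod (p ^ k)) :
    IsUnit x ↔ (ZMod.castHom (dvd_pow_self p hk) (ZMod p)) x ≠ 0 := by
  haveI : NeZero (p ^ k) := ⟨pow_ne_zero _ hp.pos.ne'⟩
  obtain ⟨y, rfl⟩ : ∃ y : ℕ, (y : ZMod (p ^ k)) = x := ⟨x.val, ZMod.natCast_zmod_val x⟩
  rw [ZMod.isUnit_iff_coprime, map_natCast, Ne, ZMod.natCast_eq_zero_iff,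
    Nat.coprime_pow_right_iff (Nat.pos_of_ne_zero hk), Nat.coprime_comm,
    Nat.Prime.coprime_iff_not_dvd hp]

/-- The set of elementary unipotent matrices. -/
def EFset (R : Type*) [CommRing R] : Set (Matrix.SpecialLinearGroup (Fin 2) R) :=
  {M | ∃ t, M = E t} ∪ {M | ∃ t, M = F t}

lemma mem_closure_of_unit (M : Matrix.SpecialLinearGroup (Fin 2) R)
    (hc : IsUnit ((M : Matrix (Fin 2) (Fin 2) R) 1 0)) :
    M ∈ Subgroup.closure (EFset R) := by
  obtain ⟨v, hv⟩ := hc.exists_right_inv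
  set a := (M : Matrix (Fin 2) (Fin 2) R) 0 0 with ha
  set b := (M : Matrix (Fin 2) (Fin 2) R) 0 1 with hb
  set c := (M : Matrix (Fin 2) (Fin 2) R) 1 0 with hcc
  set d := (M : Matrix (Fin 2) (Fin 2) R) 1 1 with hd
  have hdet : a * d - b * c = 1 := det_coe M
  have key : M = E ((a - 1) * v) * F c * E ((d - 1) * v) := by
    apply Subtype.ext
    rw [Matrix.SpecialLinearGroup.coe_mul, Matrix.SpecialLinearGroup.coe_mul,
      E_coe, E_coe, F_coe]
    ext i j
    fin_cases i <;> fin_cases j <;>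
      simp [Matrix.mul_apply, Fin.sum_univ_two]
    · linear_combination (1 - a) * hv
    · linear_combination (-(b + (a*d - a - d + 1) * v)) * hv - v * hdet
    · rfl
    · linear_combination (1 - d) * hv
  rw [key]
  have h1 : ∀ t : R, E t ∈ Subgroup.closure (EFset R) := fun t =>
    Subgroup.subset_closure (Or.inl ⟨t, rfl⟩)
  have h2 : ∀ t : R, F t ∈ Subgroup.closure (EFset R) := fun t =>
    Subgroup.subset_closure (Or.inr ⟨t, rfl⟩)
  exact mul_mem (mul_mem (h1 _) (h2 _)) (h1 _)

lemma mem_closure_EF (hp : p.Prime) (hk : k ≠ 0)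
    (M : Matrix.SpecialLinearGroup (Fin 2) (ZMod (p ^ k))) :
    M ∈ Subgroup.closure (EFset (ZMod (p ^ k))) := by
  haveI : Fact p.Prime := ⟨hp⟩
  set π := ZMod.castHom (dvd_pow_self p hk) (ZMod p) with hπ
  by_cases hc : IsUnit ((M : Matrix (Fin 2) (Fin 2) (ZMod (p ^ k))) 1 0)
  · exact mem_closure_of_unit M hc
  · -- then the (0,0) entry is a unit, and F 1 * M has unit (1,0) entry
    rw [isUnit_zmod_iff hp hk, not_not] at hc
    have hdet := det_coe M
    have hdetp : π ((M : Matrix (Fin 2) (Fin 2) (ZMod (p^k))) 0 0) *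
        π ((M : Matrix (Fin 2) (Fin 2) (ZMod (p^k))) 1 1) -
        π ((M : Matrix (Fin 2) (Fin 2) (ZMod (p^k))) 0 1) *
        π ((M : Matrix (Fin 2) (Fin 2) (ZMod (p^k))) 1 0) = 1 := by
      rw [← _root_.map_mul π, ← _root_.map_mul π, ← map_sub, hdet, _root_.map_one π]
    have ha : π ((M : Matrix (Fin 2) (Fin 2) (ZMod (p^k))) 0 0) ≠ 0 := by
      intro h0
      rw [h0, hc] at hdetp
      simp at hdetp
    have hFM : IsUnit (((F 1 * M : Matrix.SpecialLinearGroup (Fin 2) (ZMod (p^k))) :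
        Matrix (Fin 2) (Fin 2) (ZMod (p^k))) 1 0) := by
      rw [isUnit_zmod_iff hp hk]
      have : ((F 1 * M : Matrix.SpecialLinearGroup (Fin 2) (ZMod (p^k))) :
          Matrix (Fin 2) (Fin 2) (ZMod (p^k))) 1 0
          = (M : Matrix (Fin 2) (Fin 2) (ZMod (p^k))) 0 0
            + (M : Matrix (Fin 2) (Fin 2) (ZMod (p^k))) 1 0 := by
        rw [Matrix.SpecialLinearGroup.coe_mul, F_coe]
        simp [Matrix.mul_apply, Fin.sum_univ_two]
      rw [this, map_add, hc, add_zero]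
      exact ha
    have hmem := mem_closure_of_unit _ hFM
    have hF : F (1 : ZMod (p^k)) ∈ Subgroup.closure (EFset (ZMod (p^k))) :=
      Subgroup.subset_closure (Or.inr ⟨1, rfl⟩)
    have : M = (F (1:ZMod (p^k)))⁻¹ * (F 1 * M) := by group
    rw [this]
    exact mul_mem (inv_mem hF) hmem

lemma E_mul_coe (j : R) (C : Matrix.SpecialLinearGroup (Fin 2) R) :
    ((E j * C : Matrix.SpecialLinearGroup (Fin 2) R) : Matrix (Fin 2) (Fin 2) R) 0 0
      = (C : Matrix (Fin 2) (Fin 2) R) 0 0 + j * (C : Matrix (Fin 2) (Fin 2) R) 1 0 ∧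
    ((E j * C : Matrix.SpecialLinearGroup (Fin 2) R) : Matrix (Fin 2) (Fin 2) R) 1 0
      = (C : Matrix (Fin 2) (Fin 2) R) 1 0 := by
  constructor <;>
  · rw [Matrix.SpecialLinearGroup.coe_mul, E_coe]
    simp [Matrix.mul_apply, Fin.sum_univ_two]

/-- Lemma B: two families of conjugated unipotents with mod-p independent directions
generate SL(2, Z/p^k). -/
lemma local_gen (hp : p.Prime) (hk : k ≠ 0)
    (H : Subgroup (Matrix.SpecialLinearGroup (Fin 2) (ZMod (p ^ k))))
    (B₁ B₂ : Matrix.SpecialLinearGroup (Fin 2) (ZMod (p ^ k)))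
    (hc : IsUnit (((B₁⁻¹ * B₂ : Matrix.SpecialLinearGroup (Fin 2) (ZMod (p ^ k))) :
        Matrix (Fin 2) (Fin 2) (ZMod (p ^ k))) 1 0))
    (h1 : ∀ t, B₁ * E t * B₁⁻¹ ∈ H) (h2 : ∀ t, B₂ * E t * B₂⁻¹ ∈ H) :
    H = ⊤ := by
  set C : Matrix.SpecialLinearGroup (Fin 2) (ZMod (p ^ k)) := B₁⁻¹ * B₂ with hC
  set a := ((C : Matrix.SpecialLinearGroup (Fin 2) (ZMod (p ^ k))) :
      Matrix (Fin 2) (Fin 2) (ZMod (p ^ k))) 0 0 with ha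
  set c := ((C : Matrix.SpecialLinearGroup (Fin 2) (ZMod (p ^ k))) :
      Matrix (Fin 2) (Fin 2) (ZMod (p ^ k))) 1 0 with hcdef
  obtain ⟨v, hv⟩ := hc.exists_right_inv
  -- the conjugator j making the (0,0)-entry vanish
  set j : ZMod (p ^ k) := -(a * v) with hj
  have h00 : ((E j * C : Matrix.SpecialLinearGroup (Fin 2) (ZMod (p ^ k))) :
      Matrix (Fin 2) (Fin 2) (ZMod (p ^ k))) 0 0 = 0 := by
    rw [(E_mul_coe j C).1]
    linear_combination (-a) * hv
  have h10 : ((E j * C : Matrix.SpecialLinearGroup (Fin 2) (ZMod (p ^ k))) :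
      Matrix (Fin 2) (Fin 2) (ZMod (p ^ k))) 1 0 = c := (E_mul_coe j C).2
  -- every lower unipotent conjugated by B₁ is in H
  have hF : ∀ s, B₁ * F s * B₁⁻¹ ∈ H := by
    intro s
    have hmem : (B₁ * E j * B₁⁻¹) * (B₂ * E (-(s * v ^ 2)) * B₂⁻¹) * (B₁ * E j * B₁⁻¹)⁻¹ ∈ H :=
      mul_mem (mul_mem (h1 j) (h2 _)) (inv_mem (h1 j))
    have hconj : (E j * C) * E (-(s * v ^ 2)) * (E j * C)⁻¹ = F s := by
      rw [conj_E_of_zero _ h00, h10]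
      congr 1
      linear_combination (s * v * c + s) * hv
    have heq : (B₁ * E j * B₁⁻¹) * (B₂ * E (-(s * v ^ 2)) * B₂⁻¹) * (B₁ * E j * B₁⁻¹)⁻¹
        = B₁ * ((E j * C) * E (-(s * v ^ 2)) * (E j * C)⁻¹) * B₁⁻¹ := by
      rw [hC]; group
    rw [heq, hconj] at hmem
    exact hmem
  -- conclude
  rw [eq_top_iff]
  intro M _
  have hMc : B₁⁻¹ * M * B₁ ∈ Subgroup.closure (EFset (ZMod (p ^ k))) :=
    mem_closure_EF hp hk _
  have main : ∀ N : Matrix.SpecialLinearGroup (Fin 2) (ZMod (p ^ k)),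
      N ∈ Subgroup.closure (EFset (ZMod (p ^ k))) → B₁ * N * B₁⁻¹ ∈ H := by
    intro N hN
    induction hN using Subgroup.closure_induction with
    | mem x hx =>
      rcases hx with ⟨t, rfl⟩ | ⟨t, rfl⟩
      · exact h1 t
      · exact hF t
    | one => simpa using one_mem H
    | mul x y hx hy px py =>
      have : B₁ * (x * y) * B₁⁻¹ = (B₁ * x * B₁⁻¹) * (B₁ * y * B₁⁻¹) := by group
      rw [this]; exact mul_mem px py
    | inv x hx px =>
      have : B₁ * x⁻¹ * B₁⁻¹ = (B₁ * x * B₁⁻¹)⁻¹ := by group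
      rw [this]; exact inv_mem px
  have := main _ hMc
  have hMeq : B₁ * (B₁⁻¹ * M * B₁) * B₁⁻¹ = M := by group
  rwa [hMeq] at this

end Local

section Glue

lemma E_mul (s t : R) : E s * E t = E (s + t) := by
  apply Subtype.ext
  rw [Matrix.SpecialLinearGroup.coe_mul]
  simp [E, Matrix.mul_fin_two, add_comm]

@[simp] lemma E_zero : E (0 : R) = 1 := by
  apply Subtype.ext
  simp [E, Matrix.one_fin_two]

lemma E_pow (t : R) (m : ℕ) : (E t) ^ m = E (m * t) := by
  induction m with
  | zero => simp
  | succ m ih => rw [pow_succ, ih, E_mul]; congr 1; push_cast; ring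

variable {S : Type*} [CommRing S]

lemma E_map (f : R →+* S) (t : R) :
    Matrix.SpecialLinearGroup.map f (E t) = E (f t) := by
  apply Subtype.ext
  ext i j
  fin_cases i <;> fin_cases j <;>
    simp [Matrix.SpecialLinearGroup.map_apply_coe, RingHom.mapMatrix_apply]

lemma map_map (f : R →+* S) {T : Type*} [CommRing T] (g : S →+* T)
    (M : Matrix.SpecialLinearGroup (Fin 2) R) :
    Matrix.SpecialLinearGroup.map g (Matrix.SpecialLinearGroup.map f M)
      = Matrix.SpecialLinearGroup.map (g.comp f) M := by
  apply Subtype.ext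
  ext i j
  simp [Matrix.SpecialLinearGroup.map_apply_coe, RingHom.mapMatrix_apply]

lemma map_entry (f : R →+* S) (M : Matrix.SpecialLinearGroup (Fin 2) R) (i j : Fin 2) :
    ((Matrix.SpecialLinearGroup.map f M : Matrix.SpecialLinearGroup (Fin 2) S) :
      Matrix (Fin 2) (Fin 2) S) i j = f ((M : Matrix (Fin 2) (Fin 2) R) i j) := rfl

lemma map_int_comp {n m : ℕ} (hm : m ∣ n) (γ : Matrix.SpecialLinearGroup (Fin 2) ℤ) :
    Matrix.SpecialLinearGroup.map (ZMod.castHom hm (ZMod m))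
      (Matrix.SpecialLinearGroup.map (Int.castRingHom (ZMod n)) γ)
      = Matrix.SpecialLinearGroup.map (Int.castRingHom (ZMod m)) γ := by
  rw [map_map]
  have : (ZMod.castHom hm (ZMod m)).comp (Int.castRingHom (ZMod n))
      = Int.castRingHom (ZMod m) := RingHom.ext_int _ _
  rw [this]

lemma zmod_crt_inj {n a b : ℕ} [NeZero n] (ha : a ∣ n) (hb : b ∣ n) (hn : n = a * b)
    (hco : Nat.Coprime a b) {x y : ZMod n}
    (h1 : ZMod.castHom ha (ZMod a) x = ZMod.castHom ha (ZMod a) y)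
    (h2 : ZMod.castHom hb (ZMod b) x = ZMod.castHom hb (ZMod b) y) : x = y := by
  have key : ∀ {m : ℕ} (hm : m ∣ n), ZMod.castHom hm (ZMod m) (x - y) = 0 → m ∣ (x - y).val := by
    intro m hm h0
    have h0' : (((x - y).val : ℕ) : ZMod m) = 0 := by
      rw [← h0]
      conv_rhs => rw [← ZMod.natCast_zmod_val (x - y)]
      rw [ZMod.castHom_apply, ZMod.cast_natCast hm]
    rwa [ZMod.natCast_eq_zero_iff] at h0'
  have hda : a ∣ (x - y).val := key ha (by rw [map_sub, h1, sub_self])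
  have hdb : b ∣ (x - y).val := key hb (by rw [map_sub, h2, sub_self])
  set w := (x - y).val with hw
  have hdn : n ∣ w := by rw [hn]; exact Nat.Coprime.mul_dvd_of_dvd_of_dvd hco hda hdb
  have hv0 : w = 0 := Nat.eq_zero_of_dvd_of_lt hdn (hw ▸ ZMod.val_lt _)
  have : x - y = 0 := (ZMod.val_eq_zero _).mp hv0
  exact sub_eq_zero.mp this


lemma SL_crt_inj {n a b : ℕ} [NeZero n] (ha : a ∣ n) (hb : b ∣ n) (hn : n = a * b)
    (hco : Nat.Coprime a b) {x y : Matrix.SpecialLinearGroup (Fin 2) (ZMod n)}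
    (h1 : Matrix.SpecialLinearGroup.map (ZMod.castHom ha (ZMod a)) x
        = Matrix.SpecialLinearGroup.map (ZMod.castHom ha (ZMod a)) y)
    (h2 : Matrix.SpecialLinearGroup.map (ZMod.castHom hb (ZMod b)) x
        = Matrix.SpecialLinearGroup.map (ZMod.castHom hb (ZMod b)) y) : x = y := by
  apply Subtype.ext
  ext i j
  apply zmod_crt_inj ha hb hn hco
  · have := congrArg (fun M => ((M : Matrix.SpecialLinearGroup (Fin 2) (ZMod a)) :
      Matrix (Fin 2) (Fin 2) (ZMod a)) i j) h1
    simpa [map_entry] using this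
  · have := congrArg (fun M => ((M : Matrix.SpecialLinearGroup (Fin 2) (ZMod b)) :
      Matrix (Fin 2) (Fin 2) (ZMod b)) i j) h2
    simpa [map_entry] using this

lemma conj_pow_mem {G : Type*} [Group G] (Γ : Subgroup G) (A X : G) (m s : ℕ)
    (hmem : A * X ^ m * A⁻¹ ∈ Γ) : A * X ^ (m * s) * A⁻¹ ∈ Γ := by
  have h := map_pow (MulAut.conj A) (X ^ m) s
  simp only [MulAut.conj_apply] at h
  rw [pow_mul, h]
  exact pow_mem hmem s

end Glue

section Indep

lemma mulVec_e1 (A : Matrix (Fin 2) (Fin 2) ℤ) (i : Fin 2) :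
    A.mulVec ![1, 0] i = A i 0 := by
  simp [Matrix.mulVec, dotProduct, Fin.sum_univ_two]

lemma unit_entry_of_indep {p k : ℕ} (hp : p.Prime) (hk : k ≠ 0)
    (A₁ A₂ : Matrix.SpecialLinearGroup (Fin 2) ℤ)
    (hA : ∀ j : ℕ,
      (fun i : Fin 2 =>
        ((((A₁ : Matrix (Fin 2) (Fin 2) ℤ).mulVec ![1, 0]) i : ℤ) : ZMod p)) ≠
      (fun i : Fin 2 =>
        (j : ZMod p) * ((((A₂ : Matrix (Fin 2) (Fin 2) ℤ).mulVec ![1, 0]) i : ℤ) : ZMod p))) :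
    IsUnit ((((Matrix.SpecialLinearGroup.map (Int.castRingHom (ZMod (p ^ k))) A₁)⁻¹ *
        Matrix.SpecialLinearGroup.map (Int.castRingHom (ZMod (p ^ k))) A₂ :
        Matrix.SpecialLinearGroup (Fin 2) (ZMod (p ^ k))) :
        Matrix (Fin 2) (Fin 2) (ZMod (p ^ k))) 1 0) := by
  haveI : Fact p.Prime := ⟨hp⟩
  set a₁ := (A₁ : Matrix (Fin 2) (Fin 2) ℤ) 0 0 with ha₁
  set c₁ := (A₁ : Matrix (Fin 2) (Fin 2) ℤ) 1 0 with hc₁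
  set a₂ := (A₂ : Matrix (Fin 2) (Fin 2) ℤ) 0 0 with ha₂
  set c₂ := (A₂ : Matrix (Fin 2) (Fin 2) ℤ) 1 0 with hc₂
  -- the integral entry
  have hent : ((A₁⁻¹ * A₂ : Matrix.SpecialLinearGroup (Fin 2) ℤ) :
      Matrix (Fin 2) (Fin 2) ℤ) 1 0 = a₁ * c₂ - c₁ * a₂ := by
    rw [Matrix.SpecialLinearGroup.coe_mul, Matrix.SpecialLinearGroup.coe_inv,
      Matrix.adjugate_fin_two]
    simp [Matrix.mul_apply, Fin.sum_univ_two]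
    ring
  have hmapmul : (Matrix.SpecialLinearGroup.map (Int.castRingHom (ZMod (p ^ k))) A₁)⁻¹ *
      Matrix.SpecialLinearGroup.map (Int.castRingHom (ZMod (p ^ k))) A₂
      = Matrix.SpecialLinearGroup.map (Int.castRingHom (ZMod (p ^ k))) (A₁⁻¹ * A₂) := by
    rw [_root_.map_mul, map_inv]
  rw [hmapmul, isUnit_zmod_iff hp hk]
  have hcast : (ZMod.castHom (dvd_pow_self p hk) (ZMod p))
      (((Matrix.SpecialLinearGroup.map (Int.castRingHom (ZMod (p ^ k))) (A₁⁻¹ * A₂) :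
        Matrix.SpecialLinearGroup (Fin 2) (ZMod (p ^ k))) :
        Matrix (Fin 2) (Fin 2) (ZMod (p ^ k))) 1 0)
      = ((a₁ * c₂ - c₁ * a₂ : ℤ) : ZMod p) := by
    rw [← map_entry]
    rw [map_int_comp (dvd_pow_self p hk)]
    rw [map_entry, hent]
    rfl
  rw [hcast]
  -- now a field computation in ZMod p
  intro hdep
  push_cast at hdep
  -- A₂'s first column is nonzero mod p
  have hdet2 : ((a₂ : ZMod p)) * (((A₂ : Matrix (Fin 2) (Fin 2) ℤ) 1 1 : ℤ) : ZMod p)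
      - (((A₂ : Matrix (Fin 2) (Fin 2) ℤ) 0 1 : ℤ) : ZMod p) * (c₂ : ZMod p) = 1 := by
    have := det_coe A₂
    have := congrArg (fun z : ℤ => (z : ZMod p)) this
    push_cast at this
    simpa using this
  have hw : ¬((a₂ : ZMod p) = 0 ∧ (c₂ : ZMod p) = 0) := by
    rintro ⟨h0, h0'⟩
    rw [h0, h0'] at hdet2
    simp at hdet2
  -- find the scalar
  obtain ⟨cc, hcc1, hcc2⟩ : ∃ cc : ZMod p,
      (a₁ : ZMod p) = cc * (a₂ : ZMod p) ∧ (c₁ : ZMod p) = cc * (c₂ : ZMod p) := by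
    by_cases hc2 : (c₂ : ZMod p) = 0
    · have ha2 : (a₂ : ZMod p) ≠ 0 := fun h => hw ⟨h, hc2⟩
      refine ⟨(a₁ : ZMod p) * ((a₂ : ZMod p))⁻¹, ?_, ?_⟩
      · field_simp
      · rw [hc2, mul_zero]
        -- c₁ ≡ 0 : from hdep : a₁ c₂ - c₁ a₂ = 0 with c₂ = 0
        have : (c₁ : ZMod p) * (a₂ : ZMod p) = 0 := by
          rw [hc2] at hdep; linear_combination -hdep
        rcases mul_eq_zero.mp this with h | h
        · exact h
        · exact absurd h ha2
    · refine ⟨(c₁ : ZMod p) * ((c₂ : ZMod p))⁻¹, ?_, ?_⟩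
      · field_simp
        linear_combination hdep
      · field_simp
  -- contradiction with hA
  apply hA cc.val
  funext i
  have hval : ((cc.val : ℕ) : ZMod p) = cc := ZMod.natCast_zmod_val cc
  fin_cases i <;> simp [mulVec_e1, hval]
  · rw [← ha₁, ← ha₂]; exact hcc1
  · rw [← hc₁, ← hc₂]; exact hcc2

end Indep

end TNC


namespace TNC

lemma Tmat_pow (s : ℕ) : Tmat ^ s = E ((s : ℤ)) := by
  have h : Tmat = E (1 : ℤ) := Subtype.ext rfl
  rw [h, E_pow, mul_one]

end TNC


open TNC in
/-- **Theorem (criterion for totally non congruence groups).**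
If for every prime `p` there are `A₁, A₂ ∈ SL(2,ℤ)` such that
(A) for all `j ∈ ℕ` the reduction mod `p` of `A₁e₁` differs from `j` times the
reduction mod `p` of `A₂e₁`, and
(B) there are `m₁, m₂` not divisible by `p` with `AᵢT^{mᵢ}Aᵢ⁻¹ ∈ Γ`,
then `Γ` surjects onto `SL(2,ℤ/nℤ)` for every `n ≥ 1`. -/
theorem totally_noncongruence_criterion
    (Γ : Subgroup (Matrix.SpecialLinearGroup (Fin 2) ℤ)) (hΓ : Γ.FiniteIndex)
    (h : ∀ p : ℕ, p.Prime →
      ∃ A₁ A₂ : Matrix.SpecialLinearGroup (Fin 2) ℤ,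
        (∀ j : ℕ,
          (fun i : Fin 2 =>
            ((((A₁ : Matrix (Fin 2) (Fin 2) ℤ).mulVec ![1, 0]) i : ℤ) : ZMod p)) ≠
          (fun i : Fin 2 =>
            (j : ZMod p) * ((((A₂ : Matrix (Fin 2) (Fin 2) ℤ).mulVec ![1, 0]) i : ℤ) : ZMod p))) ∧
        ∃ m₁ m₂ : ℕ, ¬ (p ∣ m₁) ∧ ¬ (p ∣ m₂) ∧
          A₁ * Tmat ^ m₁ * A₁⁻¹ ∈ Γ ∧ A₂ * Tmat ^ m₂ * A₂⁻¹ ∈ Γ) :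
    ∀ n : ℕ, 1 ≤ n →
      Subgroup.map (Matrix.SpecialLinearGroup.map (Int.castRingHom (ZMod n))) Γ = ⊤ := by
  intro n
  induction n using Nat.strong_induction_on with
  | _ n IH =>
  intro hn
  rcases eq_or_lt_of_le hn with h1 | h2
  · -- n = 1
    subst h1
    haveI : Subsingleton (Matrix.SpecialLinearGroup (Fin 2) (ZMod 1)) :=
      ⟨fun u w => Subtype.ext (Subsingleton.elim _ _)⟩
    rw [Subgroup.eq_top_iff']
    intro x
    rw [Subsingleton.elim x 1]
    exact one_mem _
  · -- 1 < n
    haveI : NeZero n := ⟨by omega⟩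
    have hp : n.minFac.Prime := Nat.minFac_prime (by omega)
    haveI : Fact n.minFac.Prime := ⟨hp⟩
    set p := n.minFac
    set k := n.factorization p with hkdef
    have hk : k ≠ 0 := (hp.factorization_pos_of_dvd (by omega) (Nat.minFac_dvd n)).ne'
    have hdvd : p ^ k ∣ n := Nat.ordProj_dvd n p
    set q := n / p ^ k with hqdef
    have hqd : q ∣ n := Nat.div_dvd_of_dvd hdvd
    have hco : Nat.Coprime p q := Nat.coprime_ordCompl hp (by omega)
    have hcopk : Nat.Coprime (p ^ k) q := Nat.Coprime.pow_left k hco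
    have hnpq : n = p ^ k * q := (Nat.ordProj_mul_ordCompl_eq_self n p).symm
    have hppos : 1 < p ^ k := Nat.one_lt_pow hk hp.one_lt
    have hqlt : q < n := Nat.div_lt_self (by omega) hppos
    have hq1 : 1 ≤ q := by
      rcases Nat.eq_zero_or_pos q with h0 | h0
      · rw [h0, Nat.mul_zero] at hnpq; omega
      · exact h0
    -- data from the hypothesis at p
    obtain ⟨A₁, A₂, hA, m₁, m₂, hm₁, hm₂, hT₁, hT₂⟩ := h p hp
    -- generators land in the image ∩ kernel subgroup
    have gen : ∀ (A : Matrix.SpecialLinearGroup (Fin 2) ℤ) (m : ℕ), ¬ (p ∣ m) →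
        A * Tmat ^ m * A⁻¹ ∈ Γ →
        ∀ t : ZMod (p ^ k),
          (Matrix.SpecialLinearGroup.map (Int.castRingHom (ZMod (p ^ k))) A) * E t *
            (Matrix.SpecialLinearGroup.map (Int.castRingHom (ZMod (p ^ k))) A)⁻¹ ∈
          Subgroup.map (Matrix.SpecialLinearGroup.map (ZMod.castHom hdvd (ZMod (p ^ k))))
            (Subgroup.map (Matrix.SpecialLinearGroup.map (Int.castRingHom (ZMod n))) Γ ⊓
              MonoidHom.ker (Matrix.SpecialLinearGroup.map (ZMod.castHom hqd (ZMod q)))) := by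
      intro A m hm hTmem t
      have hu : IsUnit ((m * q : ℕ) : ZMod (p ^ k)) := by
        rw [ZMod.isUnit_iff_coprime]
        apply Nat.Coprime.pow_right
        rw [Nat.coprime_mul_iff_left]
        exact ⟨Nat.coprime_comm.mp (hp.coprime_iff_not_dvd.mpr hm), hco.symm⟩
      obtain ⟨w, hw⟩ := hu.exists_right_inv
      have hmqr : ((m * q * (w * t).val : ℕ) : ZMod (p ^ k)) = t := by
        have hsplit : ((m * q * (w * t).val : ℕ) : ZMod (p ^ k))
            = ((m * q : ℕ) : ZMod (p ^ k)) * (((w * t).val : ℕ) : ZMod (p ^ k)) := by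
          push_cast; ring
        rw [hsplit, ZMod.natCast_zmod_val, ← mul_assoc, hw, one_mul]
      have hTpow : A * Tmat ^ (m * (q * (w * t).val)) * A⁻¹ ∈ Γ :=
        conj_pow_mem Γ A Tmat m (q * (w * t).val) hTmem
      rw [show m * (q * (w * t).val) = m * q * (w * t).val by ring] at hTpow
      refine Subgroup.mem_map.mpr
        ⟨Matrix.SpecialLinearGroup.map (Int.castRingHom (ZMod n))
            (A * Tmat ^ (m * q * (w * t).val) * A⁻¹),
          Subgroup.mem_inf.mpr ⟨Subgroup.mem_map.mpr ⟨_, hTpow, rfl⟩, ?_⟩, ?_⟩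
      · -- kernel of the mod-q reduction
        rw [MonoidHom.mem_ker, map_int_comp hqd, Tmat_pow, _root_.map_mul, _root_.map_mul,
          map_inv, E_map]
        have h0 : ((Int.castRingHom (ZMod q)) ((m * q * (w * t).val : ℕ) : ℤ)) = 0 := by
          have hdd : (q : ℕ) ∣ m * q * (w * t).val := ⟨m * (w * t).val, by ring⟩
          show (((m * q * (w * t).val : ℕ) : ℤ) : ZMod q) = 0
          rw [Int.cast_natCast, ZMod.natCast_eq_zero_iff]
          exact hdd
        rw [h0, E_zero]
        group
      · -- image under the mod-p^k reduction
        rw [map_int_comp hdvd, Tmat_pow, _root_.map_mul, _root_.map_mul, map_inv, E_map]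
        have hcast : ((Int.castRingHom (ZMod (p ^ k))) ((m * q * (w * t).val : ℕ) : ℤ)) = t := by
          show (((m * q * (w * t).val : ℕ) : ℤ) : ZMod (p ^ k)) = t
          rw [Int.cast_natCast]
          exact hmqr
        rw [hcast]
    -- the local subgroup is everything
    have hlocal : Subgroup.map (Matrix.SpecialLinearGroup.map (ZMod.castHom hdvd (ZMod (p ^ k))))
        (Subgroup.map (Matrix.SpecialLinearGroup.map (Int.castRingHom (ZMod n))) Γ ⊓
          MonoidHom.ker (Matrix.SpecialLinearGroup.map (ZMod.castHom hqd (ZMod q)))) = ⊤ := by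
      apply local_gen hp hk _
        (Matrix.SpecialLinearGroup.map (Int.castRingHom (ZMod (p ^ k))) A₁)
        (Matrix.SpecialLinearGroup.map (Int.castRingHom (ZMod (p ^ k))) A₂)
      · exact unit_entry_of_indep hp hk A₁ A₂ hA
      · exact gen A₁ m₁ hm₁ hT₁
      · exact gen A₂ m₂ hm₂ hT₂
    -- surjectivity mod q from the induction hypothesis
    have hq_top := IH q hqlt hq1
    rw [Subgroup.eq_top_iff']
    intro M
    have hMq : Matrix.SpecialLinearGroup.map (ZMod.castHom hqd (ZMod q)) M ∈
        Subgroup.map (Matrix.SpecialLinearGroup.map (Int.castRingHom (ZMod q))) Γ := by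
      rw [hq_top]; trivial
    obtain ⟨γ, hγΓ, hγ⟩ := hMq
    have hgmem : Matrix.SpecialLinearGroup.map (Int.castRingHom (ZMod n)) γ ∈
        Subgroup.map (Matrix.SpecialLinearGroup.map (Int.castRingHom (ZMod n))) Γ :=
      Subgroup.mem_map.mpr ⟨γ, hγΓ, rfl⟩
    have hπqg : Matrix.SpecialLinearGroup.map (ZMod.castHom hqd (ZMod q))
        (Matrix.SpecialLinearGroup.map (Int.castRingHom (ZMod n)) γ)
        = Matrix.SpecialLinearGroup.map (ZMod.castHom hqd (ZMod q)) M := by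
      rw [map_int_comp hqd, hγ]
    have hNker : Matrix.SpecialLinearGroup.map (ZMod.castHom hqd (ZMod q))
        (M * (Matrix.SpecialLinearGroup.map (Int.castRingHom (ZMod n)) γ)⁻¹) = 1 := by
      rw [_root_.map_mul, map_inv, hπqg, mul_inv_cancel]
    have hNmem : M * (Matrix.SpecialLinearGroup.map (Int.castRingHom (ZMod n)) γ)⁻¹ ∈
        Subgroup.map (Matrix.SpecialLinearGroup.map (Int.castRingHom (ZMod n))) Γ := by
      have hπpN : Matrix.SpecialLinearGroup.map (ZMod.castHom hdvd (ZMod (p ^ k)))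
          (M * (Matrix.SpecialLinearGroup.map (Int.castRingHom (ZMod n)) γ)⁻¹) ∈
          Subgroup.map (Matrix.SpecialLinearGroup.map (ZMod.castHom hdvd (ZMod (p ^ k))))
            (Subgroup.map (Matrix.SpecialLinearGroup.map (Int.castRingHom (ZMod n))) Γ ⊓
              MonoidHom.ker (Matrix.SpecialLinearGroup.map (ZMod.castHom hqd (ZMod q)))) := by
        rw [hlocal]; trivial
      obtain ⟨N', hN'both, hN'eq⟩ := Subgroup.mem_map.mp hπpN
      obtain ⟨hN'mem, hN'ker⟩ := Subgroup.mem_inf.mp hN'both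
      have hNN : N' = M * (Matrix.SpecialLinearGroup.map (Int.castRingHom (ZMod n)) γ)⁻¹ := by
        apply SL_crt_inj hdvd hqd hnpq hcopk
        · exact hN'eq
        · rw [MonoidHom.mem_ker.mp hN'ker, hNker]
      rwa [hNN] at hN'mem
    have hfin : M = M * (Matrix.SpecialLinearGroup.map (Int.castRingHom (ZMod n)) γ)⁻¹ *
        (Matrix.SpecialLinearGroup.map (Int.castRingHom (ZMod n)) γ) := by group
    rw [hfin]
    exact mul_mem hNmem hgmem
end

section
/- Let Γ be a finite-index subgroup of SL(2,ℤ). Suppose there exist matrices C₁, C₂ ∈ SL(2,ℤ) and natural numbers m₁, m₁', m₂, m₂' such that C₁T^{m₁}C₁⁻¹ ∈ Γ, C₁T'^{m₁'}C₁⁻¹ ∈ Γ, C₂T^{m₂}C₂⁻¹ ∈ Γ, C₂T'^{m₂'}C₂⁻¹ ∈ Γ, and gcd(m₁·m₁', m₂·m₂') = 1. Then for every n ≥ 1 the canonical projection SL(2,ℤ) → SL(2,ℤ/nℤ) maps Γ onto all of SL(2,ℤ/nℤ), i.e. Γ is a totally non congruence group. -/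
open Matrix MatrixGroups

variable {R : Type*} [CommRing R]

/-- elementary matrix [[1,x],[0,1]] -/
def E12 (x : R) : SL(2, R) :=
  ⟨!![1, x; 0, 1], by norm_num [Matrix.det_fin_two_of]⟩

def E21 (x : R) : SL(2, R) :=
  ⟨!![1, 0; x, 1], by norm_num [Matrix.det_fin_two_of]⟩

def Sm : SL(2, R) :=
  ⟨!![0, -1; 1, 0], by norm_num [Matrix.det_fin_two_of]⟩

lemma E12_mul (x y : R) : E12 x * E12 y = E12 (x + y) := by
  apply Subtype.ext
  simp only [Matrix.SpecialLinearGroup.coe_mul]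
  simp [E12, Matrix.mul_fin_two]
  ring_nf

lemma E21_mul (x y : R) : E21 x * E21 y = E21 (x + y) := by
  apply Subtype.ext
  simp only [Matrix.SpecialLinearGroup.coe_mul]
  simp [E21, Matrix.mul_fin_two]

lemma E12_zero : (E12 (0 : R)) = 1 := by
  apply Subtype.ext
  simp [E12, Matrix.one_fin_two]

lemma E21_zero : (E21 (0 : R)) = 1 := by
  apply Subtype.ext
  simp [E21, Matrix.one_fin_two]

lemma E12_inv (x : R) : (E12 x)⁻¹ = E12 (-x) := by
  apply inv_eq_of_mul_eq_one_right
  rw [E12_mul, add_neg_cancel, E12_zero]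

lemma E21_inv (x : R) : (E21 x)⁻¹ = E21 (-x) := by
  apply inv_eq_of_mul_eq_one_right
  rw [E21_mul, add_neg_cancel, E21_zero]

lemma E12_pow (k : ℕ) : (E12 (1 : R)) ^ k = E12 (k : R) := by
  induction k with
  | zero => simp [E12_zero]
  | succ n ih => rw [pow_succ, ih, E12_mul]; push_cast; ring_nf

lemma E21_pow (k : ℕ) : (E21 (1 : R)) ^ k = E21 (k : R) := by
  induction k with
  | zero => simp [E21_zero]
  | succ n ih => rw [pow_succ, ih, E21_mul]; push_cast; ring_nf

lemma Sm_eq : (Sm : SL(2,R)) = E12 (-1) * E21 1 * E12 (-1) := by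
  apply Subtype.ext
  simp only [Matrix.SpecialLinearGroup.coe_mul]
  simp [Sm, E12, E21, Matrix.mul_fin_two]

-- entry of S * E12 x * g at (1,0)
lemma entry_lemma (x : R) (g : SL(2,R)) :
    (Sm * E12 x * g).1 1 0 = g.1 0 0 + x * g.1 1 0 := by
  simp only [Matrix.SpecialLinearGroup.coe_mul]
  simp [Sm, E12, Matrix.SpecialLinearGroup.coe_mul, Matrix.mul_apply, Fin.sum_univ_two,
    Matrix.mul_fin_two]

-- decomposition of upper triangular matrices
lemma upper_decomp (g : SL(2,R)) (hc : g.1 1 0 = 0) :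
    g = E12 (g.1 0 0) * E21 (-(g.1 1 1)) * E12 (g.1 0 0) * Sm * E12 (g.1 1 1 * g.1 0 1) := by
  have hdet : g.1 0 0 * g.1 1 1 - g.1 0 1 * g.1 1 0 = 1 := by
    rw [← Matrix.det_fin_two]; exact g.2
  rw [hc, mul_zero, sub_zero] at hdet
  apply Subtype.ext
  have : g.1 = !![g.1 0 0, g.1 0 1; g.1 1 0, g.1 1 1] := (Matrix.eta_fin_two g.1)
  rw [this]
  simp only [Matrix.SpecialLinearGroup.coe_mul]
  simp only [Matrix.SpecialLinearGroup.coe_mul, E12, E21, Sm, Matrix.mul_fin_two]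
  rw [hc]
  ext i j
  fin_cases i <;> fin_cases j <;> simp
  · linear_combination (-(g.1 0 0)) * hdet
  · linear_combination (g.1 0 0 * g.1 1 1 * g.1 0 1 - g.1 0 1 - 1) * hdet
  · linear_combination hdet
  · linear_combination (-(g.1 1 1 * g.1 0 1)) * hdet

section ZModGen

variable {m : ℕ} [NeZero m]

lemma E12_mem (x : ZMod m) : E12 x ∈ Subgroup.closure {E12 (1 : ZMod m), E21 1} := by
  have h : E12 x = (E12 (1 : ZMod m)) ^ (x.val) := by
    rw [E12_pow, ZMod.natCast_rightInverse x]
  rw [h]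
  exact pow_mem (Subgroup.subset_closure (by simp)) _

lemma E21_mem (x : ZMod m) : E21 x ∈ Subgroup.closure {E12 (1 : ZMod m), E21 1} := by
  have h : E21 x = (E21 (1 : ZMod m)) ^ (x.val) := by
    rw [E21_pow, ZMod.natCast_rightInverse x]
  rw [h]
  exact pow_mem (Subgroup.subset_closure (by simp)) _

lemma Sm_mem : (Sm : SL(2, ZMod m)) ∈ Subgroup.closure {E12 (1 : ZMod m), E21 1} := by
  rw [Sm_eq]
  exact mul_mem (mul_mem (E12_mem _) (E21_mem _)) (E12_mem _)

lemma closure_E_eq_top : Subgroup.closure {E12 (1 : ZMod m), E21 1} = ⊤ := by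
  rw [eq_top_iff]
  have H : ∀ k (g : SL(2, ZMod m)), (g.1 1 0).val = k →
      g ∈ Subgroup.closure {E12 (1 : ZMod m), E21 1} := by
    intro k
    induction k using Nat.strong_induction_on with
    | _ k ih =>
      intro g hk
      by_cases hc : g.1 1 0 = 0
      · rw [upper_decomp g hc]
        exact mul_mem (mul_mem (mul_mem (mul_mem (E12_mem _) (E21_mem _)) (E12_mem _)) Sm_mem)
          (E12_mem _)
      · set q : ℕ := (g.1 0 0).val / (g.1 1 0).val with hq
        set r : ℕ := (g.1 0 0).val % (g.1 1 0).val with hr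
        set g' := Sm * E12 (-(q : ZMod m)) * g with hg'
        have h10 : g'.1 1 0 = (r : ZMod m) := by
          rw [hg', entry_lemma]
          have hnat : (g.1 1 0).val * q + r = (g.1 0 0).val := Nat.div_add_mod _ _
          have : ((g.1 1 0).val * q + r : ℕ) = ((g.1 0 0).val : ZMod m) := by rw [hnat]
          push_cast at this
          rw [ZMod.natCast_rightInverse, ZMod.natCast_rightInverse] at this
          linear_combination -this
        have hcv : (g.1 1 0).val ≠ 0 := by
          simpa [ZMod.val_eq_zero] using hc
        have hrk : r < k := by
          rw [← hk]
          exact Nat.mod_lt _ (Nat.pos_of_ne_zero hcv)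
        have hg'val : (g'.1 1 0).val = r := by
          rw [h10]
          exact ZMod.val_cast_of_lt (lt_trans hrk (hk ▸ ZMod.val_lt _))
        have hmem' := ih r hrk g' hg'val
        have hgid : g = (E12 (-(q : ZMod m)))⁻¹ * (Sm⁻¹ * g') := by
          rw [hg']; group
        rw [hgid]
        exact mul_mem (inv_mem (E12_mem _)) (mul_mem (inv_mem Sm_mem) hmem')
  intro g _
  exact H _ g rfl

end ZModGen

lemma copr_aux (x y : ℕ) (h : ∀ p : ℕ, p.Prime → p ∣ x → ¬ p ∣ y) : Nat.Coprime x y := by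
  by_contra hxy
  have pp := Nat.minFac_prime hxy
  exact h _ pp (dvd_trans (Nat.minFac_dvd _) (Nat.gcd_dvd_left _ _))
    (dvd_trans (Nat.minFac_dvd _) (Nat.gcd_dvd_right _ _))

lemma arith (N a b : ℕ) (hN : N ≠ 0) (hab : Nat.gcd a b = 1) :
    ∃ d e : ℕ, d ≠ 0 ∧ e ≠ 0 ∧ e * d = N ∧ d ∣ a ^ N ∧ Nat.Coprime (a ^ N) e ∧
      Nat.Coprime b d ∧ Nat.Coprime e d := by
  refine ⟨Nat.gcd N (a ^ N), N / Nat.gcd N (a ^ N), ?_, ?_, ?_, ?_, ?_, ?_, ?_⟩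
  all_goals {
    set d := Nat.gcd N (a ^ N) with hd
    set e := N / d with he
    have hdN : d ∣ N := Nat.gcd_dvd_left _ _
    have hdaN : d ∣ a ^ N := Nat.gcd_dvd_right _ _
    have hd0 : d ≠ 0 := fun h => hN (Nat.eq_zero_of_gcd_eq_zero_left h)
    have hed : e * d = N := Nat.div_mul_cancel hdN
    have he0 : e ≠ 0 := by intro h; rw [h, zero_mul] at hed; exact hN hed.symm
    have key : ∀ p : ℕ, p.Prime → p ∣ e → ¬ p ∣ a := by
      intro p pp hpe hpa
      have hkN : N.factorization p < N := Nat.factorization_lt p hN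
      have hk : p ^ (N.factorization p) ∣ d :=
        Nat.dvd_gcd (Nat.ordProj_dvd N p)
          (dvd_trans (pow_dvd_pow p hkN.le) (pow_dvd_pow_of_dvd hpa N))
      have hdvd : p ^ (N.factorization p + 1) ∣ N := by
        have h2 : p * p ^ (N.factorization p) ∣ e * d := mul_dvd_mul hpe hk
        rwa [← pow_succ', hed] at h2
      have := (Nat.Prime.pow_dvd_iff_le_factorization pp hN).1 hdvd
      omega
    have keyd : ∀ p : ℕ, p.Prime → p ∣ d → p ∣ a := by
      intro p pp hpd
      exact pp.dvd_of_dvd_pow (dvd_trans hpd hdaN)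
    first
    | exact hd0
    | exact he0
    | exact hed
    | exact hdaN
    | exact copr_aux _ _ (fun p pp hpx hpy => key p pp hpy (pp.dvd_of_dvd_pow hpx))
    | exact copr_aux _ _ (fun p pp hpb hpd => by
        have hpa := keyd p pp hpd
        have : p ∣ Nat.gcd a b := Nat.dvd_gcd hpa hpb
        rw [hab] at this
        exact Nat.Prime.one_lt pp |>.ne' (Nat.eq_one_of_dvd_one this ▸ rfl))
    | exact copr_aux _ _ (fun p pp hpe hpd => key p pp hpe (keyd p pp hpd)) }

section MapLemmas

variable {S : Type*} [CommRing S]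

lemma map_E12 (f : R →+* S) (x : R) :
    Matrix.SpecialLinearGroup.map f (E12 x) = E12 (f x) := by
  apply Subtype.ext
  simp only [Matrix.SpecialLinearGroup.map_apply_coe]
  ext i j
  fin_cases i <;> fin_cases j <;>
    simp [E12, Matrix.SpecialLinearGroup.map, Matrix.map_apply]

lemma map_E21 (f : R →+* S) (x : R) :
    Matrix.SpecialLinearGroup.map f (E21 x) = E21 (f x) := by
  apply Subtype.ext
  simp only [Matrix.SpecialLinearGroup.map_apply_coe]
  ext i j
  fin_cases i <;> fin_cases j <;>
    simp [E21, Matrix.SpecialLinearGroup.map, Matrix.map_apply]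

end MapLemmas

lemma my_conj_pow {G : Type*} [Group G] (g x : G) (k : ℕ) :
    (g * x * g⁻¹) ^ k = g * x ^ k * g⁻¹ := by
  rw [← MulAut.conj_apply, ← map_pow, MulAut.conj_apply]

lemma conj_mem_of_closure {G : Type*} [Group G] (H : Subgroup G) (g : G) (s : Set G)
    (hs : ∀ x ∈ s, g * x * g⁻¹ ∈ H) : ∀ z ∈ Subgroup.closure s, g * z * g⁻¹ ∈ H := by
  intro z hz
  have hle : Subgroup.closure s ≤ H.comap ((MulAut.conj g).toMonoidHom) := by
    rw [Subgroup.closure_le]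
    intro x hx
    simpa using hs x hx
  simpa using hle hz

lemma closure_pow_eq_top (m : ℕ) [NeZero m] (c : ℕ) (hc : Nat.Coprime c m) :
    Subgroup.closure {(E12 (1 : ZMod m)) ^ c, (E21 (1 : ZMod m)) ^ c} = ⊤ := by
  have hu : ∃ t : ℕ, ((c * t : ℕ) : ZMod m) = 1 := by
    refine ⟨((ZMod.unitOfCoprime c hc)⁻¹ : (ZMod m)ˣ).1.val, ?_⟩
    push_cast
    rw [ZMod.natCast_rightInverse]
    have : ((ZMod.unitOfCoprime c hc : (ZMod m)ˣ) : ZMod m) = (c : ZMod m) :=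
      ZMod.coe_unitOfCoprime c hc
    rw [← this, ← Units.val_mul, mul_inv_cancel, Units.val_one]
  obtain ⟨t, ht⟩ := hu
  rw [eq_top_iff, ← closure_E_eq_top (m := m), Subgroup.closure_le]
  intro x hx
  rcases hx with h | h
  · have hmem : (E12 (1 : ZMod m)) ^ c ∈
        Subgroup.closure {(E12 (1 : ZMod m)) ^ c, (E21 (1 : ZMod m)) ^ c} :=
      Subgroup.subset_closure (Set.mem_insert _ _)
    have he : E12 (1 : ZMod m) = ((E12 (1 : ZMod m)) ^ c) ^ t := by
      rw [← pow_mul, E12_pow, ht]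
    rw [h]
    simpa [← he] using pow_mem hmem t
  · rw [Set.mem_singleton_iff] at h
    have hmem : (E21 (1 : ZMod m)) ^ c ∈
        Subgroup.closure {(E12 (1 : ZMod m)) ^ c, (E21 (1 : ZMod m)) ^ c} :=
      Subgroup.subset_closure (Set.mem_insert_of_mem _ rfl)
    have he : E21 (1 : ZMod m) = ((E21 (1 : ZMod m)) ^ c) ^ t := by
      rw [← pow_mul, E21_pow, ht]
    rw [h]
    simpa [← he] using pow_mem hmem t

lemma main_lemma (N : ℕ) [NeZero N] (H : Subgroup SL(2, ZMod N)) (g₁ g₂ : SL(2, ZMod N))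
    (a b : ℕ) (hab : Nat.gcd a b = 1)
    (h1 : g₁ * (E12 (1 : ZMod N)) ^ a * g₁⁻¹ ∈ H)
    (h1' : g₁ * (E21 (1 : ZMod N)) ^ a * g₁⁻¹ ∈ H)
    (h2 : g₂ * (E12 (1 : ZMod N)) ^ b * g₂⁻¹ ∈ H)
    (h2' : g₂ * (E21 (1 : ZMod N)) ^ b * g₂⁻¹ ∈ H) : H = ⊤ := by
  obtain ⟨d, e, hd0, he0, hed, hdaN, hcop_ae, hcop_bd, hcop_ed⟩ := arith N a b (NeZero.ne N) hab
  haveI : NeZero d := ⟨hd0⟩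
  haveI : NeZero e := ⟨he0⟩
  have hdN : d ∣ N := ⟨e, by rw [← hed, mul_comm]⟩
  have heN : e ∣ N := ⟨d, hed.symm⟩
  set fd : ZMod N →+* ZMod d := ZMod.castHom hdN (ZMod d) with hfd
  set fe : ZMod N →+* ZMod e := ZMod.castHom heN (ZMod e) with hfe
  set φd := Matrix.SpecialLinearGroup.map (n := Fin 2) fd with hφd
  set φe := Matrix.SpecialLinearGroup.map (n := Fin 2) fe with hφe
  have hN1 : N - 1 + 1 = N := Nat.succ_pred_eq_of_pos (Nat.pos_of_ne_zero (NeZero.ne N))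
  have hpowN : a * a ^ (N - 1) = a ^ N := by rw [← pow_succ' a (N - 1), hN1]
  -- conjugates of a^N-th powers lie in H
  have h1a : g₁ * (E12 (1 : ZMod N)) ^ (a ^ N) * g₁⁻¹ ∈ H := by
    have hm := pow_mem h1 (a ^ (N - 1))
    rwa [my_conj_pow, ← pow_mul, hpowN] at hm
  have h1a' : g₁ * (E21 (1 : ZMod N)) ^ (a ^ N) * g₁⁻¹ ∈ H := by
    have hm := pow_mem h1' (a ^ (N - 1))
    rwa [my_conj_pow, ← pow_mul, hpowN] at hm
  -- generators die in SL(2, ZMod d)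
  have hkill : φd ((E12 (1 : ZMod N)) ^ (a ^ N)) = 1 := by
    rw [map_pow, map_E12, _root_.map_one, E12_pow,
      (ZMod.natCast_eq_zero_iff _ _).2 hdaN, E12_zero]
  have hkill' : φd ((E21 (1 : ZMod N)) ^ (a ^ N)) = 1 := by
    rw [map_pow, map_E21, _root_.map_one, E21_pow,
      (ZMod.natCast_eq_zero_iff _ _).2 hdaN, E21_zero]
  -- injectivity on common kernel
  have injZ : ∀ u : ZMod N, fd u = 0 → fe u = 0 → u = 0 := by
    intro u hu1 hu2
    have hu : ((u.val : ℕ) : ZMod N) = u := ZMod.natCast_rightInverse u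
    rw [← hu, map_natCast] at hu1 hu2
    have hd' : d ∣ u.val := (ZMod.natCast_eq_zero_iff _ _).1 hu1
    have he' : e ∣ u.val := (ZMod.natCast_eq_zero_iff _ _).1 hu2
    have hNdvd : N ∣ u.val := by
      have hmm := Nat.Coprime.mul_dvd_of_dvd_of_dvd hcop_ed he' hd'
      rwa [hed] at hmm
    rw [← hu]
    exact (ZMod.natCast_eq_zero_iff _ _).2 hNdvd
  have inj : ∀ x : SL(2, ZMod N), φd x = 1 → φe x = 1 → x = 1 := by
    intro x hxd hxe
    have hD : ∀ i j, fd (x.1 i j) = (1 : Matrix (Fin 2) (Fin 2) (ZMod d)) i j := by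
      intro i j
      have h := congrArg (fun y : SL(2, ZMod d) => y.1 i j) hxd
      simpa [hφd, Matrix.SpecialLinearGroup.map_apply_coe, RingHom.mapMatrix_apply,
        Matrix.map_apply] using h
    have hE : ∀ i j, fe (x.1 i j) = (1 : Matrix (Fin 2) (Fin 2) (ZMod e)) i j := by
      intro i j
      have h := congrArg (fun y : SL(2, ZMod e) => y.1 i j) hxe
      simpa [hφe, Matrix.SpecialLinearGroup.map_apply_coe, RingHom.mapMatrix_apply,
        Matrix.map_apply] using h
    apply Subtype.ext
    ext i j
    have h0d : fd (x.1 i j - (1 : Matrix (Fin 2) (Fin 2) (ZMod N)) i j) = 0 := by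
      rw [map_sub, hD i j]
      by_cases hij : i = j <;> simp [Matrix.one_apply, hij]
    have h0e : fe (x.1 i j - (1 : Matrix (Fin 2) (Fin 2) (ZMod N)) i j) = 0 := by
      rw [map_sub, hE i j]
      by_cases hij : i = j <;> simp [Matrix.one_apply, hij]
    have := sub_eq_zero.mp (injZ _ h0d h0e)
    simpa using this
  -- the subgroup L
  set L := Subgroup.closure {(E12 (1 : ZMod N)) ^ (a ^ N), (E21 (1 : ZMod N)) ^ (a ^ N)} with hL
  have hLker : L ≤ φd.ker := by
    rw [hL, Subgroup.closure_le]
    intro x hx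
    rcases hx with h | h
    · rw [h]; exact hkill
    · rw [Set.mem_singleton_iff] at h; rw [h]; exact hkill'
  have hconjL : ∀ z ∈ L, g₁ * z * g₁⁻¹ ∈ H := by
    apply conj_mem_of_closure
    intro x hx
    rcases hx with h | h
    · rw [h]; exact h1a
    · rw [Set.mem_singleton_iff] at h; rw [h]; exact h1a'
  -- image of L in SL(2, ZMod e) is everything
  have hmapL : Subgroup.map φe L = ⊤ := by
    rw [hL, MonoidHom.map_closure, Set.image_insert_eq, Set.image_singleton]
    simp only [hφe, map_pow, map_E12, map_E21, _root_.map_one]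
    exact closure_pow_eq_top e (a ^ N) hcop_ae
  -- kernel of φd is inside L
  have hKL : φd.ker ≤ L := by
    intro x hx
    have hxe : φe x ∈ Subgroup.map φe L := by rw [hmapL]; trivial
    obtain ⟨z, hzL, hze⟩ := hxe
    have hzd : φd z = 1 := hLker hzL
    have hxd : φd x = 1 := hx
    have h1 : φd (z⁻¹ * x) = 1 := by rw [_root_.map_mul, map_inv, hzd, hxd]; group
    have h2 : φe (z⁻¹ * x) = 1 := by rw [_root_.map_mul, map_inv, hze]; group
    have hzx : z = x := inv_mul_eq_one.mp (inj _ h1 h2)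
    rw [← hzx]; exact hzL
  -- kernel of φd is inside H
  have hKH : φd.ker ≤ H := by
    intro x hx
    have hmem : g₁⁻¹ * x * g₁ ∈ φd.ker := by
      have hx1 : φd x = 1 := hx
      have : φd (g₁⁻¹ * x * g₁) = 1 := by rw [_root_.map_mul, _root_.map_mul, map_inv, hx1]; group
      exact this
    have hmem2 := hconjL _ (hKL hmem)
    have hEq : g₁ * (g₁⁻¹ * x * g₁) * g₁⁻¹ = x := by group
    rwa [hEq] at hmem2
  -- image of H in SL(2, ZMod d) is everything
  have hmapH : Subgroup.map φd H = ⊤ := by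
    rw [eq_top_iff]
    intro x _
    have hcj : ∀ z ∈ Subgroup.closure {(E12 (1 : ZMod d)) ^ b, (E21 (1 : ZMod d)) ^ b},
        (φd g₂) * z * (φd g₂)⁻¹ ∈ Subgroup.map φd H := by
      apply conj_mem_of_closure
      intro x hx
      rcases hx with h | h
      · rw [h]
        refine ⟨g₂ * (E12 (1 : ZMod N)) ^ b * g₂⁻¹, h2, ?_⟩
        rw [_root_.map_mul, _root_.map_mul, map_inv, map_pow, map_E12, _root_.map_one]
      · rw [Set.mem_singleton_iff] at h; rw [h]
        refine ⟨g₂ * (E21 (1 : ZMod N)) ^ b * g₂⁻¹, h2', ?_⟩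
        rw [_root_.map_mul, _root_.map_mul, map_inv, map_pow, map_E21, _root_.map_one]
    have hcmem : (φd g₂)⁻¹ * x * (φd g₂) ∈
        Subgroup.closure {(E12 (1 : ZMod d)) ^ b, (E21 (1 : ZMod d)) ^ b} := by
      rw [closure_pow_eq_top d b hcop_bd]; trivial
    have hmem2 := hcj _ hcmem
    have hEq : (φd g₂) * ((φd g₂)⁻¹ * x * (φd g₂)) * (φd g₂)⁻¹ = x := by group
    rwa [hEq] at hmem2
  -- conclude
  rw [eq_top_iff]
  intro x _
  have hxd : φd x ∈ Subgroup.map φd H := by rw [hmapH]; trivial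
  obtain ⟨h, hh, hhx⟩ := hxd
  have hker : h⁻¹ * x ∈ φd.ker := by
    have : φd (h⁻¹ * x) = 1 := by rw [_root_.map_mul, map_inv, hhx]; group
    exact this
  have := mul_mem hh (hKH hker)
  have hEq : h * (h⁻¹ * x) = x := by group
  rwa [hEq] at this


/-- The matrix `T' = [[1,0],[1,1]]` in `SL(2,ℤ)`. -/
def Tmat' : Matrix.SpecialLinearGroup (Fin 2) ℤ :=
  ⟨!![1, 0; 1, 1], by norm_num [Matrix.det_fin_two_of]⟩

/-- If `Γ ≤ SL(2,ℤ)` has finite index and contains `C₁T^{m₁}C₁⁻¹`, `C₁T'^{m₁'}C₁⁻¹`,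
`C₂T^{m₂}C₂⁻¹`, `C₂T'^{m₂'}C₂⁻¹` with `gcd(m₁m₁', m₂m₂') = 1`, then `Γ` surjects onto
`SL(2,ℤ/nℤ)` for all `n ≥ 1`, i.e. `Γ` is a totally non congruence group. -/
theorem totally_noncongruence_of_gcd_one
    (Γ : Subgroup (Matrix.SpecialLinearGroup (Fin 2) ℤ)) (hΓ : Γ.FiniteIndex)
    (C₁ C₂ : Matrix.SpecialLinearGroup (Fin 2) ℤ) (m₁ m₁' m₂ m₂' : ℕ)
    (h₁ : C₁ * Tmat ^ m₁ * C₁⁻¹ ∈ Γ) (h₁' : C₁ * Tmat' ^ m₁' * C₁⁻¹ ∈ Γ)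
    (h₂ : C₂ * Tmat ^ m₂ * C₂⁻¹ ∈ Γ) (h₂' : C₂ * Tmat' ^ m₂' * C₂⁻¹ ∈ Γ)
    (hgcd : Nat.gcd (m₁ * m₁') (m₂ * m₂') = 1) :
    ∀ n : ℕ, 1 ≤ n →
      Subgroup.map (Matrix.SpecialLinearGroup.map (Int.castRingHom (ZMod n))) Γ = ⊤ := by
  intro n hn
  haveI : NeZero n := ⟨by omega⟩
  have hTE : Tmat = E12 (1 : ℤ) := Subtype.ext rfl
  have hTE' : Tmat' = E21 (1 : ℤ) := Subtype.ext rfl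
  set φ := Matrix.SpecialLinearGroup.map (n := Fin 2) (Int.castRingHom (ZMod n)) with hφ
  have key : ∀ (C : Matrix.SpecialLinearGroup (Fin 2) ℤ) (p q : ℕ),
      C * Tmat ^ p * C⁻¹ ∈ Γ → C * Tmat' ^ q * C⁻¹ ∈ Γ →
      (φ C * (E12 (1 : ZMod n)) ^ (p * q) * (φ C)⁻¹ ∈ Subgroup.map φ Γ ∧
       φ C * (E21 (1 : ZMod n)) ^ (p * q) * (φ C)⁻¹ ∈ Subgroup.map φ Γ) := by
    intro C p q hp hq
    constructor
    · have hmem : C * Tmat ^ (p * q) * C⁻¹ ∈ Γ := by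
        have hpm := pow_mem hp q
        rwa [my_conj_pow, ← pow_mul] at hpm
      refine ⟨_, hmem, ?_⟩
      rw [_root_.map_mul, _root_.map_mul, map_inv, map_pow, hTE, hφ, map_E12, _root_.map_one]
    · have hmem : C * Tmat' ^ (p * q) * C⁻¹ ∈ Γ := by
        have hpm := pow_mem hq p
        rwa [my_conj_pow, ← pow_mul, mul_comm q p] at hpm
      refine ⟨_, hmem, ?_⟩
      rw [_root_.map_mul, _root_.map_mul, map_inv, map_pow, hTE', hφ, map_E21, _root_.map_one]
  obtain ⟨k1, k1'⟩ := key C₁ m₁ m₁' h₁ h₁'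
  obtain ⟨k2, k2'⟩ := key C₂ m₂ m₂' h₂ h₂'
  exact main_lemma n (Subgroup.map φ Γ) (φ C₁) (φ C₂) (m₁ * m₁') (m₂ * m₂') hgcd k1 k1' k2 k2'
end

section
/- Let p be a prime and r ≥ 1, and let Γ be a subgroup of SL(2, ℤ/p^rℤ). Suppose Γ contains A₁TA₁⁻¹ and A₂TA₂⁻¹ for some A₁, A₂ ∈ SL(2, ℤ/p^rℤ) such that for every m ∈ ℕ the reduction mod p of m·(A₁e₁) is not equal to the reduction mod p of A₂e₁ (as vectors in (ℤ/pℤ)², where e₁ = (1,0)ᵀ ∈ (ℤ/p^rℤ)²). Then Γ = SL(2, ℤ/p^rℤ). -/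
/-- The matrix `T = [[1,1],[0,1]]` in `SL(2, ℤ/mℤ)`. -/
def Tmod (m : ℕ) : Matrix.SpecialLinearGroup (Fin 2) (ZMod m) :=
  ⟨!![1, 1; 0, 1], by norm_num [Matrix.det_fin_two_of]⟩

/-- upper unipotent -/
def Umat (q : ℕ) (x : ZMod q) : Matrix.SpecialLinearGroup (Fin 2) (ZMod q) :=
  ⟨!![1, x; 0, 1], by norm_num [Matrix.det_fin_two_of]⟩

/-- lower unipotent -/
def Lmat (q : ℕ) (x : ZMod q) : Matrix.SpecialLinearGroup (Fin 2) (ZMod q) :=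
  ⟨!![1, 0; x, 1], by norm_num [Matrix.det_fin_two_of]⟩

lemma Umat_mul (q : ℕ) (x y : ZMod q) : Umat q x * Umat q y = Umat q (x + y) := by
  apply Subtype.ext
  rw [Matrix.SpecialLinearGroup.coe_mul]
  simp [Umat, Matrix.mul_fin_two, add_comm]

lemma Lmat_mul (q : ℕ) (x y : ZMod q) : Lmat q x * Lmat q y = Lmat q (x + y) := by
  apply Subtype.ext
  rw [Matrix.SpecialLinearGroup.coe_mul]
  simp [Lmat, Matrix.mul_fin_two, add_comm]

lemma Umat_zero (q : ℕ) : Umat q 0 = 1 := by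
  apply Subtype.ext
  rw [Matrix.SpecialLinearGroup.coe_one, Matrix.one_fin_two]
  rfl

lemma Lmat_zero (q : ℕ) : Lmat q 0 = 1 := by
  apply Subtype.ext
  rw [Matrix.SpecialLinearGroup.coe_one, Matrix.one_fin_two]
  rfl

lemma Tmod_eq (q : ℕ) : Tmod q = Umat q 1 := rfl

lemma Lmat_pow (q : ℕ) (x : ZMod q) (k : ℕ) : (Lmat q x) ^ k = Lmat q (k * x) := by
  induction k with
  | zero => rw [pow_zero, ← Lmat_zero]; congr 1; simp
  | succ n ih => rw [pow_succ, ih, Lmat_mul]; congr 1; push_cast; ring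

lemma Tmod_pow (q : ℕ) (k : ℕ) : (Tmod q) ^ k = Umat q k := by
  induction k with
  | zero => rw [pow_zero, ← Umat_zero]; congr 1; simp
  | succ n ih => rw [pow_succ, ih, Tmod_eq, Umat_mul]; congr 1; push_cast; ring

/-- In `ZMod (p^r)`, an element is a unit iff its reduction mod `p` is nonzero. -/
lemma isUnit_iff_red (p : ℕ) (hp : p.Prime) (r : ℕ) (hr : 1 ≤ r) (x : ZMod (p ^ r)) :
    IsUnit x ↔
      ZMod.castHom (dvd_pow_self p (Nat.one_le_iff_ne_zero.mp hr)) (ZMod p) x ≠ 0 := by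
  haveI : NeZero (p ^ r) := ⟨pow_ne_zero r hp.pos.ne'⟩
  have hx : ((x.val : ℕ) : ZMod (p ^ r)) = x := ZMod.natCast_zmod_val x
  rw [ZMod.castHom_apply, ← ZMod.natCast_val, Ne, ZMod.natCast_eq_zero_iff,
    ← Nat.Prime.coprime_iff_not_dvd hp, Nat.coprime_comm, ← Nat.coprime_pow_right_iff hr,
    ← ZMod.isUnit_iff_coprime, hx]

/-- Decomposition of an SL2 element with unit lower-left entry. -/
lemma decomp_of_inv (q : ℕ) (M : Matrix.SpecialLinearGroup (Fin 2) (ZMod q))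
    (iv : ZMod q) (h : M.1 1 0 * iv = 1) :
    M = Umat q ((M.1 0 0 - 1) * iv) * Lmat q (M.1 1 0) *
        Umat q ((M.1 1 1 - 1) * iv) := by
  have hdet : M.1 0 0 * M.1 1 1 - M.1 0 1 * M.1 1 0 = 1 := by
    have := M.2; rwa [Matrix.det_fin_two] at this
  apply Subtype.ext
  rw [Matrix.SpecialLinearGroup.coe_mul, Matrix.SpecialLinearGroup.coe_mul]
  simp only [Matrix.SpecialLinearGroup.coe_mul, Umat, Lmat,
    Matrix.SpecialLinearGroup.coe_mk, Matrix.mul_fin_two]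
  ext i j
  fin_cases i <;> fin_cases j <;> simp <;>
    first
      | linear_combination (1 - M.1 0 0) * h
      | linear_combination (1 - M.1 1 1) * h
      | linear_combination
          (-(M.1 0 1) - (M.1 0 0 - 1) * (M.1 1 1 - 1) * iv) * h - iv * hdet

/-- Conjugating T by a matrix whose (0,0) entry vanishes gives a lower unipotent. -/
lemma conj_T_of_zero (q : ℕ) (C : Matrix.SpecialLinearGroup (Fin 2) (ZMod q))
    (hC : C.1 0 0 = 0) :
    C * Tmod q * C⁻¹ = Lmat q (-(C.1 1 0 * C.1 1 0)) := by
  have hdet : C.1 0 0 * C.1 1 1 - C.1 0 1 * C.1 1 0 = 1 := by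
    have := C.2; rwa [Matrix.det_fin_two] at this
  rw [hC, zero_mul, zero_sub] at hdet
  apply Subtype.ext
  rw [Matrix.SpecialLinearGroup.coe_mul, Matrix.SpecialLinearGroup.coe_mul]
  rw [Matrix.SpecialLinearGroup.coe_inv, Matrix.adjugate_fin_two]
  simp only [Matrix.SpecialLinearGroup.coe_mul, Tmod, Lmat, Matrix.SpecialLinearGroup.coe_mk]
  ext i j
  fin_cases i <;> fin_cases j <;>
    simp [Matrix.mul_apply, Fin.sum_univ_two, hC] <;>
      first
        | ring1
        | linear_combination hdet

/-- A subgroup of `SL(2, ZMod (p^r))` containing all elementary unipotents is everything. -/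
lemma eq_top_of_unipotents (p : ℕ) (hp : p.Prime) (r : ℕ) (hr : 1 ≤ r)
    (Δ : Subgroup (Matrix.SpecialLinearGroup (Fin 2) (ZMod (p ^ r))))
    (hU : ∀ x : ZMod (p ^ r), Umat (p ^ r) x ∈ Δ)
    (hL : ∀ x : ZMod (p ^ r), Lmat (p ^ r) x ∈ Δ) : Δ = ⊤ := by
  rw [Subgroup.eq_top_iff']
  have key : ∀ M : Matrix.SpecialLinearGroup (Fin 2) (ZMod (p ^ r)),
      IsUnit (M.1 1 0) → M ∈ Δ := by
    intro M hc
    have h : M.1 1 0 * ↑hc.unit⁻¹ = 1 := by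
      nth_rewrite 1 [← hc.unit_spec]
      exact hc.unit.mul_inv
    rw [decomp_of_inv (p ^ r) M _ h]
    exact mul_mem (mul_mem (hU _) (hL _)) (hU _)
  intro M
  by_cases hc : IsUnit (M.1 1 0)
  · exact key M hc
  · have hdet : M.1 0 0 * M.1 1 1 - M.1 0 1 * M.1 1 0 = 1 := by
      have := M.2; rwa [Matrix.det_fin_two] at this
    have hc0 : ZMod.castHom (dvd_pow_self p (Nat.one_le_iff_ne_zero.mp hr)) (ZMod p)
        (M.1 1 0) = 0 := by
      by_contra h0
      exact hc ((isUnit_iff_red p hp r hr _).mpr h0)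
    have ha : IsUnit (M.1 0 0) := by
      haveI : Fact p.Prime := ⟨hp⟩
      rw [isUnit_iff_red p hp r hr]
      intro h0
      have := congrArg (ZMod.castHom (dvd_pow_self p (Nat.one_le_iff_ne_zero.mp hr)) (ZMod p))
        hdet
      rw [map_sub, map_mul, map_mul, map_one, h0, hc0, zero_mul, mul_zero, sub_zero] at this
      exact one_ne_zero this.symm
    have h : M.1 0 0 * ↑ha.unit⁻¹ = 1 := by
      nth_rewrite 1 [← ha.unit_spec]
      exact ha.unit.mul_inv
    set t := (1 - M.1 1 0) * ↑ha.unit⁻¹ with ht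
    have hmul : (Lmat (p ^ r) t * M).1 1 0 = 1 := by
      rw [Matrix.SpecialLinearGroup.coe_mul]
      simp only [Matrix.SpecialLinearGroup.coe_mul, Lmat, Matrix.SpecialLinearGroup.coe_mk,
        Matrix.mul_apply, Fin.sum_univ_two]
      show t * M.1 0 0 + 1 * M.1 1 0 = 1
      rw [ht]
      linear_combination (1 - M.1 1 0) * h
    have hM' : Lmat (p ^ r) t * M ∈ Δ := key _ (by rw [hmul]; exact isUnit_one)
    have hMeq : M = Lmat (p ^ r) (-t) * (Lmat (p ^ r) t * M) := by
      rw [← mul_assoc, Lmat_mul, neg_add_cancel, Lmat_zero, one_mul]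
    rw [hMeq]
    exact mul_mem (hL _) hM'

/-- **Lemma.** Let `p` be a prime, `r ≥ 1` and `Γ ≤ SL(2, ℤ/p^rℤ)` a subgroup containing
`A₁TA₁⁻¹` and `A₂TA₂⁻¹` where for every `m ∈ ℕ` the reduction mod `p` of `m·(A₁e₁)`
differs from the reduction mod `p` of `A₂e₁`. Then `Γ = SL(2, ℤ/p^rℤ)`. -/
theorem generate_SL2_of_two_conjugates (p : ℕ) (hp : p.Prime) (r : ℕ) (hr : 1 ≤ r)
    (Γ : Subgroup (Matrix.SpecialLinearGroup (Fin 2) (ZMod (p ^ r))))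
    (A₁ A₂ : Matrix.SpecialLinearGroup (Fin 2) (ZMod (p ^ r)))
    (h₁ : A₁ * Tmod (p ^ r) * A₁⁻¹ ∈ Γ)
    (h₂ : A₂ * Tmod (p ^ r) * A₂⁻¹ ∈ Γ)
    (hA : ∀ m : ℕ,
      (fun i : Fin 2 =>
        ZMod.castHom (dvd_pow_self p (Nat.one_le_iff_ne_zero.mp hr)) (ZMod p)
          ((m : ZMod (p ^ r)) * ((A₁ : Matrix (Fin 2) (Fin 2) (ZMod (p ^ r))).mulVec ![1, 0]) i)) ≠
      (fun i : Fin 2 =>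
        ZMod.castHom (dvd_pow_self p (Nat.one_le_iff_ne_zero.mp hr)) (ZMod p)
          (((A₂ : Matrix (Fin 2) (Fin 2) (ZMod (p ^ r))).mulVec ![1, 0]) i))) :
    Γ = ⊤ := by
  haveI : Fact p.Prime := ⟨hp⟩
  haveI : NeZero (p ^ r) := ⟨pow_ne_zero r hp.pos.ne'⟩
  set B := A₁⁻¹ * A₂ with hB
  have hAB : A₂ = A₁ * B := by rw [hB, ← mul_assoc, mul_inv_cancel, one_mul]
  -- B's lower-left entry is a unit
  have hc : IsUnit (B.1 1 0) := by
    rw [isUnit_iff_red p hp r hr]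
    intro hc0
    apply hA (ZMod.castHom (dvd_pow_self p (Nat.one_le_iff_ne_zero.mp hr)) (ZMod p)
      (B.1 0 0)).val
    funext i
    have hent : A₂.1 i 0 = A₁.1 i 0 * B.1 0 0 + A₁.1 i 1 * B.1 1 0 := by
      have := congrArg
        (fun X : Matrix.SpecialLinearGroup (Fin 2) (ZMod (p ^ r)) => X.1 i 0) hAB
      simpa [Matrix.mul_apply, Fin.sum_univ_two] using this
    have hmv₁ : (A₁ : Matrix (Fin 2) (Fin 2) (ZMod (p ^ r))).mulVec ![1, 0] i = A₁.1 i 0 := by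
      simp [Matrix.mulVec, dotProduct, Fin.sum_univ_two]
    have hmv₂ : (A₂ : Matrix (Fin 2) (Fin 2) (ZMod (p ^ r))).mulVec ![1, 0] i = A₂.1 i 0 := by
      simp [Matrix.mulVec, dotProduct, Fin.sum_univ_two]
    show ZMod.castHom _ (ZMod p) (_ * _) = ZMod.castHom _ (ZMod p) _
    rw [hmv₁, hmv₂, hent, map_mul, map_natCast, map_add, map_mul, map_mul, hc0, mul_zero,
      add_zero, ZMod.natCast_zmod_val]
    ring
  -- pass to the conjugate subgroup
  set f := MulAut.conj A₁⁻¹ with hf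
  set Δ := Γ.map f.toMonoidHom with hΔ
  have hTΔ : Tmod (p ^ r) ∈ Δ := ⟨A₁ * Tmod (p ^ r) * A₁⁻¹, h₁, by
    simp only [hf, MulEquiv.coe_toMonoidHom, MulAut.conj_apply]; group⟩
  have hBΔ : B * Tmod (p ^ r) * B⁻¹ ∈ Δ := ⟨A₂ * Tmod (p ^ r) * A₂⁻¹, h₂, by
    simp only [hf, MulEquiv.coe_toMonoidHom, MulAut.conj_apply, hB]; group⟩
  have hUΔ : ∀ x : ZMod (p ^ r), Umat (p ^ r) x ∈ Δ := by
    intro x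
    obtain ⟨k, rfl⟩ := ZMod.natCast_rightInverse.surjective x
    rw [← Tmod_pow]
    exact pow_mem hTΔ k
  -- produce a lower unipotent with unit parameter
  have hCinv : B.1 1 0 * ↑hc.unit⁻¹ = 1 := by
    nth_rewrite 1 [← hc.unit_spec]
    exact hc.unit.mul_inv
  set iv : ZMod (p ^ r) := ↑hc.unit⁻¹ with hiv
  set C := Umat (p ^ r) (-(B.1 0 0) * iv) * B with hC
  have hC00 : C.1 0 0 = 0 := by
    rw [hC, Matrix.SpecialLinearGroup.coe_mul]
    simp only [hC, Matrix.SpecialLinearGroup.coe_mul, Umat, Matrix.SpecialLinearGroup.coe_mk,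
      Matrix.mul_apply, Fin.sum_univ_two]
    show 1 * B.1 0 0 + -(B.1 0 0) * iv * B.1 1 0 = 0
    linear_combination (-(B.1 0 0)) * hCinv
  have hC10 : C.1 1 0 = B.1 1 0 := by
    rw [hC, Matrix.SpecialLinearGroup.coe_mul]
    simp only [hC, Matrix.SpecialLinearGroup.coe_mul, Umat, Matrix.SpecialLinearGroup.coe_mk,
      Matrix.mul_apply, Fin.sum_univ_two]
    show 0 * B.1 0 0 + 1 * B.1 1 0 = B.1 1 0
    ring
  have hCΔ : C * Tmod (p ^ r) * C⁻¹ ∈ Δ := by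
    have hCe : C * Tmod (p ^ r) * C⁻¹ =
        Umat (p ^ r) (-(B.1 0 0) * iv) * (B * Tmod (p ^ r) * B⁻¹) *
          (Umat (p ^ r) (-(B.1 0 0) * iv))⁻¹ := by
      rw [hC]; group
    rw [hCe]
    exact mul_mem (mul_mem (hUΔ _) hBΔ) (inv_mem (hUΔ _))
  rw [conj_T_of_zero (p ^ r) C hC00, hC10] at hCΔ
  have hw : IsUnit (-(B.1 1 0 * B.1 1 0)) := (hc.mul hc).neg
  set w : ZMod (p ^ r) := ↑hw.unit⁻¹ with hwdef
  have hwinv : (-(B.1 1 0 * B.1 1 0)) * w = 1 := by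
    rw [hwdef]
    nth_rewrite 1 [← hw.unit_spec]
    exact hw.unit.mul_inv
  have hLΔ : ∀ x : ZMod (p ^ r), Lmat (p ^ r) x ∈ Δ := by
    intro x
    obtain ⟨k, hk⟩ := ZMod.natCast_rightInverse.surjective (x * w)
    have hx : (k : ZMod (p ^ r)) * (-(B.1 1 0 * B.1 1 0)) = x := by
      rw [hk]
      linear_combination x * hwinv
    have hLe : Lmat (p ^ r) x = (Lmat (p ^ r) (-(B.1 1 0 * B.1 1 0))) ^ k := by
      rw [Lmat_pow, hx]
    rw [hLe]
    exact pow_mem hCΔ k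
  have hΔtop : Δ = ⊤ := eq_top_of_unipotents p hp r hr Δ hUΔ hLΔ
  have htop : Subgroup.map f.toMonoidHom (⊤ : Subgroup _) = ⊤ :=
    Subgroup.map_top_of_surjective _ f.surjective
  exact Subgroup.map_injective f.injective (hΔtop.trans htop.symm)
end

section
/- Let k ≥ 1 and l ≥ 1, and set N' = 3k + l. On the set {0, 1, …, N'−1} let σ_a be the N'-cycle (0, 1, 2, …, N'−1) and let σ_b be the product of the k disjoint 3-cycles (3i, 3i+1, 3i+2) for i = 0, …, k−1. Then the commutator σ_b⁻¹ ∘ σ_a⁻¹ ∘ σ_b ∘ σ_a is a single cycle of length 2k+1; equivalently, its cycle type (the multiset of lengths of its nontrivial cycles) is {2k+1}. -/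
def threeCycle {N : ℕ} (a b c : Fin N) : Equiv.Perm (Fin N) :=
  Equiv.swap a b * Equiv.swap b c

section Helpers
variable {α : Type*}

lemma prod_apply_fixed (l : List (Equiv.Perm α)) (x : α)
    (h : ∀ g ∈ l, g x = x) : l.prod x = x := by
  induction l with
  | nil => simp
  | cons a t ih =>
    rw [List.prod_cons, Equiv.Perm.mul_apply,
      ih (fun g hg => h g (List.mem_cons_of_mem _ hg))]
    exact h a (List.mem_cons_self)

lemma prod_apply_single (l : List (Equiv.Perm α)) (hl : l.Nodup) (g : Equiv.Perm α)
    (hg : g ∈ l) (x : α)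
    (h : ∀ h' ∈ l, h' ≠ g → h' x = x ∧ h' (g x) = g x) :
    l.prod x = g x := by
  induction l with
  | nil => simp at hg
  | cons a t ih =>
    rw [List.prod_cons, Equiv.Perm.mul_apply]
    rcases List.mem_cons.mp hg with rfl | hgt
    · have ht : t.prod x = x := prod_apply_fixed t x (fun h' hh' =>
        (h h' (List.mem_cons_of_mem _ hh')
          (fun he => (List.nodup_cons.mp hl).1 (he ▸ hh'))).1)
      rw [ht]
    · have hag : a ≠ g := fun he => (List.nodup_cons.mp hl).1 (he ▸ hgt)
      rw [ih (List.nodup_cons.mp hl).2 hgt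
        (fun h' hh' hne => h h' (List.mem_cons_of_mem _ hh') hne)]
      exact (h a (List.mem_cons_self) hag).2

end Helpers

lemma threeCycle_apply_of_ne {N : ℕ} {a b c x : Fin N}
    (hxa : x ≠ a) (hxb : x ≠ b) (hxc : x ≠ c) : threeCycle a b c x = x := by
  simp [threeCycle, Equiv.Perm.mul_apply, Equiv.swap_apply_of_ne_of_ne hxb hxc,
    Equiv.swap_apply_of_ne_of_ne hxa hxb]

lemma threeCycle_apply_a {N : ℕ} {a b c : Fin N} (hab : a ≠ b) (hac : a ≠ c) :
    threeCycle a b c a = b := by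
  simp [threeCycle, Equiv.Perm.mul_apply, Equiv.swap_apply_of_ne_of_ne hab hac]

lemma threeCycle_apply_b {N : ℕ} {a b c : Fin N} (hbc : b ≠ c) (hac : a ≠ c) :
    threeCycle a b c b = c := by
  simp [threeCycle, Equiv.Perm.mul_apply,
    Equiv.swap_apply_of_ne_of_ne (Ne.symm hac) (Ne.symm hbc)]

lemma threeCycle_apply_c {N : ℕ} {a b c : Fin N} : threeCycle a b c c = a := by
  simp [threeCycle, Equiv.Perm.mul_apply]

lemma sigmaB_val {N k : ℕ} (hkN : 3 * k ≤ N) (F : Fin k → Equiv.Perm (Fin N))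
    (hF : ∀ i : Fin k, ∀ (h0 : 3 * i.val < N) (h1 : 3 * i.val + 1 < N)
      (h2 : 3 * i.val + 2 < N),
      F i = threeCycle ⟨3 * i.val, h0⟩ ⟨3 * i.val + 1, h1⟩ ⟨3 * i.val + 2, h2⟩)
    (x : Fin N) :
    (((List.finRange k).map F).prod x).val =
      if x.val < 3 * k then
        (if x.val % 3 = 2 then x.val - 2 else x.val + 1)
      else x.val := by
  have hbnd : ∀ j : Fin k, 3 * j.val + 2 < N := fun j => by have := j.isLt; omega
  have hFeq : ∀ j : Fin k, F j = threeCycle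
      (⟨3 * j.val, by have := hbnd j; omega⟩ : Fin N)
      ⟨3 * j.val + 1, by have := hbnd j; omega⟩
      ⟨3 * j.val + 2, by have := hbnd j; omega⟩ := fun j => hF j _ _ _
  have hfix : ∀ (j : Fin k) (y : Fin N),
      (y.val < 3 * j.val ∨ 3 * j.val + 2 < y.val) → F j y = y := by
    intro j y hy
    rw [hFeq j]
    exact threeCycle_apply_of_ne
      (Fin.ne_of_val_ne (show y.val ≠ 3 * j.val by omega))
      (Fin.ne_of_val_ne (show y.val ≠ 3 * j.val + 1 by omega))
      (Fin.ne_of_val_ne (show y.val ≠ 3 * j.val + 2 by omega))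
  have hmove : ∀ (j : Fin k) (y : Fin N), 3 * j.val ≤ y.val → y.val ≤ 3 * j.val + 2 →
      (F j y).val = (if y.val % 3 = 2 then y.val - 2 else y.val + 1) := by
    intro j y hy1 hy2
    have hb := hbnd j
    have h3 : y.val = 3 * j.val ∨ y.val = 3 * j.val + 1 ∨ y.val = 3 * j.val + 2 := by omega
    rw [hFeq j]
    rcases h3 with h | h | h
    · have hy : y = ⟨3 * j.val, by omega⟩ := Fin.ext h
      rw [hy, threeCycle_apply_a
        (Fin.ne_of_val_ne (show 3 * j.val ≠ 3 * j.val + 1 by omega))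
        (Fin.ne_of_val_ne (show 3 * j.val ≠ 3 * j.val + 2 by omega))]
      show 3 * j.val + 1 = if (3 * j.val) % 3 = 2 then 3 * j.val - 2 else 3 * j.val + 1
      rw [if_neg (by omega)]
    · have hy : y = ⟨3 * j.val + 1, by omega⟩ := Fin.ext h
      rw [hy, threeCycle_apply_b
        (Fin.ne_of_val_ne (show 3 * j.val + 1 ≠ 3 * j.val + 2 by omega))
        (Fin.ne_of_val_ne (show 3 * j.val ≠ 3 * j.val + 2 by omega))]
      show 3 * j.val + 2 = if (3 * j.val + 1) % 3 = 2 then 3 * j.val + 1 - 2 else 3 * j.val + 1 + 1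
      rw [if_neg (by omega)]
    · have hy : y = ⟨3 * j.val + 2, by omega⟩ := Fin.ext h
      rw [hy, threeCycle_apply_c]
      show 3 * j.val = if (3 * j.val + 2) % 3 = 2 then 3 * j.val + 2 - 2 else 3 * j.val + 2 + 1
      rw [if_pos (by omega)]
      omega
  by_cases hx : x.val < 3 * k
  · rw [if_pos hx]
    have hk0 : 0 < k := by omega
    set i : Fin k := ⟨x.val / 3, by omega⟩ with hi
    have hvi : i.val = x.val / 3 := rfl
    have hxi1 : 3 * i.val ≤ x.val := by omega
    have hxi2 : x.val ≤ 3 * i.val + 2 := by omega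
    have hinj : Function.Injective F := by
      intro a b hab
      by_contra hne
      have hane : a.val ≠ b.val := fun h => hne (Fin.ext h)
      have h1 : F a ⟨3 * a.val, hbnd a |>.trans_le (le_refl N) |> fun _ => by have := hbnd a; omega⟩
          = ⟨3 * a.val + 1, by have := hbnd a; omega⟩ := by
        rw [hFeq a]
        exact threeCycle_apply_a
          (Fin.ne_of_val_ne (show 3 * a.val ≠ 3 * a.val + 1 by omega))
          (Fin.ne_of_val_ne (show 3 * a.val ≠ 3 * a.val + 2 by omega))
      have h2 : F b (⟨3 * a.val, by have := hbnd a; omega⟩ : Fin N)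
          = ⟨3 * a.val, by have := hbnd a; omega⟩ :=
        hfix b _ (show 3 * a.val < 3 * b.val ∨ 3 * b.val + 2 < 3 * a.val by omega)
      rw [hab, h2] at h1
      have := congrArg Fin.val h1
      simp only [Fin.val_mk] at this
      omega
    have hnodup : ((List.finRange k).map F).Nodup :=
      (List.nodup_finRange k).map hinj
    have hmem : F i ∈ (List.finRange k).map F :=
      List.mem_map.mpr ⟨i, List.mem_finRange i, rfl⟩
    have hFx := hmove i x hxi1 hxi2
    rw [prod_apply_single _ hnodup (F i) hmem x ?_]
    · exact hFx
    · intro h' hh' hne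
      obtain ⟨j, _, rfl⟩ := List.mem_map.mp hh'
      have hji : j ≠ i := fun h => hne (by rw [h])
      have hjiv : j.val ≠ i.val := fun h => hji (Fin.ext h)
      have hFb : 3 * i.val ≤ (F i x).val ∧ (F i x).val ≤ 3 * i.val + 2 := by
        rw [hFx]; split_ifs <;> omega
      constructor
      · exact hfix j x (by omega)
      · exact hfix j (F i x) (by omega)
  · rw [if_neg hx]
    rw [prod_apply_fixed]
    intro g hg
    obtain ⟨j, _, rfl⟩ := List.mem_map.mp hg
    exact hfix j x (by have := j.isLt; omega)

lemma finRotate_val {n : ℕ} (x : Fin n) : (finRotate n x).val = (x.val + 1) % n := by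
  match n with
  | 0 => exact x.elim0
  | n+1 =>
    rw [finRotate_succ_apply]
    rcases Nat.lt_or_ge (x.val + 1) (n + 1) with h | h
    · rw [Fin.val_add_one_of_lt (by simp [Fin.lt_iff_val_lt_val]; omega : x < Fin.last n),
        Nat.mod_eq_of_lt h]
    · have hx : x = Fin.last n := by
        have := x.isLt; apply Fin.ext; simp; omega
      subst hx
      simp [Fin.last_add_one]

/-- Value function for the cycle list. -/
def ocfun (k N j : ℕ) : ℕ :=
  if j < k then 3 * j + 2 else if j < 2 * k then 3 * (2 * k - 1 - j) + 1 else N - 1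

lemma ocfun_lt (k l : ℕ) (hk : 1 ≤ k) (hl : 1 ≤ l) (j : ℕ) :
    ocfun k (3 * k + l) j < 3 * k + l := by
  unfold ocfun; split_ifs <;> omega

/-- The cycle list of the commutator. -/
def ocList (k l : ℕ) (hk : 1 ≤ k) (hl : 1 ≤ l) : List (Fin (3 * k + l)) :=
  (List.range (2 * k + 1)).map (fun j => ⟨ocfun k (3 * k + l) j, ocfun_lt k l hk hl j⟩)

lemma length_ocList (k l : ℕ) (hk : 1 ≤ k) (hl : 1 ≤ l) :
    (ocList k l hk hl).length = 2 * k + 1 := by simp [ocList]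

lemma nodup_ocList (k l : ℕ) (hk : 1 ≤ k) (hl : 1 ≤ l) : (ocList k l hk hl).Nodup := by
  refine List.Nodup.map_on ?_ (List.nodup_range)
  intro i hi j hj hij
  rw [List.mem_range] at hi hj
  have h : ocfun k (3 * k + l) i = ocfun k (3 * k + l) j := congrArg Fin.val hij
  revert h
  simp only [ocfun]
  split_ifs <;> omega

lemma ocList_getElem (k l : ℕ) (hk : 1 ≤ k) (hl : 1 ≤ l) (i : ℕ) (hi : i < 2 * k + 1) :
    (ocList k l hk hl)[i]'(by simpa [ocList] using hi) =
      ⟨ocfun k (3 * k + l) i, ocfun_lt k l hk hl i⟩ := by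
  simp [ocList]

lemma formPerm_ocList (k l : ℕ) (hk : 1 ≤ k) (hl : 1 ≤ l) (i : ℕ) (hi : i < 2 * k + 1) :
    (ocList k l hk hl).formPerm ⟨ocfun k (3 * k + l) i, ocfun_lt k l hk hl i⟩ =
      ⟨ocfun k (3 * k + l) ((i + 1) % (2 * k + 1)), ocfun_lt k l hk hl _⟩ := by
  have h := List.formPerm_apply_getElem (ocList k l hk hl) (nodup_ocList k l hk hl) i
    (by rw [length_ocList]; omega)
  rw [ocList_getElem k l hk hl i hi] at h
  rw [h]
  apply Fin.ext
  simp [ocList]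

lemma not_mem_ocList (k l : ℕ) (hk : 1 ≤ k) (hl : 1 ≤ l) (x : Fin (3 * k + l))
    (h : ∀ j, j < 2 * k + 1 → ocfun k (3 * k + l) j ≠ x.val) :
    x ∉ ocList k l hk hl := by
  intro hx
  simp only [ocList, List.mem_map, List.mem_range] at hx
  obtain ⟨j, hj, he⟩ := hx
  exact h j hj (congrArg Fin.val he)

/-- For `N' = 3k + l` (`k, l ≥ 1`), with `σ_a = (0 1 ⋯ N'-1)` and
`σ_b = ∏_{i<k} (3i, 3i+1, 3i+2)`, the commutator `σ_b⁻¹σ_a⁻¹σ_bσ_a` is a single cycle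
of length `2k+1`, i.e. its cycle type is `{2k+1}`. -/
theorem commutator_cycleType_one_even_block (k l : ℕ) (hk : 1 ≤ k) (hl : 1 ≤ l)
    (σa σb : Equiv.Perm (Fin (3 * k + l)))
    (ha : σa = finRotate (3 * k + l))
    (hb : σb = ((List.finRange k).map (fun (i : Fin k) =>
      threeCycle
        (⟨3 * (i : ℕ), by have := i.isLt; omega⟩ : Fin (3 * k + l))
        ⟨3 * (i : ℕ) + 1, by have := i.isLt; omega⟩
        ⟨3 * (i : ℕ) + 2, by have := i.isLt; omega⟩)).prod) :
    (σb⁻¹ * σa⁻¹ * σb * σa).cycleType = {2 * k + 1} := by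
  have hav' : ∀ x : Fin (3 * k + l), (σa x).val =
      if x.val + 1 < 3 * k + l then x.val + 1 else 0 := by
    intro x
    rw [ha, finRotate_val]
    rcases Nat.lt_or_ge (x.val + 1) (3 * k + l) with h | h
    · rw [if_pos h, Nat.mod_eq_of_lt h]
    · have hx := x.isLt
      rw [if_neg (by omega), show x.val + 1 = 3 * k + l by omega, Nat.mod_self]
  have hbv : ∀ x : Fin (3 * k + l), (σb x).val =
      if x.val < 3 * k then (if x.val % 3 = 2 then x.val - 2 else x.val + 1)
      else x.val := by
    intro x
    rw [hb]
    exact sigmaB_val (by omega) _ (fun i h0 h1 h2 => rfl) x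
  have hainv : ∀ x : Fin (3 * k + l), (σa⁻¹ x).val =
      if x.val = 0 then 3 * k + l - 1 else x.val - 1 := by
    intro x
    have h2 : (σa (σa⁻¹ x)).val = x.val := congrArg Fin.val (Equiv.apply_symm_apply σa x)
    rw [hav'] at h2
    have hlt := (σa⁻¹ x).isLt
    have hxlt := x.isLt
    split_ifs at h2 ⊢ <;> omega
  have hbinv : ∀ x : Fin (3 * k + l), (σb⁻¹ x).val =
      if x.val < 3 * k then (if x.val % 3 = 0 then x.val + 2 else x.val - 1)
      else x.val := by
    intro x
    have h2 : (σb (σb⁻¹ x)).val = x.val := congrArg Fin.val (Equiv.apply_symm_apply σb x)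
    rw [hbv] at h2
    have hlt := (σb⁻¹ x).isLt
    have hxlt := x.isLt
    split_ifs at h2 ⊢ <;> omega
  have hmain : (σb⁻¹ * σa⁻¹ * σb * σa) = (ocList k l hk hl).formPerm := by
    apply Equiv.ext
    intro x
    show σb⁻¹ (σa⁻¹ (σb (σa x))) = _
    have hxlt := x.isLt
    by_cases h3 : x.val < 3 * k
    · have hr : x.val % 3 = 0 ∨ x.val % 3 = 1 ∨ x.val % 3 = 2 := by omega
      rcases hr with hr | hr | hr
      · -- fixed point : x ↦ x
        have e1 : (σa x).val = x.val + 1 := by rw [hav', if_pos (by omega)]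
        have e2 : (σb (σa x)).val = x.val + 2 := by
          rw [hbv, e1, if_pos (by omega), if_neg (by omega)]
        have e3 : (σa⁻¹ (σb (σa x))).val = x.val + 1 := by
          rw [hainv, e2, if_neg (by omega)]; all_goals omega
        have hd : (σb⁻¹ (σa⁻¹ (σb (σa x)))).val = x.val := by
          rw [hbinv, e3, if_pos (by omega), if_neg (by omega)]; all_goals omega
        rw [List.formPerm_apply_of_notMem (not_mem_ocList k l hk hl x
          (by intro j hj; simp only [ocfun]; split_ifs <;> omega))]
        exact Fin.ext hd
      · rcases (by omega : x.val = 1 ∨ 4 ≤ x.val) with h1 | h4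
        · -- x = 1 ↦ N - 1, index 2k-1
          have e1 : (σa x).val = x.val + 1 := by rw [hav', if_pos (by omega)]
          have e2 : (σb (σa x)).val = x.val - 1 := by
            rw [hbv, e1, if_pos (by omega), if_pos (by omega)]; all_goals omega
          have e3 : (σa⁻¹ (σb (σa x))).val = 3 * k + l - 1 := by
            rw [hainv, e2, if_pos (by omega)]
          have hd : (σb⁻¹ (σa⁻¹ (σb (σa x)))).val = 3 * k + l - 1 := by
            rw [hbinv, e3, if_neg (by omega)]
          have hx : x = ⟨ocfun k (3 * k + l) (2 * k - 1), ocfun_lt k l hk hl _⟩ := by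
            apply Fin.ext
            show x.val = ocfun k (3 * k + l) (2 * k - 1)
            simp only [ocfun]; split_ifs <;> omega
          apply Fin.ext
          rw [hd]
          conv_rhs => rw [hx]
          rw [formPerm_ocList k l hk hl (2 * k - 1) (by omega)]
          show 3 * k + l - 1 = ocfun k (3 * k + l) ((2 * k - 1 + 1) % (2 * k + 1))
          rw [Nat.mod_eq_of_lt (by omega)]
          simp only [ocfun]; split_ifs <;> omega
        · -- x = 3m+1, m ≥ 1 ↦ x - 3, index 2k-1-m
          have e1 : (σa x).val = x.val + 1 := by rw [hav', if_pos (by omega)]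
          have e2 : (σb (σa x)).val = x.val - 1 := by
            rw [hbv, e1, if_pos (by omega), if_pos (by omega)]; all_goals omega
          have e3 : (σa⁻¹ (σb (σa x))).val = x.val - 2 := by
            rw [hainv, e2, if_neg (by omega)]; all_goals omega
          have hd : (σb⁻¹ (σa⁻¹ (σb (σa x)))).val = x.val - 3 := by
            rw [hbinv, e3, if_pos (by omega), if_neg (by omega)]; all_goals omega
          have hx : x = ⟨ocfun k (3 * k + l) (2 * k - 1 - (x.val - 1) / 3),
              ocfun_lt k l hk hl _⟩ := by
            apply Fin.ext
            show x.val = ocfun k (3 * k + l) (2 * k - 1 - (x.val - 1) / 3)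
            simp only [ocfun]; split_ifs <;> omega
          apply Fin.ext
          rw [hd]
          conv_rhs => rw [hx]
          rw [formPerm_ocList k l hk hl _ (by omega)]
          show x.val - 3 = ocfun k (3 * k + l) ((2 * k - 1 - (x.val - 1) / 3 + 1) % (2 * k + 1))
          rw [Nat.mod_eq_of_lt (by omega)]
          simp only [ocfun]; split_ifs <;> omega
      · rcases (by omega : x.val = 3 * k - 1 ∨ x.val + 4 ≤ 3 * k) with h1 | h4
        · -- x = 3k-1 ↦ 3k-2, index k-1
          have e1 : (σa x).val = x.val + 1 := by rw [hav', if_pos (by omega)]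
          have e2 : (σb (σa x)).val = x.val + 1 := by
            rw [hbv, e1, if_neg (by omega)]
          have e3 : (σa⁻¹ (σb (σa x))).val = x.val := by
            rw [hainv, e2, if_neg (by omega)]; all_goals omega
          have hd : (σb⁻¹ (σa⁻¹ (σb (σa x)))).val = x.val - 1 := by
            rw [hbinv, e3, if_pos (by omega), if_neg (by omega)]
          have hx : x = ⟨ocfun k (3 * k + l) (k - 1), ocfun_lt k l hk hl _⟩ := by
            apply Fin.ext
            show x.val = ocfun k (3 * k + l) (k - 1)
            simp only [ocfun]; split_ifs <;> omega
          apply Fin.ext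
          rw [hd]
          conv_rhs => rw [hx]
          rw [formPerm_ocList k l hk hl (k - 1) (by omega)]
          show x.val - 1 = ocfun k (3 * k + l) ((k - 1 + 1) % (2 * k + 1))
          rw [Nat.mod_eq_of_lt (by omega)]
          simp only [ocfun]; split_ifs <;> omega
        · -- x = 3j+2, j ≤ k-2 ↦ x + 3, index j
          have e1 : (σa x).val = x.val + 1 := by rw [hav', if_pos (by omega)]
          have e2 : (σb (σa x)).val = x.val + 2 := by
            rw [hbv, e1, if_pos (by omega), if_neg (by omega)]
          have e3 : (σa⁻¹ (σb (σa x))).val = x.val + 1 := by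
            rw [hainv, e2, if_neg (by omega)]; all_goals omega
          have hd : (σb⁻¹ (σa⁻¹ (σb (σa x)))).val = x.val + 3 := by
            rw [hbinv, e3, if_pos (by omega), if_pos (by omega)]; all_goals omega
          have hx : x = ⟨ocfun k (3 * k + l) ((x.val - 2) / 3),
              ocfun_lt k l hk hl _⟩ := by
            apply Fin.ext
            show x.val = ocfun k (3 * k + l) ((x.val - 2) / 3)
            simp only [ocfun]; split_ifs <;> omega
          apply Fin.ext
          rw [hd]
          conv_rhs => rw [hx]
          rw [formPerm_ocList k l hk hl _ (by omega)]
          show x.val + 3 = ocfun k (3 * k + l) (((x.val - 2) / 3 + 1) % (2 * k + 1))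
          rw [Nat.mod_eq_of_lt (by omega)]
          simp only [ocfun]; split_ifs <;> omega
    · rcases (by omega : x.val = 3 * k + l - 1 ∨ x.val + 2 ≤ 3 * k + l) with h1 | h4
      · -- x = N-1 ↦ 2, index 2k
        have e1 : (σa x).val = 0 := by rw [hav', if_neg (by omega)]
        have e2 : (σb (σa x)).val = 1 := by
          rw [hbv, e1, if_pos (by omega), if_neg (by omega)]
        have e3 : (σa⁻¹ (σb (σa x))).val = 0 := by
          rw [hainv, e2, if_neg (by omega)]
        have hd : (σb⁻¹ (σa⁻¹ (σb (σa x)))).val = 2 := by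
          rw [hbinv, e3, if_pos (by omega), if_pos (by omega)]
        have hx : x = ⟨ocfun k (3 * k + l) (2 * k), ocfun_lt k l hk hl _⟩ := by
          apply Fin.ext
          show x.val = ocfun k (3 * k + l) (2 * k)
          simp only [ocfun]; split_ifs <;> omega
        apply Fin.ext
        rw [hd]
        conv_rhs => rw [hx]
        rw [formPerm_ocList k l hk hl (2 * k) (by omega)]
        show 2 = ocfun k (3 * k + l) ((2 * k + 1) % (2 * k + 1))
        rw [Nat.mod_self]
        simp only [ocfun]; split_ifs <;> omega
      · -- 3k ≤ x ≤ N-2 : fixed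
        have e1 : (σa x).val = x.val + 1 := by rw [hav', if_pos (by omega)]
        have e2 : (σb (σa x)).val = x.val + 1 := by
          rw [hbv, e1, if_neg (by omega)]
        have e3 : (σa⁻¹ (σb (σa x))).val = x.val := by
          rw [hainv, e2, if_neg (by omega)]; all_goals omega
        have hd : (σb⁻¹ (σa⁻¹ (σb (σa x)))).val = x.val := by
          rw [hbinv, e3, if_neg (by omega)]
        rw [List.formPerm_apply_of_notMem (not_mem_ocList k l hk hl x
          (by intro j hj; simp only [ocfun]; split_ifs <;> omega))]
        exact Fin.ext hd
  rw [hmain]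
  have hL := nodup_ocList k l hk hl
  have hlen := length_ocList k l hk hl
  have hne : ∀ y : Fin (3 * k + l), ocList k l hk hl ≠ [y] := by
    intro y hy
    have h := congrArg List.length hy
    rw [hlen] at h
    simp at h
    omega
  have hcyc : (ocList k l hk hl).formPerm.IsCycle :=
    List.isCycle_formPerm hL (by rw [hlen]; omega)
  rw [hcyc.cycleType, List.support_formPerm_of_nodup _ hL hne,
    List.toFinset_card_of_nodup hL, hlen]
end

section
/- Let α₁, …, α_p be positive even integers and α_{p+1}, …, α_{p+2q} be positive odd integers (q ≥ 0, and p ≥ 1 if q = 0), and let l ≥ 1. With the construction described in the context (σ_a the L-cycle on {0,…,L−1} and σ_b the product of the shifted block permutations, where L = (3/2)(α₁+…+α_{p+2q}) + p + 3q + l − 1), the permutation σ_b ∘ σ_a has cycle type equal to the multiset consisting of one cycle of length L − 4q together with 2q cycles of length 2. -/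
namespace Origami

/-- The element of `Fin L` (for `L > 0`) corresponding to the natural number `a`
(which in our uses is always `< L`). -/
def mkFin (L : ℕ) (hL : 0 < L) (a : ℕ) : Fin L := ⟨a % L, Nat.mod_lt a hL⟩

/-- The 3-cycle `(a b c)` on `Fin L` (apply the right factor first). -/
def tcyc (L : ℕ) (hL : 0 < L) (a b c : ℕ) : Equiv.Perm (Fin L) :=
  Equiv.swap (mkFin L hL a) (mkFin L hL b) * Equiv.swap (mkFin L hL b) (mkFin L hL c)

/-- The 5-cycle `(a b c d e)` on `Fin L` (apply the right factor first). -/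
def fcyc (L : ℕ) (hL : 0 < L) (a b c d e : ℕ) : Equiv.Perm (Fin L) :=
  Equiv.swap (mkFin L hL a) (mkFin L hL b) * Equiv.swap (mkFin L hL b) (mkFin L hL c) *
    Equiv.swap (mkFin L hL c) (mkFin L hL d) * Equiv.swap (mkFin L hL d) (mkFin L hL e)

/-- The block permutation for an even `α = 2k`, starting at offset `S`:
the product of the 3-cycles `(S+3i, S+3i+1, S+3i+2)` for `i < k`. -/
def evenBlock (L : ℕ) (hL : 0 < L) (S k : ℕ) : Equiv.Perm (Fin L) :=
  ((List.range k).map (fun i => tcyc L hL (S + 3 * i) (S + 3 * i + 1) (S + 3 * i + 2))).prod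

/-- The block permutation for a pair of odds `α = 2k₁+1`, `α' = 2k₂+1`, starting at
offset `S`: the 3-cycles `(S+3i, S+3i+1, S+3i+2)` for `i < k₁`, the 5-cycle
`(S+3k₁, S+3k₁+4, S+3k₁+1, S+3k₁+2, S+3k₁+3)`, and the 3-cycles
`(S+3k₁+5+3j, S+3k₁+6+3j, S+3k₁+7+3j)` for `j < k₂`. -/
def oddBlock (L : ℕ) (hL : 0 < L) (S k₁ k₂ : ℕ) : Equiv.Perm (Fin L) :=
  evenBlock L hL S k₁ *
    fcyc L hL (S + 3 * k₁) (S + 3 * k₁ + 4) (S + 3 * k₁ + 1) (S + 3 * k₁ + 2) (S + 3 * k₁ + 3) *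
    evenBlock L hL (S + 3 * k₁ + 5) k₂

/-- The width of the `j`-th block (`j < p`: the even block for `αⱼ`, of width `(3/2)αⱼ + 1`,
or `(3/2)α_{p-1} + l` for the last block when `q = 0`; `p ≤ j < p+q`: the block for the pair of
odd numbers `(α_{p+2(j-p)}, α_{p+2(j-p)+1})`, of width `(3/2)(α+α') + 3`, or `(3/2)(α+α') + 2 + l`
for the last block). -/
def width (p q l : ℕ) (α : Fin (p + 2 * q) → ℕ) (j : ℕ) : ℕ :=
  if hj : j < p then
    3 * (α ⟨j, by omega⟩ / 2) + (if q = 0 ∧ j = p - 1 then l else 1)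
  else if hj' : j < p + q then
    3 * (α ⟨p + 2 * (j - p), by omega⟩ / 2) + 3 * (α ⟨p + 2 * (j - p) + 1, by omega⟩ / 2) +
      (if j = p + q - 1 then 5 + l else 6)
  else 0

/-- The shift (start offset) of the `j`-th block: the total width of the preceding blocks. -/
def shift (p q l : ℕ) (α : Fin (p + 2 * q) → ℕ) (j : ℕ) : ℕ :=
  ∑ i ∈ Finset.range j, width p q l α i

/-- The horizontal gluing permutation `σ_b` of the one-cylinder origami in the stratum
`H(α₁, …, α_{p+2q})`: the product of the shifted block permutations of the even blocks for
`α₁, …, α_p` followed by the blocks for the pairs `(α_{p+1}, α_{p+2}), …`. -/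
def sigmaB (L : ℕ) (hL : 0 < L) (p q l : ℕ) (α : Fin (p + 2 * q) → ℕ) : Equiv.Perm (Fin L) :=
  ((List.range (p + q)).map (fun j =>
    if hj : j < p then
      evenBlock L hL (shift p q l α j) (α ⟨j, by omega⟩ / 2)
    else if hj' : j < p + q then
      oddBlock L hL (shift p q l α j)
        (α ⟨p + 2 * (j - p), by omega⟩ / 2) (α ⟨p + 2 * (j - p) + 1, by omega⟩ / 2)
    else 1)).prod

end Origami

namespace OP
open Origami Equiv List

section Fixed

variable {L : ℕ} (hL : 0 < L)

lemma mk_val {a : ℕ} (h : a < L) : (mkFin L hL a : ℕ) = a := Nat.mod_eq_of_lt h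

lemma mk_inj {a b : ℕ} (ha : a < L) (hb : b < L) (h : mkFin L hL a = mkFin L hL b) :
    a = b := by
  have := congrArg Fin.val h
  rwa [mk_val hL ha, mk_val hL hb] at this

lemma mk_mod (a : ℕ) : mkFin L hL (a % L) = mkFin L hL a := by
  apply Fin.ext; simp [mkFin, Nat.mod_mod]

lemma swap_mk_left (a b : ℕ) :
    Equiv.swap (mkFin L hL a) (mkFin L hL b) (mkFin L hL a) = mkFin L hL b :=
  Equiv.swap_apply_left _ _

lemma swap_mk_right (a b : ℕ) :
    Equiv.swap (mkFin L hL a) (mkFin L hL b) (mkFin L hL b) = mkFin L hL a :=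
  Equiv.swap_apply_right _ _

lemma swap_mk_other {a b x : ℕ} (ha : a < L) (hb : b < L) (hx : x < L)
    (h1 : x ≠ a) (h2 : x ≠ b) :
    Equiv.swap (mkFin L hL a) (mkFin L hL b) (mkFin L hL x) = mkFin L hL x :=
  Equiv.swap_apply_of_ne_of_ne (fun h => h1 (mk_inj hL hx ha h))
    (fun h => h2 (mk_inj hL hx hb h))

lemma tcyc_apply {a : ℕ} (h : a + 2 < L) (x : ℕ) (hx : x < L) :
    tcyc L hL a (a+1) (a+2) (mkFin L hL x) =
      mkFin L hL (if x = a then a+1 else if x = a+1 then a+2 else if x = a+2 then a else x) := by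
  have ha : a < L := by omega
  have ha1 : a + 1 < L := by omega
  rcases eq_or_ne x a with rfl | h0
  · rw [if_pos rfl, tcyc, Perm.mul_apply,
      swap_mk_other hL ha1 h (by omega) (by omega) (by omega), swap_mk_left]
  rcases eq_or_ne x (a+1) with rfl | h1
  · rw [if_neg h0, if_pos rfl, tcyc, Perm.mul_apply, swap_mk_left,
      swap_mk_other hL ha ha1 h (by omega) (by omega)]
  rcases eq_or_ne x (a+2) with rfl | h2
  · rw [if_neg h0, if_neg h1, if_pos rfl, tcyc, Perm.mul_apply, swap_mk_right, swap_mk_right]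
  · rw [if_neg h0, if_neg h1, if_neg h2, tcyc, Perm.mul_apply,
      swap_mk_other hL ha1 h hx h1 h2, swap_mk_other hL ha ha1 hx h0 h1]

lemma fcyc_apply {m : ℕ} (h : m + 4 < L) (x : ℕ) (hx : x < L) :
    fcyc L hL m (m+4) (m+1) (m+2) (m+3) (mkFin L hL x) =
      mkFin L hL (if x = m then m+4 else if x = m+1 then m+2 else if x = m+2 then m+3
        else if x = m+3 then m else if x = m+4 then m+1 else x) := by
  have h0 : m < L := by omega
  have h1 : m + 1 < L := by omega
  have h2 : m + 2 < L := by omega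
  have h3 : m + 3 < L := by omega
  rw [fcyc, Perm.mul_apply, Perm.mul_apply, Perm.mul_apply]
  rcases eq_or_ne x m with rfl | e0
  · rw [if_pos rfl, swap_mk_other hL h2 h3 h0 (by omega) (by omega),
      swap_mk_other hL h1 h2 h0 (by omega) (by omega),
      swap_mk_other hL h h1 h0 (by omega) (by omega), swap_mk_left]
  rcases eq_or_ne x (m+1) with rfl | e1
  · rw [if_neg e0, if_pos rfl, swap_mk_other hL h2 h3 h1 (by omega) (by omega),
      swap_mk_left, swap_mk_other hL h h1 h2 (by omega) (by omega),
      swap_mk_other hL h0 h h2 (by omega) (by omega)]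
  rcases eq_or_ne x (m+2) with rfl | e2
  · rw [if_neg e0, if_neg e1, if_pos rfl, swap_mk_left,
      swap_mk_other hL h1 h2 h3 (by omega) (by omega),
      swap_mk_other hL h h1 h3 (by omega) (by omega),
      swap_mk_other hL h0 h h3 (by omega) (by omega)]
  rcases eq_or_ne x (m+3) with rfl | e3
  · rw [if_neg e0, if_neg e1, if_neg e2, if_pos rfl, swap_mk_right, swap_mk_right,
      swap_mk_right, swap_mk_right]
  rcases eq_or_ne x (m+4) with rfl | e4
  · rw [if_neg e0, if_neg e1, if_neg e2, if_neg e3, if_pos rfl,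
      swap_mk_other hL h2 h3 h (by omega) (by omega),
      swap_mk_other hL h1 h2 h (by omega) (by omega), swap_mk_left,
      swap_mk_other hL h0 h h1 (by omega) (by omega)]
  · rw [if_neg e0, if_neg e1, if_neg e2, if_neg e3, if_neg e4,
      swap_mk_other hL h2 h3 hx e2 e3, swap_mk_other hL h1 h2 hx e1 e2,
      swap_mk_other hL h h1 hx e4 e1, swap_mk_other hL h0 h hx e0 e4]

/-- The action of an even block on the triple region, as a function on `ℕ`. -/
def ebF (S x : ℕ) : ℕ := if (x - S) % 3 = 2 then x - 2 else x + 1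

/-- The action of `evenBlock S k` as a function on `ℕ`. -/
def evF (S k x : ℕ) : ℕ := if S ≤ x ∧ x < S + 3*k then ebF S x else x

/-- The action of `oddBlock S k₁ k₂` as a function on `ℕ`. -/
def obF (S k₁ k₂ x : ℕ) : ℕ :=
  if x < S + 3*k₁ then evF S k₁ x
  else if x = S + 3*k₁ then S + 3*k₁ + 4
  else if x = S + 3*k₁ + 1 then S + 3*k₁ + 2
  else if x = S + 3*k₁ + 2 then S + 3*k₁ + 3
  else if x = S + 3*k₁ + 3 then S + 3*k₁
  else if x = S + 3*k₁ + 4 then S + 3*k₁ + 1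
  else evF (S + 3*k₁ + 5) k₂ x

lemma evF_lt {S k x : ℕ} (h : x < S + 3*k → x + 1 ≤ S + 3*k ∨ True) (hx : x < L)
    (hb : S + 3*k ≤ L) : evF S k x < L := by
  unfold evF ebF; split_ifs <;> omega

lemma evenBlock_zero (S : ℕ) : evenBlock L hL S 0 = 1 := by
  simp [evenBlock]

lemma evenBlock_succ (S k : ℕ) :
    evenBlock L hL S (k+1) =
      evenBlock L hL S k * tcyc L hL (S+3*k) (S+3*k+1) (S+3*k+2) := by
  rw [evenBlock, evenBlock, range_succ, map_append, prod_append]; simp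

lemma evenBlock_apply {S k : ℕ} (hb : S + 3*k ≤ L) : ∀ {x : ℕ}, x < L →
    evenBlock L hL S k (mkFin L hL x) = mkFin L hL (evF S k x) := by
  induction k with
  | zero =>
    intro x hx
    rw [evenBlock_zero]
    rw [show evF S 0 x = x from by unfold evF; split_ifs <;> omega]; rfl
  | succ k ih =>
    intro x hx
    rw [evenBlock_succ, Perm.mul_apply, tcyc_apply hL (by omega) x hx]
    have hb' : S + 3*k ≤ L := by omega
    by_cases hc : S + 3*k ≤ x ∧ x < S + 3*k + 3
    · have hx3 : x = S+3*k ∨ x = S+3*k+1 ∨ x = S+3*k+2 := by omega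
      rcases hx3 with rfl | rfl | rfl
      · rw [if_pos rfl, ih hb' (by omega)]
        exact congrArg _ (by unfold evF ebF; split_ifs <;> omega)
      · rw [if_neg (by omega), if_pos rfl, ih hb' (by omega)]
        exact congrArg _ (by unfold evF ebF; split_ifs <;> omega)
      · rw [if_neg (by omega), if_neg (by omega), if_pos rfl, ih hb' (by omega)]
        exact congrArg _ (by unfold evF ebF; split_ifs <;> omega)
    · rw [if_neg (by omega), if_neg (by omega), if_neg (by omega), ih hb' hx]
      exact congrArg _ (by unfold evF ebF; split_ifs <;> first | rfl | omega)

lemma evF_fix {S k y : ℕ} (h : y < S ∨ S + 3*k ≤ y) : evF S k y = y := by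
  unfold evF; rw [if_neg (by omega)]

lemma evF_in {S k y : ℕ} (h1 : S ≤ y) (h2 : y < S + 3*k) : evF S k y = ebF S y := by
  unfold evF; rw [if_pos ⟨h1, h2⟩]

lemma ebF_bounds {S k y : ℕ} (h1 : S ≤ y) (h2 : y < S + 3*k) :
    S ≤ ebF S y ∧ ebF S y < S + 3*k := by
  unfold ebF; split_ifs <;> omega

section obFcomp
variable {S k₁ k₂ x : ℕ}

lemma obF_below (h : x < S) : obF S k₁ k₂ x = x := by
  unfold obF; rw [if_pos (by omega)]; exact evF_fix (Or.inl h)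

lemma obF_low (h1 : S ≤ x) (h2 : x < S + 3*k₁) : obF S k₁ k₂ x = ebF S x := by
  unfold obF; rw [if_pos h2]; exact evF_in h1 h2

lemma obF_m0 : obF S k₁ k₂ (S + 3*k₁) = S + 3*k₁ + 4 := by
  unfold obF; rw [if_neg (by omega), if_pos rfl]

lemma obF_m1 : obF S k₁ k₂ (S + 3*k₁ + 1) = S + 3*k₁ + 2 := by
  unfold obF; rw [if_neg (by omega), if_neg (by omega), if_pos rfl]

lemma obF_m2 : obF S k₁ k₂ (S + 3*k₁ + 2) = S + 3*k₁ + 3 := by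
  unfold obF; rw [if_neg (by omega), if_neg (by omega), if_neg (by omega), if_pos rfl]

lemma obF_m3 : obF S k₁ k₂ (S + 3*k₁ + 3) = S + 3*k₁ := by
  unfold obF
  rw [if_neg (by omega), if_neg (by omega), if_neg (by omega), if_neg (by omega), if_pos rfl]

lemma obF_m4 : obF S k₁ k₂ (S + 3*k₁ + 4) = S + 3*k₁ + 1 := by
  unfold obF
  rw [if_neg (by omega), if_neg (by omega), if_neg (by omega), if_neg (by omega),
    if_neg (by omega), if_pos rfl]

lemma obF_mid (h1 : S + 3*k₁ + 5 ≤ x) (h2 : x < S + 3*k₁ + 5 + 3*k₂) :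
    obF S k₁ k₂ x = ebF (S + 3*k₁ + 5) x := by
  unfold obF
  rw [if_neg (by omega), if_neg (by omega), if_neg (by omega), if_neg (by omega),
    if_neg (by omega), if_neg (by omega)]
  exact evF_in h1 h2

lemma obF_high (h : S + 3*k₁ + 5 + 3*k₂ ≤ x) : obF S k₁ k₂ x = x := by
  unfold obF
  rw [if_neg (by omega), if_neg (by omega), if_neg (by omega), if_neg (by omega),
    if_neg (by omega), if_neg (by omega)]
  exact evF_fix (Or.inr (by omega))

end obFcomp

lemma oddBlock_apply {S k₁ k₂ : ℕ} (hb : S + 3*k₁ + 3*k₂ + 5 ≤ L) {x : ℕ} (hx : x < L) :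
    oddBlock L hL S k₁ k₂ (mkFin L hL x) = mkFin L hL (obF S k₁ k₂ x) := by
  have hb1 : S + 3*k₁ ≤ L := by omega
  have hb2 : (S + 3*k₁ + 5) + 3*k₂ ≤ L := by omega
  have hm : S + 3*k₁ + 4 < L := by omega
  rw [oddBlock, Perm.mul_apply, Perm.mul_apply, evenBlock_apply hL hb2 hx]
  have hx1 : evF (S + 3*k₁ + 5) k₂ x < L := by unfold evF ebF; split_ifs <;> omega
  rw [fcyc_apply hL hm _ hx1]
  by_cases hc : S + 3*k₁ + 5 ≤ x ∧ x < S + 3*k₁ + 5 + 3*k₂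
  · -- x in the second triples region
    rw [evF_in hc.1 hc.2]
    have hbnd := ebF_bounds (k := k₂) hc.1 hc.2
    rw [if_neg (by omega), if_neg (by omega), if_neg (by omega), if_neg (by omega),
      if_neg (by omega), evenBlock_apply hL hb1 (by omega),
      evF_fix (Or.inr (by omega)), obF_mid hc.1 hc.2]
  · rw [evF_fix (by omega)]
    by_cases hc2 : S + 3*k₁ ≤ x ∧ x ≤ S + 3*k₁ + 4
    · have fixk1 : ∀ y, S + 3*k₁ ≤ y → y < L →
          evenBlock L hL S k₁ (mkFin L hL y) = mkFin L hL y := by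
        intro y hy hyL
        rw [evenBlock_apply hL hb1 hyL, evF_fix (Or.inr hy)]
      have hx5 : x = S+3*k₁ ∨ x = S+3*k₁+1 ∨ x = S+3*k₁+2 ∨ x = S+3*k₁+3 ∨
          x = S+3*k₁+4 := by omega
      rcases hx5 with rfl | rfl | rfl | rfl | rfl
      · rw [if_pos rfl, fixk1 _ (by omega) (by omega), obF_m0]
      · rw [if_neg (by omega), if_pos rfl, fixk1 _ (by omega) (by omega), obF_m1]
      · rw [if_neg (by omega), if_neg (by omega), if_pos rfl,
          fixk1 _ (by omega) (by omega), obF_m2]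
      · rw [if_neg (by omega), if_neg (by omega), if_neg (by omega), if_pos rfl,
          fixk1 _ (by omega) (by omega), obF_m3]
      · rw [if_neg (by omega), if_neg (by omega), if_neg (by omega), if_neg (by omega),
          if_pos rfl, fixk1 _ (by omega) (by omega), obF_m4]
    · -- x < S+3k₁ or x ≥ S+3k₁+5+3k₂
      rw [if_neg (by omega), if_neg (by omega), if_neg (by omega), if_neg (by omega),
        if_neg (by omega), evenBlock_apply hL hb1 hx]
      rcases Nat.lt_or_ge x S with h | h
      · rw [evF_fix (Or.inl h), obF_below h]
      rcases Nat.lt_or_ge x (S + 3*k₁) with h2 | h2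
      · rw [evF_in h h2, obF_low h h2]
      · rw [evF_fix (Or.inr h2), obF_high (by omega)]

end Fixed

lemma pair_sum (g : ℕ → ℕ) (p : ℕ) : ∀ n : ℕ,
    ∑ t ∈ Finset.range n, (g (p+2*t) + g (p+2*t+1)) = ∑ i ∈ Finset.Ico p (p+2*n), g i := by
  intro n
  induction n with
  | zero => simp
  | succ n ih =>
    rw [Finset.sum_range_succ, ih, show p + 2*(n+1) = (p+2*n+1)+1 by ring,
      Finset.sum_Ico_succ_top (by omega), Finset.sum_Ico_succ_top (by omega)]
    omega

section Main

variable (p q l : ℕ) (α : Fin (p + 2 * q) → ℕ)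

/-- Half of `α i`, as a function on `ℕ`. -/
def kOf (i : ℕ) : ℕ := if h : i < p + 2*q then α ⟨i, h⟩ / 2 else 0

/-- The length of the trailing fixed part of the `j`-th block. -/
def eOf (j : ℕ) : ℕ := if j = p + q - 1 then l else 1

lemma eOf_pos (hl : 1 ≤ l) (j : ℕ) : 1 ≤ eOf p q l j := by
  unfold eOf; split_ifs <;> omega

lemma kOf_pos (hEven : ∀ i : Fin (p + 2 * q), (i : ℕ) < p → Even (α i) ∧ 0 < α i)
    {j : ℕ} (hj : j < p) : 1 ≤ kOf p q α j := by
  have h : j < p + 2*q := by omega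
  obtain ⟨he, hp⟩ := hEven ⟨j, h⟩ hj
  obtain ⟨c, hc⟩ := he
  unfold kOf; rw [dif_pos h]; omega

lemma width_even {j : ℕ} (hj : j < p) :
    width p q l α j = 3 * kOf p q α j + eOf p q l j := by
  unfold width kOf eOf
  rw [dif_pos hj, dif_pos (by omega : j < p + 2*q)]
  congr 1
  split_ifs <;> omega

lemma width_odd {j : ℕ} (hj1 : p ≤ j) (hj2 : j < p + q) :
    width p q l α j =
      3 * kOf p q α (p + 2*(j-p)) + 3 * kOf p q α (p + 2*(j-p)+1) + 5 + eOf p q l j := by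
  unfold width kOf eOf
  rw [dif_neg (by omega), dif_pos hj2, dif_pos (by omega : p + 2*(j-p) < p + 2*q),
    dif_pos (by omega : p + 2*(j-p)+1 < p + 2*q)]
  split_ifs <;> omega

lemma width_pos (hl : 1 ≤ l) (hEven : ∀ i : Fin (p + 2 * q), (i : ℕ) < p → Even (α i) ∧ 0 < α i)
    {j : ℕ} (hj : j < p + q) : 1 ≤ width p q l α j := by
  rcases Nat.lt_or_ge j p with h | h
  · rw [width_even p q l α h]
    have := eOf_pos p q l hl j
    omega
  · rw [width_odd p q l α h hj]; omega

lemma shift_zero : shift p q l α 0 = 0 := by simp [shift]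

lemma shift_succ (j : ℕ) : shift p q l α (j+1) = shift p q l α j + width p q l α j :=
  Finset.sum_range_succ _ _

lemma shift_mono {j j' : ℕ} (h : j ≤ j') : shift p q l α j ≤ shift p q l α j' := by
  unfold shift
  exact Finset.sum_le_sum_of_subset (Finset.range_subset_range.2 h)

lemma alpha_sum
    (hEven : ∀ i : Fin (p + 2 * q), (i : ℕ) < p → Even (α i) ∧ 0 < α i)
    (hOdd : ∀ i : Fin (p + 2 * q), p ≤ (i : ℕ) → Odd (α i) ∧ 0 < α i) : ∑ i, α i = 2 * (∑ i ∈ Finset.range (p+2*q), kOf p q α i) + 2*q := by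
  have h1 : ∀ i : Fin (p + 2*q), α i = 2 * kOf p q α ↑i + (if p ≤ (i:ℕ) then 1 else 0) := by
    intro i
    unfold kOf
    rw [dif_pos i.isLt, Fin.eta]
    rcases Nat.lt_or_ge (i : ℕ) p with h | h
    · obtain ⟨c, hc⟩ := (hEven i h).1
      rw [if_neg (by omega)]; omega
    · obtain ⟨c, hc⟩ := (hOdd i h).1
      rw [if_pos h]; omega
  calc ∑ i, α i = ∑ i : Fin (p+2*q), (2 * kOf p q α ↑i + (if p ≤ (i:ℕ) then 1 else 0)) :=
        Finset.sum_congr rfl (fun i _ => h1 i)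
    _ = ∑ i ∈ Finset.range (p+2*q), (2 * kOf p q α i + (if p ≤ i then 1 else 0)) :=
        Fin.sum_univ_eq_sum_range (fun i => 2 * kOf p q α i + if p ≤ i then 1 else 0) (p+2*q)
    _ = 2 * (∑ i ∈ Finset.range (p+2*q), kOf p q α i) + 2*q := by
        rw [Finset.sum_add_distrib, ← Finset.mul_sum]
        congr 1
        rw [Finset.range_eq_Ico, ← Finset.sum_Ico_consecutive _ (Nat.zero_le p) (by omega)]
        rw [Finset.sum_congr rfl (fun i hi => if_neg (by
          simp only [Finset.mem_Ico] at hi; omega)),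
          Finset.sum_congr (rfl : Finset.Ico p (p+2*q) = _) (fun i hi => if_pos (by
          simp only [Finset.mem_Ico] at hi; omega))]
        simp only [Finset.sum_const, Nat.card_Ico, smul_eq_mul, mul_one, mul_zero]
        omega

lemma K_ge_p (hEven : ∀ i : Fin (p + 2 * q), (i : ℕ) < p → Even (α i) ∧ 0 < α i) :
    p ≤ ∑ i ∈ Finset.range (p+2*q), kOf p q α i := by
  calc p = ∑ _i ∈ Finset.range p, 1 := by simp
    _ ≤ ∑ i ∈ Finset.range p, kOf p q α i :=
        Finset.sum_le_sum (fun i hi => kOf_pos p q α hEven (Finset.mem_range.1 hi))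
    _ ≤ ∑ i ∈ Finset.range (p+2*q), kOf p q α i :=
        Finset.sum_le_sum_of_subset (Finset.range_subset_range.2 (by omega))

lemma L_form
    (hEven : ∀ i : Fin (p + 2 * q), (i : ℕ) < p → Even (α i) ∧ 0 < α i)
    (hOdd : ∀ i : Fin (p + 2 * q), p ≤ (i : ℕ) → Odd (α i) ∧ 0 < α i)
    (L : ℕ) (hLdef : L = 3 * (∑ i, α i) / 2 + p + 3 * q + l - 1) : L = 3 * (∑ i ∈ Finset.range (p+2*q), kOf p q α i) + p + 6*q + l - 1 := by
  rw [hLdef, alpha_sum p q α hEven hOdd]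
  omega

lemma L_ge (hl : 1 ≤ l) (hpq : q = 0 → 1 ≤ p)
    (hEven : ∀ i : Fin (p + 2 * q), (i : ℕ) < p → Even (α i) ∧ 0 < α i)
    (hOdd : ∀ i : Fin (p + 2 * q), p ≤ (i : ℕ) → Odd (α i) ∧ 0 < α i)
    (L : ℕ) (hLdef : L = 3 * (∑ i, α i) / 2 + p + 3 * q + l - 1) : 4*q + 2 ≤ L := by
  rw [L_form p q l α hEven hOdd L hLdef]
  have hK := K_ge_p p q α hEven
  rcases Nat.eq_zero_or_pos q with rfl | hq
  · have := hpq rfl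
    omega
  · omega

lemma shift_total (hl : 1 ≤ l) (hpq : q = 0 → 1 ≤ p)
    (hEven : ∀ i : Fin (p + 2 * q), (i : ℕ) < p → Even (α i) ∧ 0 < α i)
    (hOdd : ∀ i : Fin (p + 2 * q), p ≤ (i : ℕ) → Odd (α i) ∧ 0 < α i)
    (L : ℕ) (hLdef : L = 3 * (∑ i, α i) / 2 + p + 3 * q + l - 1) :
    shift p q l α (p+q) = L := by
  have hpq1 : 1 ≤ p + q := by
    rcases Nat.eq_zero_or_pos q with rfl | hq
    · have := hpq rfl; omega
    · omega
  have heS : ∑ j ∈ Finset.range (p+q), eOf p q l j = (p + q - 1) + l := by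
    obtain ⟨n, hn⟩ : ∃ n, p + q = n + 1 := ⟨p+q-1, by omega⟩
    rw [hn, Finset.sum_range_succ]
    have h2 : eOf p q l n = l := by unfold eOf; rw [if_pos (by omega)]
    have h1 : ∀ j ∈ Finset.range n, eOf p q l j = 1 := by
      intro j hj; simp only [Finset.mem_range] at hj
      unfold eOf; rw [if_neg (by omega)]
    rw [Finset.sum_congr rfl h1, h2, Finset.sum_const, Finset.card_range, smul_eq_mul,
      mul_one]
    omega
  have hsplit : shift p q l α (p+q) =
      ∑ j ∈ Finset.range p, width p q l α j + ∑ j ∈ Finset.Ico p (p+q), width p q l α j := by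
    unfold shift
    rw [Finset.sum_range_add_sum_Ico _ (by omega : p ≤ p + q)]
  have h1 : ∑ j ∈ Finset.range p, width p q l α j =
      3 * (∑ j ∈ Finset.range p, kOf p q α j) + ∑ j ∈ Finset.range p, eOf p q l j := by
    rw [Finset.sum_congr rfl (fun j hj => width_even p q l α (Finset.mem_range.1 hj)),
      Finset.sum_add_distrib, Finset.mul_sum]
  have h2 : ∑ j ∈ Finset.Ico p (p+q), width p q l α j =
      3 * (∑ i ∈ Finset.Ico p (p+2*q), kOf p q α i) + 5*q
        + ∑ t ∈ Finset.range q, eOf p q l (p+t) := by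
    rw [Finset.sum_Ico_eq_sum_range]
    simp only [Nat.add_sub_cancel_left]
    have : ∀ t ∈ Finset.range q, width p q l α (p+t) =
        3 * kOf p q α (p + 2*t) + 3 * kOf p q α (p + 2*t+1) + 5 + eOf p q l (p+t) := by
      intro t ht
      rw [width_odd p q l α (by omega) (by simp only [Finset.mem_range] at ht; omega)]
      simp only [Nat.add_sub_cancel_left]
    rw [Finset.sum_congr rfl this]
    rw [show (∀ t, 3 * kOf p q α (p + 2*t) + 3 * kOf p q α (p + 2*t+1) + 5 + eOf p q l (p+t)
      = 3 * (kOf p q α (p + 2*t) + kOf p q α (p + 2*t+1)) + 5 + eOf p q l (p+t)) →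
      (∑ t ∈ Finset.range q, (3 * kOf p q α (p + 2*t) + 3 * kOf p q α (p + 2*t+1) + 5
        + eOf p q l (p+t))) = ∑ t ∈ Finset.range q, (3 * (kOf p q α (p + 2*t)
        + kOf p q α (p + 2*t+1)) + 5 + eOf p q l (p+t)) from
      fun h => Finset.sum_congr rfl (fun t _ => h t) ]
    · rw [Finset.sum_add_distrib, Finset.sum_add_distrib, ← Finset.mul_sum, pair_sum,
        Finset.sum_const, Finset.card_range, smul_eq_mul]
      omega
    · intro t; ring
  have heS2 : ∑ j ∈ Finset.range p, eOf p q l j + ∑ t ∈ Finset.range q, eOf p q l (p+t) =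
      (p + q - 1) + l := by
    rw [← heS, ← Finset.sum_range_add_sum_Ico _ (by omega : p ≤ p + q),
      Finset.sum_Ico_eq_sum_range]
    simp only [Nat.add_sub_cancel_left]
  have hKsplit : ∑ j ∈ Finset.range p, kOf p q α j + ∑ i ∈ Finset.Ico p (p+2*q), kOf p q α i
      = ∑ i ∈ Finset.range (p+2*q), kOf p q α i := by
    rw [Finset.sum_range_add_sum_Ico _ (by omega : p ≤ p + 2*q)]
  rw [L_form p q l α hEven hOdd L hLdef, hsplit, h1, h2]
  omega

end Main

/-- Bundle of the hypotheses of the main theorem. -/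
structure Hyp (p q l : ℕ) (α : Fin (p + 2 * q) → ℕ) (L : ℕ) : Prop where
  hl : 1 ≤ l
  hpq : q = 0 → 1 ≤ p
  hEven : ∀ i : Fin (p + 2 * q), (i : ℕ) < p → Even (α i) ∧ 0 < α i
  hOdd : ∀ i : Fin (p + 2 * q), p ≤ (i : ℕ) → Odd (α i) ∧ 0 < α i
  hLdef : L = 3 * (∑ i, α i) / 2 + p + 3 * q + l - 1

section Main2

variable {p q l : ℕ} {α : Fin (p + 2 * q) → ℕ} {L : ℕ}

/-- The factor of `sigmaB` for block `j` (the same lambda as in `sigmaB`). -/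
def fbP (p q l : ℕ) (α : Fin (p + 2 * q) → ℕ) (L : ℕ) (hL : 0 < L) (j : ℕ) :
    Equiv.Perm (Fin L) :=
  if hj : j < p then
    evenBlock L hL (shift p q l α j) (α ⟨j, by omega⟩ / 2)
  else if hj' : j < p + q then
    oddBlock L hL (shift p q l α j)
      (α ⟨p + 2 * (j - p), by omega⟩ / 2) (α ⟨p + 2 * (j - p) + 1, by omega⟩ / 2)
  else 1

lemma sigmaB_eq (hL : 0 < L) :
    sigmaB L hL p q l α = ((List.range (p+q)).map (fbP p q l α L hL)).prod := rfl

/-- The action of `sigmaB` on block `j`, as a function on `ℕ`. -/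
def bF (p q l : ℕ) (α : Fin (p + 2 * q) → ℕ) (j x : ℕ) : ℕ :=
  if j < p then evF (shift p q l α j) (kOf p q α j) x
  else obF (shift p q l α j) (kOf p q α (p+2*(j-p))) (kOf p q α (p+2*(j-p)+1)) x

variable (H : Hyp p q l α L)
include H

lemma bound_even {j : ℕ} (hj : j < p) :
    shift p q l α j + 3 * kOf p q α j + 1 ≤ shift p q l α (j+1) := by
  rw [shift_succ, width_even p q l α hj]
  have := eOf_pos p q l H.hl j; omega

lemma bound_odd {j : ℕ} (hj1 : p ≤ j) (hj2 : j < p + q) :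
    shift p q l α j + 3 * kOf p q α (p+2*(j-p)) + 3 * kOf p q α (p+2*(j-p)+1) + 6
      ≤ shift p q l α (j+1) := by
  rw [shift_succ, width_odd p q l α hj1 hj2]
  have := eOf_pos p q l H.hl j; omega

lemma shift_total' : shift p q l α (p+q) = L :=
  shift_total p q l α H.hl H.hpq H.hEven H.hOdd L H.hLdef

lemma shift_le_L {j : ℕ} (hj : j ≤ p + q) : shift p q l α j ≤ L := by
  rw [← shift_total' H]
  exact shift_mono p q l α hj

lemma fb_apply (hL : 0 < L) {j : ℕ} (hj : j < p + q) {x : ℕ} (hx : x < L) :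
    fbP p q l α L hL j (mkFin L hL x) = mkFin L hL (bF p q l α j x) := by
  have hsL : shift p q l α (j+1) ≤ L := shift_le_L H (by omega)
  unfold bF
  rcases Nat.lt_or_ge j p with h | h
  · have e1 : fbP p q l α L hL j = evenBlock L hL (shift p q l α j) (α ⟨j, by omega⟩ / 2) := by
      unfold fbP; exact dif_pos h
    rw [e1, if_pos h]
    have hk : α ⟨j, by omega⟩ / 2 = kOf p q α j := by
      unfold kOf; rw [dif_pos (by omega : j < p + 2*q)]
    rw [hk]
    have := bound_even H h
    exact evenBlock_apply hL (by omega) hx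
  · have e1 : fbP p q l α L hL j = oddBlock L hL (shift p q l α j)
        (α ⟨p + 2 * (j - p), by omega⟩ / 2) (α ⟨p + 2 * (j - p) + 1, by omega⟩ / 2) := by
      unfold fbP; exact ((dif_neg (by omega)).trans (dif_pos hj))
    rw [e1, if_neg (by omega)]
    have hk1 : α ⟨p + 2*(j-p), by omega⟩ / 2 = kOf p q α (p+2*(j-p)) := by
      unfold kOf; rw [dif_pos (by omega : p + 2*(j-p) < p + 2*q)]
    have hk2 : α ⟨p + 2*(j-p)+1, by omega⟩ / 2 = kOf p q α (p+2*(j-p)+1) := by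
      unfold kOf; rw [dif_pos (by omega : p + 2*(j-p)+1 < p + 2*q)]
    rw [hk1, hk2]
    have := bound_odd H h hj
    exact oddBlock_apply hL (by omega) hx

lemma bF_mem {j x : ℕ} (hj : j < p + q) (h1 : shift p q l α j ≤ x)
    (h2 : x < shift p q l α (j+1)) :
    shift p q l α j ≤ bF p q l α j x ∧ bF p q l α j x < shift p q l α (j+1) := by
  unfold bF
  rcases Nat.lt_or_ge j p with h | h
  · rw [if_pos h]
    have hb := bound_even H h
    rcases Nat.lt_or_ge x (shift p q l α j + 3 * kOf p q α j) with h3 | h3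
    · rw [evF_in h1 h3]
      have := ebF_bounds h1 h3
      omega
    · rw [evF_fix (Or.inr h3)]; omega
  · rw [if_neg (by omega)]
    have hb := bound_odd H h hj
    rcases Nat.lt_or_ge x (shift p q l α j + 3*kOf p q α (p+2*(j-p))) with h3 | h3
    · rw [obF_low h1 h3]
      have := ebF_bounds h1 h3
      omega
    rcases Nat.lt_or_ge x (shift p q l α j + 3*kOf p q α (p+2*(j-p)) + 5) with h4 | h4
    · have h5 : x = shift p q l α j + 3*kOf p q α (p+2*(j-p)) ∨
          x = shift p q l α j + 3*kOf p q α (p+2*(j-p)) + 1 ∨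
          x = shift p q l α j + 3*kOf p q α (p+2*(j-p)) + 2 ∨
          x = shift p q l α j + 3*kOf p q α (p+2*(j-p)) + 3 ∨
          x = shift p q l α j + 3*kOf p q α (p+2*(j-p)) + 4 := by omega
      rcases h5 with h5 | h5 | h5 | h5 | h5 <;> rw [h5]
      · rw [obF_m0]; omega
      · rw [obF_m1]; omega
      · rw [obF_m2]; omega
      · rw [obF_m3]; omega
      · rw [obF_m4]; omega
    rcases Nat.lt_or_ge x (shift p q l α j + 3*kOf p q α (p+2*(j-p)) + 5
        + 3*kOf p q α (p+2*(j-p)+1)) with h5 | h5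
    · rw [obF_mid h4 h5]
      have := ebF_bounds h4 h5
      omega
    · rw [obF_high h5]; omega

lemma bF_fix_beyond {n x : ℕ} (hn : n < p + q) (hx : shift p q l α (n+1) ≤ x) :
    bF p q l α n x = x := by
  unfold bF
  rcases Nat.lt_or_ge n p with h | h
  · rw [if_pos h]
    have hb := bound_even H h
    exact evF_fix (Or.inr (by omega))
  · rw [if_neg (by omega)]
    have hb := bound_odd H h hn
    exact obF_high (by omega)

lemma bF_fix_before {n x : ℕ} (hx : x < shift p q l α n) : bF p q l α n x = x := by
  unfold bF
  rcases Nat.lt_or_ge n p with h | h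
  · rw [if_pos h]; exact evF_fix (Or.inl hx)
  · rw [if_neg (by omega)]; exact obF_below hx

lemma PB_fix (hL : 0 < L) {n x : ℕ} (hn : n ≤ p + q) (hx : x < L)
    (hxs : shift p q l α n ≤ x) :
    ((List.range n).map (fbP p q l α L hL)).prod (mkFin L hL x) = mkFin L hL x := by
  induction n with
  | zero => simp
  | succ n ih =>
    rw [range_succ, map_append, prod_append]
    simp only [map_cons, map_nil, prod_cons, prod_nil, mul_one, Perm.mul_apply]
    rw [fb_apply H hL (by omega) hx, bF_fix_beyond H (by omega) hxs]
    exact ih (by omega) (le_trans (shift_mono p q l α (by omega)) hxs)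

lemma sigmaB_apply (hL : 0 < L) {j x : ℕ} (hj : j < p + q) (h1 : shift p q l α j ≤ x)
    (h2 : x < shift p q l α (j+1)) :
    sigmaB L hL p q l α (mkFin L hL x) = mkFin L hL (bF p q l α j x) := by
  have hj1L : shift p q l α (j+1) ≤ L := shift_le_L H (by omega)
  have hx : x < L := by omega
  have key : ∀ n, j < n → n ≤ p + q →
      ((List.range n).map (fbP p q l α L hL)).prod (mkFin L hL x)
        = mkFin L hL (bF p q l α j x) := by
    intro n
    induction n with
    | zero => omega
    | succ n ih =>
      intro hjn hn
      rw [range_succ, map_append, prod_append]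
      simp only [map_cons, map_nil, prod_cons, prod_nil, mul_one, Perm.mul_apply]
      rcases Nat.lt_or_ge j n with hlt | hge
      · rw [fb_apply H hL (by omega) hx,
          bF_fix_before H (lt_of_lt_of_le h2 (shift_mono p q l α (by omega : j+1 ≤ n)))]
        exact ih hlt (by omega)
      · have hjn' : j = n := by omega
        subst hjn'
        rw [fb_apply H hL (by omega) hx]
        have hmem := bF_mem H hj h1 h2
        exact PB_fix H hL (by omega) (by omega) hmem.1
  rw [sigmaB_eq]
  exact key (p+q) hj le_rfl


end Main2

section Lists

lemma flatMap_range_succ' {β : Type*} (f : ℕ → List β) (n : ℕ) :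
    (List.range (n+1)).flatMap f = (List.range n).flatMap f ++ f n := by
  simp [range_succ]

lemma range'_three (a : ℕ) : List.range' a 3 = [a, a+1, a+2] := by
  simp [List.range', Nat.add_assoc]

lemma range'_five (a : ℕ) : List.range' a 5 = [a, a+1, a+2, a+3, a+4] := by
  simp [List.range']

/-- The per-triple part of the trace list of the big cycle. -/
def triples (S k : ℕ) : List ℕ :=
  (List.range k).flatMap (fun i => [S+3*i+1, S+3*i, S+3*i+2])

/-- The trailing fixed part of the trace list. -/
def tailL (a e : ℕ) : List ℕ := (List.range e).map (a + ·)

lemma tailL_eq (a e : ℕ) : tailL a e = List.range' a e := by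
  rw [List.range'_eq_map_range]; rfl

lemma triples_perm (S k : ℕ) : (triples S k).Perm (List.range' S (3*k)) := by
  induction k with
  | zero => simp [triples]
  | succ k ih =>
    rw [triples, flatMap_range_succ']
    have h3 : List.range' S (3*k) ++ List.range' (S+3*k) 3 = List.range' S (3*(k+1)) := by
      have := List.range'_append (s := S) (m := 3*k) (n := 3) (step := 1)
      simp only [one_mul] at this
      rw [this]
      congr 1
    rw [← h3]
    refine List.Perm.append ih ?_
    rw [range'_three]
    exact List.Perm.swap _ _ _


/-- The trace list of the big cycle inside block `j`. -/
def blockL (p q l : ℕ) (α : Fin (p + 2 * q) → ℕ) (j : ℕ) : List ℕ :=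
  if j < p then
    triples (shift p q l α j) (kOf p q α j) ++
      tailL (shift p q l α j + 3 * kOf p q α j) (eOf p q l j)
  else
    triples (shift p q l α j) (kOf p q α (p+2*(j-p))) ++
      (shift p q l α j + 3 * kOf p q α (p+2*(j-p)) + 4) ::
      (triples (shift p q l α j + 3 * kOf p q α (p+2*(j-p)) + 5) (kOf p q α (p+2*(j-p)+1)) ++
       tailL (shift p q l α j + 3 * kOf p q α (p+2*(j-p)) + 5 + 3 * kOf p q α (p+2*(j-p)+1))
         (eOf p q l j))

/-- The trace list of the big cycle. -/
def bigL (p q l : ℕ) (α : Fin (p + 2 * q) → ℕ) : List ℕ :=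
  (List.range (p+q)).flatMap (blockL p q l α)

/-- The base point of the 5-cycle of the `t`-th odd block. -/
def mT (p q l : ℕ) (α : Fin (p + 2 * q) → ℕ) (t : ℕ) : ℕ :=
  shift p q l α (p+t) + 3 * kOf p q α (p+2*t)

/-- The four swapped points of the `t`-th odd block. -/
def quadL (p q l : ℕ) (α : Fin (p + 2 * q) → ℕ) (t : ℕ) : List ℕ :=
  [mT p q l α t, mT p q l α t + 1, mT p q l α t + 2, mT p q l α t + 3]

/-- All swapped points. -/
def swapsL (p q l : ℕ) (α : Fin (p + 2 * q) → ℕ) : List ℕ :=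
  (List.range q).flatMap (quadL p q l α)

section PermLemmas

variable {p q l : ℕ} {α : Fin (p + 2 * q) → ℕ} {L : ℕ}

lemma blockL_perm_even {j : ℕ} (hj : j < p) :
    (blockL p q l α j).Perm (List.range' (shift p q l α j) (width p q l α j)) := by
  rw [blockL, if_pos hj, width_even p q l α hj, tailL_eq]
  have h1 := List.range'_append (s := shift p q l α j) (m := 3 * kOf p q α j) (n := eOf p q l j) (step := 1)
  simp only [one_mul] at h1
  rw [Nat.add_comm (3 * kOf p q α j) (eOf p q l j)] at h1
  rw [show 3 * kOf p q α j + eOf p q l j = eOf p q l j + 3 * kOf p q α j from by omega, ← h1]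
  exact (triples_perm _ _).append (List.Perm.refl _)

lemma five_perm (m : ℕ) :
    ([m+4, m, m+1, m+2, m+3] : List ℕ).Perm (List.range' m 5) := by
  rw [range'_five]
  exact (List.perm_append_singleton (m+4) [m, m+1, m+2, m+3]).symm

lemma blockL_quad_perm_odd {j : ℕ} (hj1 : p ≤ j) (hj2 : j < p + q) :
    (blockL p q l α j ++ quadL p q l α (j-p)).Perm
      (List.range' (shift p q l α j) (width p q l α j)) := by
  have hm : mT p q l α (j-p) = shift p q l α j + 3 * kOf p q α (p+2*(j-p)) := by
    unfold mT; rw [show p + (j-p) = j from by omega]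
  rw [blockL, if_neg (by omega), width_odd p q l α hj1 hj2, tailL_eq]
  set S := shift p q l α j with hS
  set k₁ := kOf p q α (p+2*(j-p)) with hk1
  set k₂ := kOf p q α (p+2*(j-p)+1) with hk2
  set e := eOf p q l j with he
  set T1 := triples S k₁
  set T2 := triples (S + 3*k₁ + 5) k₂
  set E := List.range' (S + 3*k₁ + 5 + 3*k₂) e
  -- reassociate and move the quad next to the five-point
  have e0 : T1 ++ (S + 3*k₁ + 4) :: (T2 ++ E) ++ quadL p q l α (j-p)
      = T1 ++ ((S + 3*k₁ + 4) :: ((T2 ++ E) ++ quadL p q l α (j-p))) := by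
    simp [List.append_assoc]
  rw [e0]
  have p1 : ((T2 ++ E) ++ quadL p q l α (j-p)).Perm (quadL p q l α (j-p) ++ (T2 ++ E)) :=
    List.perm_append_comm
  have p2 : ((S + 3*k₁ + 4) :: ((T2 ++ E) ++ quadL p q l α (j-p))).Perm
      (((S + 3*k₁ + 4) :: quadL p q l α (j-p)) ++ (T2 ++ E)) := (p1.cons _)
  have p5 : ((S + 3*k₁ + 4) :: quadL p q l α (j-p)).Perm (List.range' (S + 3*k₁) 5) := by
    have : (S + 3*k₁ + 4) :: quadL p q l α (j-p)
        = [S+3*k₁+4, S+3*k₁, S+3*k₁+1, S+3*k₁+2, S+3*k₁+3] := by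
      simp [quadL, hm]
    rw [this]
    exact five_perm _
  have pT2 : (T2 ++ E).Perm (List.range' (S + 3*k₁ + 5) (3*k₂) ++ E) :=
    (triples_perm _ _).append (List.Perm.refl _)
  have hr1 : List.range' (S + 3*k₁ + 5) (3*k₂) ++ E = List.range' (S + 3*k₁ + 5) (e + 3*k₂) := by
    have h1 := List.range'_append (s := S + 3*k₁ + 5) (m := 3*k₂) (n := e) (step := 1)
    simp only [one_mul] at h1
    rw [Nat.add_comm (3*k₂) e] at h1
    rw [← h1]
  have hr2 : List.range' (S + 3*k₁) 5 ++ List.range' (S + 3*k₁ + 5) (e + 3*k₂)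
      = List.range' (S + 3*k₁) (e + 3*k₂ + 5) := by
    have h1 := List.range'_append (s := S + 3*k₁) (m := 5) (n := e + 3*k₂) (step := 1)
    simp only [one_mul] at h1
    rw [Nat.add_comm 5 (e + 3*k₂)] at h1
    rw [← h1]
  have hr3 : List.range' S (3*k₁) ++ List.range' (S + 3*k₁) (e + 3*k₂ + 5)
      = List.range' S (3 * k₁ + 3 * k₂ + 5 + e) := by
    have h1 := List.range'_append (s := S) (m := 3*k₁) (n := e + 3*k₂ + 5) (step := 1)
    simp only [one_mul] at h1
    rw [h1]
    congr 1
    omega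
  calc T1 ++ ((S + 3*k₁ + 4) :: ((T2 ++ E) ++ quadL p q l α (j-p)))
      ~ T1 ++ (((S + 3*k₁ + 4) :: quadL p q l α (j-p)) ++ (T2 ++ E)) := p2.append_left _
    _ ~ List.range' S (3*k₁) ++ (List.range' (S + 3*k₁) 5
          ++ (List.range' (S + 3*k₁ + 5) (3*k₂) ++ E)) :=
        (triples_perm _ _).append (p5.append pT2)
    _ = List.range' S (3 * k₁ + 3 * k₂ + 5 + e) := by rw [hr1, hr2, hr3]

lemma cover_aux (H : Hyp p q l α L) : ∀ n, n ≤ p + q →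
    ((List.range n).flatMap (blockL p q l α) ++
      (List.range (n-p)).flatMap (quadL p q l α)).Perm
      (List.range' 0 (shift p q l α n)) := by
  intro n
  induction n with
  | zero => simp [shift_zero]
  | succ n ih =>
    intro hn
    have ihn := ih (by omega)
    have hsh : List.range' 0 (shift p q l α n) ++ List.range' (shift p q l α n)
        (width p q l α n) = List.range' 0 (shift p q l α (n+1)) := by
      have h1 := List.range'_append (s := 0) (m := shift p q l α n) (n := width p q l α n) (step := 1)
      simp only [one_mul, Nat.zero_add] at h1
      rw [h1, shift_succ]
    rcases Nat.lt_or_ge n p with h | h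
    · rw [show n + 1 - p = 0 from by omega, flatMap_range_succ']
      rw [show n - p = 0 from by omega] at ihn
      simp only [List.range_zero, List.flatMap_nil, List.append_nil] at ihn ⊢
      calc ((List.range n).flatMap (blockL p q l α) ++ blockL p q l α n)
          ~ List.range' 0 (shift p q l α n) ++ List.range' (shift p q l α n)
              (width p q l α n) := ihn.append (blockL_perm_even h)
        _ = _ := hsh
    · rw [show n + 1 - p = (n - p) + 1 from by omega, flatMap_range_succ', flatMap_range_succ']
      have shuffle : ((List.range n).flatMap (blockL p q l α) ++ blockL p q l α n) ++
          ((List.range (n-p)).flatMap (quadL p q l α) ++ quadL p q l α (n-p)) ~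
          ((List.range n).flatMap (blockL p q l α) ++
            (List.range (n-p)).flatMap (quadL p q l α)) ++
          (blockL p q l α n ++ quadL p q l α (n-p)) := by
        set A := (List.range n).flatMap (blockL p q l α)
        set B := blockL p q l α n
        set C := (List.range (n-p)).flatMap (quadL p q l α)
        set D := quadL p q l α (n-p)
        calc (A ++ B) ++ (C ++ D) ~ A ++ (B ++ (C ++ D)) := by rw [List.append_assoc]
          _ ~ A ++ ((B ++ C) ++ D) := by rw [List.append_assoc]
          _ ~ A ++ ((C ++ B) ++ D) := ((List.perm_append_comm.append_right D).append_left A)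
          _ ~ A ++ (C ++ (B ++ D)) := by rw [List.append_assoc]
          _ ~ (A ++ C) ++ (B ++ D) := by rw [List.append_assoc]
      calc _ ~ _ := shuffle
        _ ~ List.range' 0 (shift p q l α n) ++ List.range' (shift p q l α n)
              (width p q l α n) := ihn.append (blockL_quad_perm_odd h (by omega))
        _ = _ := hsh

lemma cover (H : Hyp p q l α L) :
    (bigL p q l α ++ swapsL p q l α).Perm (List.range L) := by
  have h := cover_aux H (p+q) le_rfl
  rw [shift_total' H] at h
  rw [show p + q - p = q from by omega] at h
  rw [List.range_eq_range']
  exact h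

end PermLemmas
section ChainHelpers

variable {R : ℕ → ℕ → Prop}

lemma range'_chain : ∀ (a e : ℕ), (∀ u, a ≤ u → u + 1 < a + e → R u (u+1)) →
    List.IsChain R (List.range' a e) := by
  intro a e
  induction e generalizing a with
  | zero => intro _; simp
  | succ e ih =>
    intro h
    rw [List.range'_succ]
    cases e with
    | zero => simp
    | succ e2 =>
      rw [List.range'_succ]
      exact List.IsChain.cons_cons (h a le_rfl (by omega))
        (by rw [← List.range'_succ]; exact ih (a+1) (fun u h1 h2 => h u (by omega) (by omega)))

lemma range'_head? (a e : ℕ) (he : 0 < e) : (List.range' a e).head? = some a := by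
  cases e with
  | zero => omega
  | succ e => rw [List.range'_succ]; rfl

lemma range'_getLast? : ∀ (a e : ℕ), 0 < e → (List.range' a e).getLast? = some (a + e - 1) := by
  intro a e
  induction e generalizing a with
  | zero => omega
  | succ e ih =>
    intro _
    rw [List.range'_succ]
    cases e with
    | zero => rfl
    | succ e2 =>
      rw [List.range'_succ, List.getLast?_cons_cons, ← List.range'_succ, ih (a+1) (by omega)]
      congr 1
      omega

lemma triples_getLast? (S : ℕ) : ∀ (k : ℕ), 0 < k →
    (triples S k).getLast? = some (S + 3*(k-1) + 2) := by
  intro k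
  induction k with
  | zero => omega
  | succ k _ =>
    intro _
    rw [triples, flatMap_range_succ', List.getLast?_append]
    simp

lemma triples_chain (S k : ℕ)
    (h1 : ∀ i, i < k → R (S+3*i+1) (S+3*i))
    (h2 : ∀ i, i < k → R (S+3*i) (S+3*i+2))
    (h3 : ∀ i, i+1 < k → R (S+3*i+2) (S+3*(i+1)+1)) :
    List.IsChain R (triples S k) := by
  induction k with
  | zero => simp [triples]
  | succ k ih =>
    rw [triples, flatMap_range_succ', ← triples]
    rw [List.isChain_append]
    refine ⟨ih (fun i hi => h1 i (by omega)) (fun i hi => h2 i (by omega))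
      (fun i hi => h3 i (by omega)), ?_, ?_⟩
    · exact List.IsChain.cons_cons (h1 k (by omega)) (List.IsChain.cons_cons (h2 k (by omega)) (by simp))
    · intro x hx y hy
      simp only [List.head?_cons, Option.mem_def, Option.some.injEq] at hy
      subst hy
      cases k with
      | zero => simp [triples] at hx
      | succ k2 =>
        rw [triples_getLast? S (k2+1) (by omega)] at hx
        simp only [Option.mem_def, Option.some.injEq] at hx
        subst hx
        have := h3 k2 (by omega)
        simpa using this

lemma triples_head? (S : ℕ) : ∀ (k : ℕ), 0 < k → (triples S k).head? = some (S + 1) := by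
  intro k
  induction k with
  | zero => omega
  | succ k ih =>
    intro _
    rw [triples, flatMap_range_succ', List.head?_append]
    cases k with
    | zero => simp [triples]
    | succ k2 => rw [← triples, ih (by omega)]; rfl

end ChainHelpers
section Chains

variable {p q l : ℕ} {α : Fin (p + 2 * q) → ℕ} {L : ℕ}

/-- The step relation of `σ_b σ_a`: `b` is the image of `a`. -/
def stepR (p q l : ℕ) (α : Fin (p + 2 * q) → ℕ) (L : ℕ) (hL : 0 < L) (a b : ℕ) : Prop :=
  sigmaB L hL p q l α (mkFin L hL (a+1)) = mkFin L hL b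

lemma stepR_of (H : Hyp p q l α L) (hL : 0 < L) {j x b : ℕ} (hj : j < p + q)
    (h1 : shift p q l α j ≤ x + 1) (h2 : x + 1 < shift p q l α (j+1))
    (hb : bF p q l α j (x+1) = b) : stepR p q l α L hL x b := by
  unfold stepR
  rw [sigmaB_apply H hL hj h1 h2, hb]

section bFcomp
variable {j y : ℕ}

lemma bF_even_in (hjp : j < p) (hy1 : shift p q l α j ≤ y)
    (hy2 : y < shift p q l α j + 3 * kOf p q α j) :
    bF p q l α j y = ebF (shift p q l α j) y := by
  unfold bF; rw [if_pos hjp]; exact evF_in hy1 hy2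

lemma bF_even_fix (hjp : j < p) (hy : shift p q l α j + 3 * kOf p q α j ≤ y) :
    bF p q l α j y = y := by
  unfold bF; rw [if_pos hjp]; exact evF_fix (Or.inr hy)

lemma bF_odd_low (hjp : p ≤ j) (hy1 : shift p q l α j ≤ y)
    (hy2 : y < shift p q l α j + 3 * kOf p q α (p+2*(j-p))) :
    bF p q l α j y = ebF (shift p q l α j) y := by
  unfold bF; rw [if_neg (by omega)]; exact obF_low hy1 hy2

lemma bF_odd_m0 (hjp : p ≤ j) :
    bF p q l α j (shift p q l α j + 3 * kOf p q α (p+2*(j-p))) =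
      shift p q l α j + 3 * kOf p q α (p+2*(j-p)) + 4 := by
  unfold bF; rw [if_neg (by omega)]; exact obF_m0

lemma bF_odd_m1 (hjp : p ≤ j) :
    bF p q l α j (shift p q l α j + 3 * kOf p q α (p+2*(j-p)) + 1) =
      shift p q l α j + 3 * kOf p q α (p+2*(j-p)) + 2 := by
  unfold bF; rw [if_neg (by omega)]; exact obF_m1

lemma bF_odd_m2 (hjp : p ≤ j) :
    bF p q l α j (shift p q l α j + 3 * kOf p q α (p+2*(j-p)) + 2) =
      shift p q l α j + 3 * kOf p q α (p+2*(j-p)) + 3 := by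
  unfold bF; rw [if_neg (by omega)]; exact obF_m2

lemma bF_odd_m3 (hjp : p ≤ j) :
    bF p q l α j (shift p q l α j + 3 * kOf p q α (p+2*(j-p)) + 3) =
      shift p q l α j + 3 * kOf p q α (p+2*(j-p)) := by
  unfold bF; rw [if_neg (by omega)]; exact obF_m3

lemma bF_odd_m4 (hjp : p ≤ j) :
    bF p q l α j (shift p q l α j + 3 * kOf p q α (p+2*(j-p)) + 4) =
      shift p q l α j + 3 * kOf p q α (p+2*(j-p)) + 1 := by
  unfold bF; rw [if_neg (by omega)]; exact obF_m4

lemma bF_odd_mid (hjp : p ≤ j)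
    (hy1 : shift p q l α j + 3 * kOf p q α (p+2*(j-p)) + 5 ≤ y)
    (hy2 : y < shift p q l α j + 3 * kOf p q α (p+2*(j-p)) + 5 + 3 * kOf p q α (p+2*(j-p)+1)) :
    bF p q l α j y = ebF (shift p q l α j + 3 * kOf p q α (p+2*(j-p)) + 5) y := by
  unfold bF; rw [if_neg (by omega)]; exact obF_mid hy1 hy2

lemma bF_odd_high (hjp : p ≤ j)
    (hy : shift p q l α j + 3 * kOf p q α (p+2*(j-p)) + 5 + 3 * kOf p q α (p+2*(j-p)+1) ≤ y) :
    bF p q l α j y = y := by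
  unfold bF; rw [if_neg (by omega)]; exact obF_high hy

end bFcomp

/-- The head of the trace list of block `j`. -/
def hdB (p q l : ℕ) (α : Fin (p + 2 * q) → ℕ) (j : ℕ) : ℕ :=
  if j < p then shift p q l α j + 1
  else if kOf p q α (p+2*(j-p)) = 0 then shift p q l α j + 4 else shift p q l α j + 1

lemma blockL_head? (H : Hyp p q l α L) {j : ℕ} (hj : j < p + q) :
    (blockL p q l α j).head? = some (hdB p q l α j) := by
  unfold blockL hdB
  rcases Nat.lt_or_ge j p with h | h
  · rw [if_pos h, if_pos h, List.head?_append,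
      triples_head? _ _ (kOf_pos p q α H.hEven h)]
    rfl
  · rw [if_neg (by omega), if_neg (by omega)]
    rcases Nat.eq_zero_or_pos (kOf p q α (p+2*(j-p))) with h0 | h0
    · rw [if_pos h0, List.head?_append, h0]
      simp [triples]
    · rw [if_neg (by omega), List.head?_append, triples_head? _ _ h0]
      rfl

lemma blockL_getLast? (H : Hyp p q l α L) {j : ℕ} (hj : j < p + q) :
    (blockL p q l α j).getLast? = some (shift p q l α (j+1) - 1) := by
  have he := eOf_pos p q l H.hl j
  unfold blockL
  rcases Nat.lt_or_ge j p with h | h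
  · rw [if_pos h, List.getLast?_append, tailL_eq, range'_getLast? _ _ he]
    have hw : shift p q l α (j+1) = shift p q l α j + 3 * kOf p q α j + eOf p q l j := by
      rw [shift_succ, width_even p q l α h]; omega
    simp only [Option.or]
    congr 1
    omega
  · rw [if_neg (by omega)]
    have hw : shift p q l α (j+1) = shift p q l α j + 3 * kOf p q α (p+2*(j-p))
        + 3 * kOf p q α (p+2*(j-p)+1) + 5 + eOf p q l j := by
      rw [shift_succ, width_odd p q l α h hj]; omega
    rw [show (shift p q l α j + 3 * kOf p q α (p+2*(j-p)) + 4) ::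
        (triples (shift p q l α j + 3 * kOf p q α (p+2*(j-p)) + 5) (kOf p q α (p+2*(j-p)+1)) ++
         tailL (shift p q l α j + 3 * kOf p q α (p+2*(j-p)) + 5 + 3 * kOf p q α (p+2*(j-p)+1))
           (eOf p q l j)) =
        [shift p q l α j + 3 * kOf p q α (p+2*(j-p)) + 4] ++
        (triples (shift p q l α j + 3 * kOf p q α (p+2*(j-p)) + 5) (kOf p q α (p+2*(j-p)+1)) ++
         tailL (shift p q l α j + 3 * kOf p q α (p+2*(j-p)) + 5 + 3 * kOf p q α (p+2*(j-p)+1))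
           (eOf p q l j)) from rfl]
    rw [List.getLast?_append, List.getLast?_append, List.getLast?_append, tailL_eq,
      range'_getLast? _ _ he]
    simp only [Option.or]
    congr 1
    omega

lemma cross_val (H : Hyp p q l α L) {j : ℕ} (hj : j < p + q) :
    bF p q l α j (shift p q l α j) = hdB p q l α j := by
  unfold hdB
  rcases Nat.lt_or_ge j p with h | h
  · have hk := kOf_pos p q α H.hEven h
    rw [if_pos h, bF_even_in h le_rfl (by omega)]
    unfold ebF; split_ifs <;> omega
  · rw [if_neg (by omega)]
    rcases Nat.eq_zero_or_pos (kOf p q α (p+2*(j-p))) with h0 | h0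
    · rw [if_pos h0]
      have := bF_odd_m0 (α := α) (l := l) h (j := j)
      rw [h0] at this
      simpa using this
    · rw [if_neg (by omega), bF_odd_low h le_rfl (by omega)]
      unfold ebF; split_ifs <;> omega

lemma blockL_chain (H : Hyp p q l α L) (hL : 0 < L) {j : ℕ} (hj : j < p + q) :
    List.IsChain (stepR p q l α L hL) (blockL p q l α j) := by
  have he := eOf_pos p q l H.hl j
  unfold blockL
  rcases Nat.lt_or_ge j p with h | h
  · -- even block
    have hb := bound_even H h
    have hw : shift p q l α (j+1) = shift p q l α j + 3 * kOf p q α j + eOf p q l j := by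
      rw [shift_succ, width_even p q l α h]; omega
    have hk := kOf_pos p q α H.hEven h
    rw [if_pos h, List.isChain_append]
    refine ⟨?_, ?_, ?_⟩
    · apply triples_chain
      · intro i hi
        exact stepR_of H hL (j := j) hj (by omega) (by omega)
          (by rw [bF_even_in h (by omega) (by omega)]; unfold ebF; split_ifs <;> omega)
      · intro i hi
        exact stepR_of H hL (j := j) hj (by omega) (by omega)
          (by rw [bF_even_in h (by omega) (by omega)]; unfold ebF; split_ifs <;> omega)
      · intro i hi
        exact stepR_of H hL (j := j) hj (by omega) (by omega)
          (by rw [bF_even_in h (by omega) (by omega)]; unfold ebF; split_ifs <;> omega)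
    · rw [tailL_eq]
      apply range'_chain
      intro u hu1 hu2
      exact stepR_of H hL (j := j) hj (by omega) (by omega)
        (bF_even_fix h (by omega))
    · intro x hx y hy
      rw [triples_getLast? _ _ hk] at hx
      rw [tailL_eq, range'_head? _ _ he] at hy
      simp only [Option.mem_def, Option.some.injEq] at hx hy
      subst hx; subst hy
      exact stepR_of H hL (j := j) hj (by omega) (by omega)
        (by rw [show shift p q l α j + 3*(kOf p q α j - 1) + 2 + 1
              = shift p q l α j + 3 * kOf p q α j from by omega]
            exact bF_even_fix h le_rfl)
  · -- odd block
    have hb := bound_odd H h hj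
    have hw : shift p q l α (j+1) = shift p q l α j + 3 * kOf p q α (p+2*(j-p))
        + 3 * kOf p q α (p+2*(j-p)+1) + 5 + eOf p q l j := by
      rw [shift_succ, width_odd p q l α h hj]; omega
    set S := shift p q l α j with hS
    set k₁ := kOf p q α (p+2*(j-p)) with hk1
    set k₂ := kOf p q α (p+2*(j-p)+1) with hk2
    rw [if_neg (by omega), List.isChain_append]
    refine ⟨?_, ?_, ?_⟩
    · apply triples_chain
      · intro i hi
        exact stepR_of H hL (j := j) hj (by omega) (by omega)
          (by rw [bF_odd_low h (by omega) (by omega)]; unfold ebF; split_ifs <;> omega)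
      · intro i hi
        exact stepR_of H hL (j := j) hj (by omega) (by omega)
          (by rw [bF_odd_low h (by omega) (by omega)]; unfold ebF; split_ifs <;> omega)
      · intro i hi
        exact stepR_of H hL (j := j) hj (by omega) (by omega)
          (by rw [bF_odd_low h (by omega) (by omega)]; unfold ebF; split_ifs <;> omega)
    · rw [List.isChain_cons]
      refine ⟨?_, ?_⟩
      · intro y hy
        rw [List.head?_append] at hy
        rcases Nat.eq_zero_or_pos k₂ with h0 | h0
        · rw [show triples (S + 3*k₁ + 5) k₂ = [] from by rw [h0]; simp [triples]] at hy
          rw [tailL_eq, range'_head? _ _ he] at hy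
          simp only [List.head?_nil, Option.none_or, Option.mem_def, Option.some.injEq] at hy
          subst hy
          refine stepR_of H hL (j := j) hj (by omega) (by omega) ?_
          have h5 : bF p q l α j (S + 3*k₁ + 4 + 1) = S + 3*k₁ + 4 + 1 :=
            bF_odd_high h (by omega)
          rw [h5]; omega
        · rw [triples_head? _ _ h0] at hy
          simp only [Option.mem_def, Option.or, Option.some.injEq] at hy
          subst hy
          refine stepR_of H hL (j := j) hj (by omega) (by omega) ?_
          rw [show S + 3*k₁ + 4 + 1 = S + 3*k₁ + 5 from rfl,
            bF_odd_mid h le_rfl (by omega)]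
          unfold ebF; split_ifs <;> omega
      · rw [List.isChain_append]
        refine ⟨?_, ?_, ?_⟩
        · apply triples_chain
          · intro i hi
            exact stepR_of H hL (j := j) hj (by omega) (by omega)
              (by rw [bF_odd_mid h (by omega) (by omega)]; unfold ebF; split_ifs <;> omega)
          · intro i hi
            exact stepR_of H hL (j := j) hj (by omega) (by omega)
              (by rw [bF_odd_mid h (by omega) (by omega)]; unfold ebF; split_ifs <;> omega)
          · intro i hi
            exact stepR_of H hL (j := j) hj (by omega) (by omega)
              (by rw [bF_odd_mid h (by omega) (by omega)]; unfold ebF; split_ifs <;> omega)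
        · rw [tailL_eq]
          apply range'_chain
          intro u hu1 hu2
          exact stepR_of H hL (j := j) hj (by omega) (by omega)
            (bF_odd_high h (by omega))
        · intro x hx y hy
          rw [tailL_eq, range'_head? _ _ he] at hy
          simp only [Option.mem_def, Option.some.injEq] at hy
          subst hy
          rcases Nat.eq_zero_or_pos k₂ with h0 | h0
          · rw [show triples (S + 3*k₁ + 5) k₂ = [] from by rw [h0]; simp [triples]] at hx
            simp at hx
          · rw [triples_getLast? _ _ h0] at hx
            simp only [Option.mem_def, Option.some.injEq] at hx
            subst hx
            refine stepR_of H hL (j := j) hj (by omega) (by omega) ?_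
            rw [show S + 3*k₁ + 5 + 3*(k₂-1) + 2 + 1 = S + 3*k₁ + 5 + 3*k₂ from by omega]
            exact bF_odd_high h le_rfl
    · intro x hx y hy
      rcases Nat.eq_zero_or_pos k₁ with h0 | h0
      · rw [show triples S k₁ = [] from by rw [h0]; simp [triples]] at hx
        simp at hx
      · rw [triples_getLast? _ _ h0] at hx
        simp only [List.head?_cons, Option.mem_def, Option.some.injEq] at hx hy
        subst hx; subst hy
        refine stepR_of H hL (j := j) hj (by omega) (by omega) ?_
        rw [show S + 3*(k₁-1) + 2 + 1 = S + 3*k₁ from by omega]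
        exact bF_odd_m0 h

lemma bigL_chain_aux (H : Hyp p q l α L) (hL : 0 < L) : ∀ n, n ≤ p + q →
    List.IsChain (stepR p q l α L hL) ((List.range n).flatMap (blockL p q l α)) ∧
    (0 < n → ((List.range n).flatMap (blockL p q l α)).head? = some (hdB p q l α 0) ∧
      ((List.range n).flatMap (blockL p q l α)).getLast?
        = some (shift p q l α n - 1)) := by
  intro n
  induction n with
  | zero => simp
  | succ n ih =>
    intro hn
    have hjn : n < p + q := by omega
    have ihn := ih (by omega)
    rw [flatMap_range_succ']
    have hw0 : 1 ≤ width p q l α n := width_pos p q l α H.hl H.hEven hjn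
    refine ⟨?_, ?_⟩
    · rw [List.isChain_append]
      refine ⟨ihn.1, blockL_chain H hL hjn, ?_⟩
      intro x hx y hy
      rw [blockL_head? H hjn] at hy
      simp only [Option.mem_def, Option.some.injEq] at hy
      subst hy
      cases n with
      | zero => simp at hx
      | succ n2 =>
        rw [(ihn.2 (by omega)).2] at hx
        simp only [Option.mem_def, Option.some.injEq] at hx
        subst hx
        have hsp : 1 ≤ shift p q l α (n2+1) := by
          have h1 : 1 ≤ shift p q l α 1 := by
            rw [shift_succ, shift_zero]
            have := width_pos p q l α H.hl H.hEven (by omega : 0 < p + q)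
            omega
          have := shift_mono p q l α (by omega : 1 ≤ n2+1)
          omega
        refine stepR_of H hL (j := n2+1) hjn (by omega) ?_ ?_
        · have hss := shift_succ p q l α (n2+1)
          omega
        · rw [show shift p q l α (n2+1) - 1 + 1 = shift p q l α (n2+1) from by omega]
          exact cross_val H hjn
    · intro _
      constructor
      · rw [List.head?_append]
        cases n with
        | zero =>
          simp only [List.range_zero, List.flatMap_nil, List.head?_nil, Option.none_or]
          exact blockL_head? H (by omega)
        | succ n2 =>
          rw [(ihn.2 (by omega)).1]
          rfl
      · rw [List.getLast?_append, blockL_getLast? H hjn]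
        rfl

lemma bigL_chain (H : Hyp p q l α L) (hL : 0 < L) :
    List.IsChain (stepR p q l α L hL) (bigL p q l α) :=
  (bigL_chain_aux H hL (p+q) le_rfl).1

lemma pq_pos (H : Hyp p q l α L) : 0 < p + q := by
  rcases Nat.eq_zero_or_pos q with rfl | hq
  · have := H.hpq rfl; omega
  · omega

lemma bigL_head? (H : Hyp p q l α L) (hL : 0 < L) :
    (bigL p q l α).head? = some (hdB p q l α 0) :=
  ((bigL_chain_aux H hL (p+q) le_rfl).2 (pq_pos H)).1

lemma bigL_getLast? (H : Hyp p q l α L) (hL : 0 < L) :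
    (bigL p q l α).getLast? = some (L - 1) := by
  have h := ((bigL_chain_aux H hL (p+q) le_rfl).2 (pq_pos H)).2
  rwa [shift_total' H] at h

lemma cover_nodup (H : Hyp p q l α L) : (bigL p q l α ++ swapsL p q l α).Nodup :=
  (cover H).nodup_iff.mpr List.nodup_range

lemma mem_cover (H : Hyp p q l α L) {y : ℕ} (hy : y < L) :
    y ∈ bigL p q l α ∨ y ∈ swapsL p q l α := by
  have := (cover H).mem_iff (a := y)
  rw [List.mem_range] at this
  rcases List.mem_append.1 (this.mpr hy) with h | h
  · exact Or.inl h
  · exact Or.inr h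

lemma lt_of_mem_cover (H : Hyp p q l α L) {y : ℕ}
    (hy : y ∈ bigL p q l α ++ swapsL p q l α) : y < L := by
  have := (cover H).mem_iff (a := y)
  rw [List.mem_range] at this
  exact this.mp hy

lemma swapsL_length : (swapsL p q l α).length = 4 * q := by
  rw [swapsL, List.length_flatMap]
  have : List.map (fun a => (quadL p q l α a).length) (List.range q)
      = List.map (fun _ => 4) (List.range q) := by
    apply List.map_congr_left
    intro t _
    rfl
  rw [this, List.map_const', List.sum_replicate, List.length_range, smul_eq_mul]
  omega

lemma bigL_length (H : Hyp p q l α L) : (bigL p q l α).length = L - 4 * q := by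
  have h := (cover H).length_eq
  rw [List.length_append, List.length_range, swapsL_length] at h
  omega


lemma mT_bounds (H : Hyp p q l α L) {t : ℕ} (ht : t < q) :
    shift p q l α (p+t) ≤ mT p q l α t ∧ mT p q l α t + 4 < shift p q l α (p+t+1) := by
  have hb := bound_odd H (by omega : p ≤ p + t) (by omega : p + t < p + q)
  simp only [Nat.add_sub_cancel_left] at hb
  unfold mT
  omega

lemma mT_lt_L (H : Hyp p q l α L) {t : ℕ} (ht : t < q) : mT p q l α t + 4 < L := by
  have h1 := (mT_bounds H ht).2
  have h2 := shift_le_L H (by omega : p + t + 1 ≤ p + q)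
  omega

lemma mT_sep (H : Hyp p q l α L) {t t' : ℕ} (h : t < t') (ht' : t' < q) :
    mT p q l α t + 4 ≤ mT p q l α t' := by
  have h1 := (mT_bounds H (by omega : t < q)).2
  have h2 := (mT_bounds H ht').1
  have h3 := shift_mono p q l α (by omega : p + t + 1 ≤ p + t')
  omega

/-- The pair of transpositions at the `t`-th odd block. -/
def pairP (p q l : ℕ) (α : Fin (p + 2 * q) → ℕ) (L : ℕ) (hL : 0 < L) (t : ℕ) :
    Equiv.Perm (Fin L) :=
  Equiv.swap (mkFin L hL (mT p q l α t)) (mkFin L hL (mT p q l α t + 2)) *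
    Equiv.swap (mkFin L hL (mT p q l α t + 1)) (mkFin L hL (mT p q l α t + 3))

/-- The product of the first `n` transposition pairs. -/
def tauQ (p q l : ℕ) (α : Fin (p + 2 * q) → ℕ) (L : ℕ) (hL : 0 < L) (n : ℕ) :
    Equiv.Perm (Fin L) :=
  ((List.range n).map (pairP p q l α L hL)).prod

lemma tauQ_succ (hL : 0 < L) (n : ℕ) :
    tauQ p q l α L hL (n+1) = tauQ p q l α L hL n * pairP p q l α L hL n := by
  rw [tauQ, tauQ, range_succ, map_append, prod_append]
  simp

lemma pairP_out (H : Hyp p q l α L) (hL : 0 < L) {t y : ℕ} (ht : t < q) (hy : y < L)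
    (hout : y < mT p q l α t ∨ mT p q l α t + 3 < y) :
    pairP p q l α L hL t (mkFin L hL y) = mkFin L hL y := by
  have hb := mT_lt_L H ht
  rw [pairP, Perm.mul_apply,
    swap_mk_other hL (by omega) (by omega) hy (by omega) (by omega),
    swap_mk_other hL (by omega) (by omega) hy (by omega) (by omega)]

lemma pairP_vals (H : Hyp p q l α L) (hL : 0 < L) {t : ℕ} (ht : t < q) :
    pairP p q l α L hL t (mkFin L hL (mT p q l α t)) = mkFin L hL (mT p q l α t + 2) ∧
    pairP p q l α L hL t (mkFin L hL (mT p q l α t + 2)) = mkFin L hL (mT p q l α t) ∧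
    pairP p q l α L hL t (mkFin L hL (mT p q l α t + 1)) = mkFin L hL (mT p q l α t + 3) ∧
    pairP p q l α L hL t (mkFin L hL (mT p q l α t + 3)) = mkFin L hL (mT p q l α t + 1) := by
  have hb := mT_lt_L H ht
  refine ⟨?_, ?_, ?_, ?_⟩
  · rw [pairP, Perm.mul_apply,
      swap_mk_other hL (by omega) (by omega) (by omega) (by omega) (by omega), swap_mk_left]
  · rw [pairP, Perm.mul_apply,
      swap_mk_other hL (by omega) (by omega) (by omega) (by omega) (by omega), swap_mk_right]
  · rw [pairP, Perm.mul_apply, swap_mk_left,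
      swap_mk_other hL (by omega) (by omega) (by omega) (by omega) (by omega)]
  · rw [pairP, Perm.mul_apply, swap_mk_right,
      swap_mk_other hL (by omega) (by omega) (by omega) (by omega) (by omega)]

lemma tauQ_out (H : Hyp p q l α L) (hL : 0 < L) : ∀ n, n ≤ q → ∀ {y : ℕ}, y < L →
    (∀ t, t < n → (y < mT p q l α t ∨ mT p q l α t + 3 < y)) →
    tauQ p q l α L hL n (mkFin L hL y) = mkFin L hL y := by
  intro n
  induction n with
  | zero => intro _ y hy _; simp [tauQ]
  | succ n ih =>
    intro hn y hy h
    rw [tauQ_succ, Perm.mul_apply, pairP_out H hL (by omega) hy (h n (by omega))]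
    exact ih (by omega) hy (fun t ht => h t (by omega))

lemma tauQ_quad (H : Hyp p q l α L) (hL : 0 < L) : ∀ n, n ≤ q → ∀ t, t < n →
    tauQ p q l α L hL n (mkFin L hL (mT p q l α t)) = mkFin L hL (mT p q l α t + 2) ∧
    tauQ p q l α L hL n (mkFin L hL (mT p q l α t + 2)) = mkFin L hL (mT p q l α t) ∧
    tauQ p q l α L hL n (mkFin L hL (mT p q l α t + 1)) = mkFin L hL (mT p q l α t + 3) ∧
    tauQ p q l α L hL n (mkFin L hL (mT p q l α t + 3)) = mkFin L hL (mT p q l α t + 1) := by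
  intro n
  induction n with
  | zero => omega
  | succ n ih =>
    intro hn t ht
    have hbt := mT_lt_L H (by omega : t < q)
    rcases Nat.lt_or_ge t n with h | h
    · have hsep := mT_sep H (by omega : t < n) (by omega : n < q)
      have base := ih (by omega) t h
      refine ⟨?_, ?_, ?_, ?_⟩ <;>
        rw [tauQ_succ, Perm.mul_apply,
          pairP_out H hL (by omega) (by omega) (by omega)] <;>
        [exact base.1; exact base.2.1; exact base.2.2.1; exact base.2.2.2]
    · have ht' : t = n := by omega
      subst ht'
      have hv := pairP_vals H hL (by omega : t < q)
      have hout : ∀ c, t ≤ q → mT p q l α t ≤ c → c < L →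
          tauQ p q l α L hL t (mkFin L hL c) = mkFin L hL c := by
        intro c _ hc hcL
        refine tauQ_out H hL t (by omega) hcL ?_
        intro t' ht'
        have := mT_sep H ht' (by omega : t < q)
        omega
      refine ⟨?_, ?_, ?_, ?_⟩ <;> rw [tauQ_succ, Perm.mul_apply]
      · rw [hv.1]; exact hout _ (by omega) (by omega) (by omega)
      · rw [hv.2.1]; exact hout _ (by omega) (by omega) (by omega)
      · rw [hv.2.2.1]; exact hout _ (by omega) (by omega) (by omega)
      · rw [hv.2.2.2]; exact hout _ (by omega) (by omega) (by omega)

lemma mk_self (hL : 0 < L) (x : Fin L) : mkFin L hL (x : ℕ) = x := by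
  apply Fin.ext
  exact Nat.mod_eq_of_lt x.isLt

lemma tauQ_cycleType (H : Hyp p q l α L) (hL : 0 < L) : ∀ n, n ≤ q →
    (tauQ p q l α L hL n).cycleType = Multiset.replicate (2*n) 2 := by
  intro n
  induction n with
  | zero => simp [tauQ, Equiv.Perm.cycleType_one]
  | succ n ih =>
    intro hn
    have hbt := mT_lt_L H (by omega : n < q)
    have hdisj : (tauQ p q l α L hL n).Disjoint (pairP p q l α L hL n) := by
      intro x
      have hyL : (x : ℕ) < L := x.isLt
      by_cases hin : ∃ t, t < n ∧ mT p q l α t ≤ (x : ℕ) ∧ (x : ℕ) ≤ mT p q l α t + 3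
      · right
        obtain ⟨t, ht, h1, h2⟩ := hin
        have hsep := mT_sep H (by omega : t < n) (by omega : n < q)
        rw [← mk_self hL x]
        exact pairP_out H hL (by omega) hyL (by omega)
      · left
        push_neg at hin
        rw [← mk_self hL x]
        refine tauQ_out H hL n (by omega) hyL ?_
        intro t ht
        have := hin t ht
        omega
    have hpair : (pairP p q l α L hL n).cycleType = Multiset.replicate 2 2 := by
      have hne1 : mkFin L hL (mT p q l α n) ≠ mkFin L hL (mT p q l α n + 2) := by
        intro h; have := mk_inj hL (by omega) (by omega) h; omega
      have hne2 : mkFin L hL (mT p q l α n + 1) ≠ mkFin L hL (mT p q l α n + 3) := by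
        intro h; have := mk_inj hL (by omega) (by omega) h; omega
      have hd : (Equiv.swap (mkFin L hL (mT p q l α n)) (mkFin L hL (mT p q l α n + 2))).Disjoint
          (Equiv.swap (mkFin L hL (mT p q l α n + 1)) (mkFin L hL (mT p q l α n + 3))) := by
        intro x
        have hyL : (x : ℕ) < L := x.isLt
        by_cases hx : (x : ℕ) = mT p q l α n + 1 ∨ (x : ℕ) = mT p q l α n + 3
        · left
          rw [← mk_self hL x]
          exact swap_mk_other hL (by omega) (by omega) hyL (by omega) (by omega)
        · right
          push_neg at hx
          rw [← mk_self hL x]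
          exact swap_mk_other hL (by omega) (by omega) hyL
            (fun h => hx.1 (by omega)) (fun h => hx.2 (by omega))
      rw [pairP, hd.cycleType_mul,
        (Equiv.Perm.isCycle_swap hne1).cycleType,
        (Equiv.Perm.isCycle_swap hne2).cycleType,
        Equiv.Perm.card_support_swap hne1, Equiv.Perm.card_support_swap hne2]
      rfl
    rw [tauQ_succ, hdisj.cycleType_mul, ih (by omega), hpair,
      show 2*(n+1) = 2*n + 2 from by omega, Multiset.replicate_add]


lemma rot (hL : 0 < L) (x : ℕ) : finRotate L (mkFin L hL x) = mkFin L hL (x+1) := by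
  obtain ⟨n, rfl⟩ : ∃ n, L = n + 1 := ⟨L - 1, by omega⟩
  rw [finRotate_succ_apply]
  apply Fin.ext
  rw [Fin.add_def]
  all_goals
    show ((x % (n+1)) + (1 : Fin (n+1)).val) % (n+1) = (x+1) % (n+1)
    rw [Fin.val_one', ← Nat.add_mod]

lemma swaps_mem_iff {y : ℕ} : y ∈ swapsL p q l α ↔ ∃ t, t < q ∧
    (y = mT p q l α t ∨ y = mT p q l α t + 1 ∨ y = mT p q l α t + 2 ∨
      y = mT p q l α t + 3) := by
  simp only [swapsL, quadL, List.mem_flatMap, List.mem_range, List.mem_cons,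
    List.mem_singleton, List.not_mem_nil, or_false]
  all_goals try tauto

lemma not_swaps_bounds (H : Hyp p q l α L) {y : ℕ} (hy : y ∈ bigL p q l α) :
    ∀ t, t < q → (y < mT p q l α t ∨ mT p q l α t + 3 < y) := by
  intro t ht
  have hdisj := List.disjoint_of_nodup_append (cover_nodup H)
  have hns : y ∉ swapsL p q l α := fun hc => hdisj hy hc
  rw [swaps_mem_iff] at hns
  push_neg at hns
  have := hns t ht
  omega

lemma swaps_not_bigL (H : Hyp p q l α L) {y : ℕ} (hy : y ∈ swapsL p q l α) :
    y ∉ bigL p q l α := by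
  intro hc
  exact List.disjoint_of_nodup_append (cover_nodup H) hc hy

lemma mem_bigL_lt (H : Hyp p q l α L) {y : ℕ} (h : y ∈ bigL p q l α) : y < L :=
  lt_of_mem_cover H (List.mem_append_left _ h)

lemma mem_swaps_lt (H : Hyp p q l α L) {y : ℕ} (h : y ∈ swapsL p q l α) : y < L :=
  lt_of_mem_cover H (List.mem_append_right _ h)

lemma BL_nodup (H : Hyp p q l α L) (hL : 0 < L) :
    ((bigL p q l α).map (mkFin L hL)).Nodup :=
  List.Nodup.map_on
    (fun a ha b hb hab => mk_inj hL (mem_bigL_lt H ha) (mem_bigL_lt H hb) hab)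
    (List.Nodup.of_append_left (cover_nodup H))

lemma mk_not_mem_BL (H : Hyp p q l α L) (hL : 0 < L) {y : ℕ} (hyL : y < L)
    (h : y ∉ bigL p q l α) : mkFin L hL y ∉ (bigL p q l α).map (mkFin L hL) := by
  intro hc
  obtain ⟨z, hz, hzy⟩ := List.mem_map.1 hc
  exact h (by rwa [mk_inj hL (mem_bigL_lt H hz) hyL hzy] at hz)

lemma step_indexed (H : Hyp p q l α L) (hL : 0 < L) {i : ℕ}
    (hi : i < (bigL p q l α).length) :
    sigmaB L hL p q l α (mkFin L hL ((bigL p q l α)[i] + 1)) =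
      mkFin L hL ((bigL p q l α)[(i+1) % (bigL p q l α).length]'
        (Nat.mod_lt _ (by omega))) := by
  rcases Nat.lt_or_ge (i+1) (bigL p q l α).length with hlt | hge
  · have hc := bigL_chain H hL
    rw [List.isChain_iff_getElem] at hc
    have := hc i (by omega)
    unfold stepR at this
    have hval : (bigL p q l α)[(i+1) % (bigL p q l α).length]'(Nat.mod_lt _ (by omega))
        = (bigL p q l α)[i+1]'hlt := by
      have h1 : (bigL p q l α)[(i+1) % (bigL p q l α).length]? = (bigL p q l α)[i+1]? := by
        rw [Nat.mod_eq_of_lt hlt]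
      rw [List.getElem?_eq_getElem (Nat.mod_lt _ (by omega)),
        List.getElem?_eq_getElem hlt] at h1
      exact Option.some.inj h1
    rw [hval]
    exact this
  · have hieq : i = (bigL p q l α).length - 1 := by omega
    have hlast := bigL_getLast? H hL
    rw [List.getLast?_eq_getElem?, List.getElem?_eq_getElem (by omega)] at hlast
    have hival : (bigL p q l α)[i] = L - 1 := by
      have h1 : (bigL p q l α)[i]? = (bigL p q l α)[(bigL p q l α).length - 1]? := by
        rw [hieq]
      rw [List.getElem?_eq_getElem hi, List.getElem?_eq_getElem (by omega)] at h1
      rw [Option.some.inj h1]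
      exact Option.some.inj hlast
    have hhead := bigL_head? H hL
    rw [List.head?_eq_getElem?, List.getElem?_eq_getElem (by omega)] at hhead
    have hmod : (i+1) % (bigL p q l α).length = 0 := by
      rw [show i + 1 = (bigL p q l α).length from by omega]
      exact Nat.mod_self _
    have h0val : (bigL p q l α)[(i+1) % (bigL p q l α).length]'
        (Nat.mod_lt _ (by omega)) = hdB p q l α 0 := by
      have h1 : (bigL p q l α)[(i+1) % (bigL p q l α).length]? = (bigL p q l α)[0]? := by
        rw [hmod]
      rw [List.getElem?_eq_getElem (Nat.mod_lt _ (by omega)),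
        List.getElem?_eq_getElem (by omega)] at h1
      rw [Option.some.inj h1]
      exact Option.some.inj hhead
    rw [hival, h0val, show L - 1 + 1 = L from by omega]
    have hLL : mkFin L hL L = mkFin L hL 0 := by
      apply Fin.ext
      simp [mkFin, Nat.mod_self]
    rw [hLL]
    have hs1 : 0 < shift p q l α 1 := by
      rw [shift_succ, shift_zero]
      have := width_pos p q l α H.hl H.hEven (pq_pos H)
      omega
    rw [sigmaB_apply H hL (pq_pos H) (by rw [shift_zero]) (by simpa using hs1)]
    have := cross_val H (pq_pos H)
    rw [shift_zero] at this
    rw [this]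

lemma bF_quad (H : Hyp p q l α L) {t : ℕ} (ht : t < q) :
    bF p q l α (p+t) (mT p q l α t + 1) = mT p q l α t + 2 ∧
    bF p q l α (p+t) (mT p q l α t + 2) = mT p q l α t + 3 ∧
    bF p q l α (p+t) (mT p q l α t + 3) = mT p q l α t ∧
    bF p q l α (p+t) (mT p q l α t + 4) = mT p q l α t + 1 := by
  have h1 := bF_odd_m1 (q := q) (l := l) (α := α) (j := p+t) (by omega)
  have h2 := bF_odd_m2 (q := q) (l := l) (α := α) (j := p+t) (by omega)
  have h3 := bF_odd_m3 (q := q) (l := l) (α := α) (j := p+t) (by omega)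
  have h4 := bF_odd_m4 (q := q) (l := l) (α := α) (j := p+t) (by omega)
  simp only [Nat.add_sub_cancel_left] at h1 h2 h3 h4
  unfold mT
  exact ⟨h1, h2, h3, h4⟩

lemma main_eq (H : Hyp p q l α L) (hL : 0 < L) :
    sigmaB L hL p q l α * finRotate L =
      ((bigL p q l α).map (mkFin L hL)).formPerm * tauQ p q l α L hL q := by
  apply Equiv.ext
  intro x
  obtain ⟨y, hyL, rfl⟩ : ∃ y, y < L ∧ x = mkFin L hL y :=
    ⟨(x : ℕ), x.isLt, (mk_self hL x).symm⟩
  rw [Perm.mul_apply, Perm.mul_apply, rot hL]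
  rcases mem_cover H hyL with hmem | hmem
  · rw [tauQ_out H hL q le_rfl hyL (not_swaps_bounds H hmem)]
    obtain ⟨i, hi, hgi⟩ := List.mem_iff_getElem.1 hmem
    rw [← hgi]
    rw [show mkFin L hL ((bigL p q l α)[i]) =
        ((bigL p q l α).map (mkFin L hL))[i]'(by simpa using hi) from
      (List.getElem_map _).symm]
    rw [List.formPerm_apply_getElem _ (BL_nodup H hL) i _]
    simp only [List.length_map, List.getElem_map]
    exact step_indexed H hL hi
  · rw [swaps_mem_iff] at hmem
    obtain ⟨t, ht, hc⟩ := hmem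
    have hb := mT_bounds H ht
    have hbl := mT_lt_L H ht
    have hq := tauQ_quad H hL q le_rfl t ht
    have hbf := bF_quad H ht
    have hjq : p + t < p + q := by omega
    have notmem : ∀ c : ℕ, c ∈ swapsL p q l α →
        ((bigL p q l α).map (mkFin L hL)).formPerm (mkFin L hL c) = mkFin L hL c := by
      intro c hcs
      exact List.formPerm_apply_of_notMem
        (mk_not_mem_BL H hL (mem_swaps_lt H hcs) (swaps_not_bigL H hcs))
    have hmem' : ∀ c, (c = mT p q l α t ∨ c = mT p q l α t + 1 ∨ c = mT p q l α t + 2 ∨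
        c = mT p q l α t + 3) → c ∈ swapsL p q l α := by
      intro c hcc
      rw [swaps_mem_iff]
      exact ⟨t, ht, hcc⟩
    rcases hc with rfl | rfl | rfl | rfl
    · rw [hq.1, notmem _ (hmem' _ (by omega)),
        sigmaB_apply H hL hjq (by omega) (by omega), hbf.1]
    · rw [hq.2.2.1, notmem _ (hmem' _ (by omega)),
        sigmaB_apply H hL hjq (by omega) (by omega), hbf.2.1]
    · rw [hq.2.1, notmem _ (hmem' _ (by omega)),
        sigmaB_apply H hL hjq (by omega) (by omega), hbf.2.2.1]
    · rw [hq.2.2.2, notmem _ (hmem' _ (by omega)),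
        sigmaB_apply H hL hjq (by omega) (by omega), hbf.2.2.2]

lemma final_cycleType (H : Hyp p q l α L) (hL : 0 < L) :
    (sigmaB L hL p q l α * finRotate L).cycleType =
      (L - 4*q) ::ₘ Multiset.replicate (2*q) 2 := by
  have hLge : 4*q + 2 ≤ L := L_ge p q l α H.hl H.hpq H.hEven H.hOdd L H.hLdef
  have hlen : ((bigL p q l α).map (mkFin L hL)).length = L - 4*q := by
    rw [List.length_map, bigL_length H]
  have hnd := BL_nodup H hL
  have hdisj : (((bigL p q l α).map (mkFin L hL)).formPerm).Disjoint
      (tauQ p q l α L hL q) := by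
    intro x
    obtain ⟨y, hyL, rfl⟩ : ∃ y, y < L ∧ x = mkFin L hL y :=
      ⟨(x : ℕ), x.isLt, (mk_self hL x).symm⟩
    rcases mem_cover H hyL with hmem | hmem
    · right
      exact tauQ_out H hL q le_rfl hyL (not_swaps_bounds H hmem)
    · left
      exact List.formPerm_apply_of_notMem
        (mk_not_mem_BL H hL hyL (swaps_not_bigL H hmem))
  rw [main_eq H hL, hdisj.cycleType_mul,
    (List.isCycle_formPerm hnd (by omega)).cycleType,
    List.support_formPerm_of_nodup _ hnd (by
      intro z hz
      rw [hz] at hlen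
      simp at hlen
      omega),
    List.toFinset_card_of_nodup hnd, hlen, tauQ_cycleType H hL q le_rfl]
  rw [Multiset.singleton_add]

end Chains
end Lists
end OP

/-- **Lemma.** Let `α₁, …, α_p` be positive even and `α_{p+1}, …, α_{p+2q}` positive odd
numbers (`p ≥ 1` if `q = 0`), `l ≥ 1`, and `L = (3/2)(α₁+⋯+α_{p+2q}) + p + 3q + l - 1`.
With `σ_a = (0 1 ⋯ L-1)` and `σ_b` the product of the shifted block permutations, the
permutation `σ_b ∘ σ_a` has cycle type consisting of one cycle of length `L - 4q`
and `2q` cycles of length `2`. -/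
theorem sigmaB_mul_sigmaA_cycleType (p q l : ℕ) (hl : 1 ≤ l) (hpq : q = 0 → 1 ≤ p)
    (α : Fin (p + 2 * q) → ℕ)
    (hEven : ∀ i : Fin (p + 2 * q), (i : ℕ) < p → Even (α i) ∧ 0 < α i)
    (hOdd : ∀ i : Fin (p + 2 * q), p ≤ (i : ℕ) → Odd (α i) ∧ 0 < α i)
    (L : ℕ) (hLdef : L = 3 * (∑ i, α i) / 2 + p + 3 * q + l - 1) (hL : 0 < L)
    (σa σb : Equiv.Perm (Fin L))
    (ha : σa = finRotate L)
    (hb : σb = Origami.sigmaB L hL p q l α) :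
    (σb * σa).cycleType = (L - 4 * q) ::ₘ Multiset.replicate (2 * q) 2 := by
  rw [ha, hb]
  exact OP.final_cycleType ⟨hl, hpq, hEven, hOdd, hLdef⟩ hL
end

section
/- Let α₁, …, α_p be positive even integers and α_{p+1}, …, α_{p+2q} be positive odd integers (q ≥ 0, and p ≥ 1 if q = 0), and let l ≥ 1. With σ_b the product of shifted block permutations described in the context, every length occurring in the cycle type of σ_b equals 3 or 5; equivalently, every cycle of σ_b has length 1, 3, or 5. -/
namespace SigmaBProof

open Origami List

/-- The supports of the 3-cycles of an even block, as lists of naturals. -/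
def evenCycles (S k : ℕ) : List (List ℕ) :=
  (List.range k).map (fun i => [S + 3 * i, S + 3 * i + 1, S + 3 * i + 2])

/-- The supports of the cycles of an odd block. -/
def oddCycles (S k₁ k₂ : ℕ) : List (List ℕ) :=
  evenCycles S k₁ ++
    [[S + 3 * k₁, S + 3 * k₁ + 4, S + 3 * k₁ + 1, S + 3 * k₁ + 2, S + 3 * k₁ + 3]] ++
    evenCycles (S + 3 * k₁ + 5) k₂

def blockCycles (p q l : ℕ) (α : Fin (p + 2 * q) → ℕ) (j : ℕ) : List (List ℕ) :=
  if hj : j < p then evenCycles (shift p q l α j) (α ⟨j, by omega⟩ / 2)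
  else if hj' : j < p + q then
    oddCycles (shift p q l α j)
      (α ⟨p + 2 * (j - p), by omega⟩ / 2) (α ⟨p + 2 * (j - p) + 1, by omega⟩ / 2)
  else []

def allCycles (p q l : ℕ) (α : Fin (p + 2 * q) → ℕ) : List (List ℕ) :=
  ((List.range (p + q)).map (blockCycles p q l α)).flatten

def toPerm (L : ℕ) (hL : 0 < L) (c : List ℕ) : Equiv.Perm (Fin L) :=
  (c.map (mkFin L hL)).formPerm

lemma toPerm_three (L : ℕ) (hL : 0 < L) (a b c : ℕ) :
    toPerm L hL [a, b, c] = tcyc L hL a b c := by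
  simp [toPerm, tcyc, List.formPerm_cons_cons, List.formPerm_singleton]

lemma toPerm_five (L : ℕ) (hL : 0 < L) (a b c d e : ℕ) :
    toPerm L hL [a, b, c, d, e] = fcyc L hL a b c d e := by
  simp [toPerm, fcyc, List.formPerm_cons_cons, List.formPerm_singleton, mul_assoc]

lemma evenBlock_eq (L : ℕ) (hL : 0 < L) (S k : ℕ) :
    evenBlock L hL S k = ((evenCycles S k).map (toPerm L hL)).prod := by
  simp [evenBlock, evenCycles, List.map_map, Function.comp_def, toPerm_three]

lemma oddBlock_eq (L : ℕ) (hL : 0 < L) (S k₁ k₂ : ℕ) :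
    oddBlock L hL S k₁ k₂ = ((oddCycles S k₁ k₂).map (toPerm L hL)).prod := by
  simp [oddBlock, oddCycles, evenBlock_eq, toPerm_five, List.map_append, List.prod_append,
    mul_assoc]

lemma sigmaB_eq (L : ℕ) (hL : 0 < L) (p q l : ℕ) (α : Fin (p + 2 * q) → ℕ) :
    sigmaB L hL p q l α = ((allCycles p q l α).map (toPerm L hL)).prod := by
  rw [allCycles, List.map_flatten, List.prod_flatten, List.map_map, List.map_map, sigmaB]
  congr 1
  apply List.map_congr_left
  intro j hj
  simp only [Function.comp_apply, blockCycles]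
  by_cases h1 : j < p
  · rw [dif_pos h1, dif_pos h1, evenBlock_eq]
  · rw [dif_neg h1, dif_neg h1]
    rw [List.mem_range] at hj
    rw [dif_pos hj, dif_pos hj, oddBlock_eq]

lemma range'_three (a : ℕ) : List.range' a 3 = [a, a + 1, a + 2] := by
  simp [List.range']

lemma range'_five (a : ℕ) : List.range' a 5 = [a, a + 1, a + 2, a + 3, a + 4] := by
  simp [List.range']

lemma range'_split (s m n : ℕ) :
    List.range' s m ++ List.range' (s + m) n = List.range' s (m + n) := by
  have h := List.range'_append (s := s) (m := m) (n := n) (step := 1)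
  rw [one_mul] at h
  rw [h, Nat.add_comm]

lemma evenCycles_flatten (S k : ℕ) :
    (evenCycles S k).flatten = List.range' S (3 * k) := by
  induction k with
  | zero => simp [evenCycles]
  | succ k ih =>
    rw [evenCycles, List.range_succ, List.map_append, List.flatten_append]
    rw [show (List.range k).map
      (fun i => [S + 3 * i, S + 3 * i + 1, S + 3 * i + 2]) = evenCycles S k from rfl, ih]
    have : [S + 3 * k, S + 3 * k + 1, S + 3 * k + 2] = List.range' (S + 3 * k) 3 := by
      rw [range'_three]
    simp only [List.map_cons, List.map_nil, List.flatten_cons, List.flatten_nil, List.append_nil]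
    rw [this, range'_split, Nat.mul_succ]

lemma oddCycles_flatten_perm (S k₁ k₂ : ℕ) :
    (oddCycles S k₁ k₂).flatten.Perm (List.range' S (3 * k₁ + 3 * k₂ + 5)) := by
  rw [oddCycles, List.flatten_append, List.flatten_append, evenCycles_flatten,
    evenCycles_flatten]
  have h5 : [S + 3 * k₁, S + 3 * k₁ + 4, S + 3 * k₁ + 1, S + 3 * k₁ + 2, S + 3 * k₁ + 3].Perm
      (List.range' (S + 3 * k₁) 5) := by
    rw [range'_five]
    refine List.Perm.cons _ ?_
    have := List.perm_append_comm (l₁ := [S + 3 * k₁ + 4])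
      (l₂ := [S + 3 * k₁ + 1, S + 3 * k₁ + 2, S + 3 * k₁ + 3])
    simpa using this
  simp only [List.flatten_cons, List.flatten_nil, List.append_nil]
  refine List.Perm.trans (List.Perm.append (List.Perm.append (List.Perm.refl _) h5)
    (List.Perm.refl _)) ?_
  rw [range'_split]
  have h2 : List.range' S (3 * k₁ + 5) ++ List.range' (S + 3 * k₁ + 5) (3 * k₂) =
      List.range' S (3 * k₁ + 3 * k₂ + 5) := by
    have := range'_split S (3 * k₁ + 5) (3 * k₂)
    rw [show S + (3 * k₁ + 5) = S + 3 * k₁ + 5 by omega] at this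
    rw [this]
    congr 1
    omega
  rw [h2]

lemma shift_succ (p q l : ℕ) (α : Fin (p + 2 * q) → ℕ) (j : ℕ) :
    shift p q l α (j + 1) = shift p q l α j + width p q l α j :=
  Finset.sum_range_succ _ j

lemma blockCycles_spec (p q l : ℕ) (hl : 1 ≤ l) (α : Fin (p + 2 * q) → ℕ) (j : ℕ)
    (hj : j < p + q) :
    ∃ n, ((blockCycles p q l α j).flatten).Perm (List.range' (shift p q l α j) n) ∧
      n ≤ width p q l α j := by
  by_cases h1 : j < p
  · refine ⟨3 * (α ⟨j, by omega⟩ / 2), ?_, ?_⟩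
    · rw [blockCycles, dif_pos h1, evenCycles_flatten]
    · rw [width, dif_pos h1]
      split <;> omega
  · refine ⟨3 * (α ⟨p + 2 * (j - p), by omega⟩ / 2) + 3 * (α ⟨p + 2 * (j - p) + 1, by omega⟩ / 2)
      + 5, ?_, ?_⟩
    · rw [blockCycles, dif_neg h1, dif_pos hj]
      exact oddCycles_flatten_perm _ _ _
    · rw [width, dif_neg h1, dif_pos hj]
      split <;> omega

lemma mem_evenCycles_length {c : List ℕ} {S k : ℕ} (h : c ∈ evenCycles S k) : c.length = 3 := by
  simp only [evenCycles, List.mem_map, List.mem_range] at h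
  obtain ⟨i, _, rfl⟩ := h
  rfl

lemma mem_blockCycles_length {p q l : ℕ} {α : Fin (p + 2 * q) → ℕ} {j : ℕ} {c : List ℕ}
    (h : c ∈ blockCycles p q l α j) : c.length = 3 ∨ c.length = 5 := by
  rw [blockCycles] at h
  split at h
  · exact Or.inl (mem_evenCycles_length h)
  · split at h
    · rw [oddCycles, List.mem_append, List.mem_append] at h
      rcases h with (h | h) | h
      · exact Or.inl (mem_evenCycles_length h)
      · simp only [List.mem_singleton] at h
        subst h; exact Or.inr rfl
      · exact Or.inl (mem_evenCycles_length h)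
    · simp at h

lemma prefix_spec (p q l : ℕ) (hl : 1 ≤ l) (α : Fin (p + 2 * q) → ℕ) :
    ∀ m, m ≤ p + q →
      (((List.range m).map (blockCycles p q l α)).flatten.flatten).Nodup ∧
      ∀ x ∈ ((List.range m).map (blockCycles p q l α)).flatten.flatten,
        x < shift p q l α m := by
  intro m
  induction m with
  | zero => simp
  | succ m ih =>
    intro hm
    obtain ⟨h1, h2⟩ := ih (by omega)
    obtain ⟨n, hperm, hn⟩ := blockCycles_spec p q l hl α m (by omega)
    have hsplit : ((List.range (m + 1)).map (blockCycles p q l α)).flatten.flatten =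
        ((List.range m).map (blockCycles p q l α)).flatten.flatten ++
          (blockCycles p q l α m).flatten := by
      rw [List.range_succ, List.map_append, List.flatten_append, List.flatten_append]
      simp
    rw [hsplit]
    have hmemB : ∀ x ∈ (blockCycles p q l α m).flatten,
        shift p q l α m ≤ x ∧ x < shift p q l α m + n := by
      intro x hx
      rw [hperm.mem_iff, List.mem_range'] at hx
      obtain ⟨i, hi, rfl⟩ := hx
      omega
    constructor
    · refine List.Nodup.append h1 (hperm.nodup_iff.mpr (List.nodup_range' 1 Nat.one_pos)) ?_
      intro x hx hx'
      have := h2 x hx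
      have := hmemB x hx'
      omega
    · intro x hx
      rw [List.mem_append] at hx
      rw [shift_succ]
      rcases hx with hx | hx
      · have := h2 x hx; omega
      · have := hmemB x hx; omega

lemma sum_range_split (f : ℕ → ℕ) (a b : ℕ) :
    ∑ i ∈ Finset.range (a + b), f i =
      ∑ i ∈ Finset.range a, f i + ∑ i ∈ Finset.range b, f (a + i) := by
  induction b with
  | zero => simp
  | succ b ih => rw [Nat.add_succ, Finset.sum_range_succ, Finset.sum_range_succ, ih, add_assoc]

lemma sum_range_two_mul (g : ℕ → ℕ) (b : ℕ) :
    ∑ i ∈ Finset.range (2 * b), g i = ∑ j ∈ Finset.range b, (g (2 * j) + g (2 * j + 1)) := by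
  induction b with
  | zero => simp
  | succ b ih =>
    rw [show 2 * (b + 1) = 2 * b + 1 + 1 by omega, Finset.sum_range_succ, Finset.sum_range_succ,
      Finset.sum_range_succ, ih]
    rw [add_assoc]

/-- The auxiliary extension of `α` to `ℕ`. -/
def aux (p q : ℕ) (α : Fin (p + 2 * q) → ℕ) (i : ℕ) : ℕ :=
  if h : i < p + 2 * q then α ⟨i, h⟩ else 0

lemma aux_eq {p q : ℕ} {α : Fin (p + 2 * q) → ℕ} {i : ℕ} (h : i < p + 2 * q) :
    aux p q α i = α ⟨i, h⟩ := dif_pos h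

lemma shift_total_le (p q l : ℕ) (hl : 1 ≤ l) (hpq : q = 0 → 1 ≤ p)
    (α : Fin (p + 2 * q) → ℕ)
    (hEven : ∀ i : Fin (p + 2 * q), (i : ℕ) < p → Even (α i) ∧ 0 < α i)
    (hOdd : ∀ i : Fin (p + 2 * q), p ≤ (i : ℕ) → Odd (α i) ∧ 0 < α i)
    (L : ℕ) (hLdef : L = 3 * (∑ i, α i) / 2 + p + 3 * q + l - 1) :
    shift p q l α (p + q) ≤ L := by
  -- abbreviations
  set A := aux p q α with hA
  -- total sum
  have hsum : ∑ i, α i = ∑ i ∈ Finset.range (p + 2 * q), A i := by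
    rw [← Fin.sum_univ_eq_sum_range]
    refine Finset.sum_congr rfl (fun i _ => ?_)
    rw [hA, aux_eq i.isLt]
  have hsplit1 : ∑ i ∈ Finset.range (p + 2 * q), A i =
      ∑ i ∈ Finset.range p, A i + ∑ i ∈ Finset.range (2 * q), A (p + i) :=
    sum_range_split A p (2 * q)
  -- evens: each term even
  have hA2 : ∑ i ∈ Finset.range p, A i = 2 * ∑ i ∈ Finset.range p, (A i / 2) := by
    rw [Finset.mul_sum]
    refine Finset.sum_congr rfl (fun i hi => ?_)
    rw [Finset.mem_range] at hi
    have h1 : i < p + 2 * q := by omega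
    have h2 := (hEven ⟨i, h1⟩ hi).1
    rw [Nat.even_iff] at h2
    rw [hA, aux_eq h1]
    omega
  -- odds
  have hB2 : ∑ i ∈ Finset.range (2 * q), A (p + i) =
      2 * ∑ i ∈ Finset.range (2 * q), (A (p + i) / 2) + 2 * q := by
    have hterm : ∀ i ∈ Finset.range (2 * q), A (p + i) = 2 * (A (p + i) / 2) + 1 := by
      intro i hi
      rw [Finset.mem_range] at hi
      have h1 : p + i < p + 2 * q := by omega
      have h2 := (hOdd ⟨p + i, h1⟩ (by simp)).1
      rw [Nat.odd_iff] at h2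
      rw [hA, aux_eq h1]
      omega
    rw [Finset.sum_congr rfl hterm, Finset.sum_add_distrib, Finset.sum_const, ← Finset.mul_sum]
    simp [Finset.card_range]
  have hpair : ∑ i ∈ Finset.range (2 * q), (A (p + i) / 2) =
      ∑ j ∈ Finset.range q, (A (p + 2 * j) / 2 + A (p + 2 * j + 1) / 2) := by
    rw [sum_range_two_mul (fun i => A (p + i) / 2) q]
    refine Finset.sum_congr rfl (fun j hj => ?_)
    congr 2
  -- shift total
  have hshift : shift p q l α (p + q) =
      ∑ j ∈ Finset.range p, width p q l α j + ∑ j ∈ Finset.range q, width p q l α (p + j) :=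
    sum_range_split _ p q
  -- even widths
  have hW1 : ∑ j ∈ Finset.range p, width p q l α j =
      3 * ∑ i ∈ Finset.range p, (A i / 2) +
        ∑ j ∈ Finset.range p, (if q = 0 ∧ j = p - 1 then l else 1) := by
    rw [Finset.mul_sum, ← Finset.sum_add_distrib]
    refine Finset.sum_congr rfl (fun j hj => ?_)
    rw [Finset.mem_range] at hj
    rw [width, dif_pos hj, hA, aux_eq (show j < p + 2 * q by omega)]
  -- odd widths
  have hW2 : ∑ j ∈ Finset.range q, width p q l α (p + j) =
      3 * ∑ j ∈ Finset.range q, (A (p + 2 * j) / 2 + A (p + 2 * j + 1) / 2) +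
        ∑ j ∈ Finset.range q, (if p + j = p + q - 1 then 5 + l else 6) := by
    rw [Finset.mul_sum, ← Finset.sum_add_distrib]
    refine Finset.sum_congr rfl (fun j hj => ?_)
    rw [Finset.mem_range] at hj
    rw [width, dif_neg (by omega), dif_pos (by omega)]
    have e0 : p + j - p = j := by omega
    simp only [e0]
    rw [hA, aux_eq (show p + 2 * j < p + 2 * q by omega),
      aux_eq (show p + 2 * j + 1 < p + 2 * q by omega), mul_add]
  -- conclude, by cases on q
  rcases Nat.eq_zero_or_pos q with hq | hq
  · have hp1 := hpq hq
    subst hq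
    have hI1 : ∑ j ∈ Finset.range p, (if (0 : ℕ) = 0 ∧ j = p - 1 then l else 1) =
        p + l - 1 := by
      have hterm : ∀ j ∈ Finset.range p, (if (0 : ℕ) = 0 ∧ j = p - 1 then l else 1) =
          1 + (if j = p - 1 then l - 1 else 0) := by
        intro j hj
        simp only [true_and]
        split <;> omega
      rw [Finset.sum_congr rfl hterm, Finset.sum_add_distrib, Finset.sum_const,
        Finset.sum_ite_eq']
      rw [if_pos (Finset.mem_range.mpr (show p - 1 < p by omega))]
      simp only [Finset.card_range, smul_eq_mul, mul_one]
      omega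
    have hI2 : ∑ j ∈ Finset.range 0, (if p + j = p + 0 - 1 then 5 + l else 6) = 0 := by
      simp
    omega
  · have hq0 : q ≠ 0 := by omega
    have hI1 : ∑ j ∈ Finset.range p, (if q = 0 ∧ j = p - 1 then l else 1) = p := by
      have hterm : ∀ j ∈ Finset.range p, (if q = 0 ∧ j = p - 1 then l else 1) = 1 := by
        intro j hj
        rw [if_neg (by tauto)]
      rw [Finset.sum_congr rfl hterm, Finset.sum_const]
      simp
    have hI2 : ∑ j ∈ Finset.range q, (if p + j = p + q - 1 then 5 + l else 6) =
        6 * q + l - 1 := by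
      have hterm : ∀ j ∈ Finset.range q, (if p + j = p + q - 1 then 5 + l else 6) =
          6 + (if j = q - 1 then l - 1 else 0) := by
        intro j hj
        rw [Finset.mem_range] at hj
        by_cases h : j = q - 1
        · rw [if_pos (by omega), if_pos h]
          omega
        · rw [if_neg (by omega), if_neg h]
      rw [Finset.sum_congr rfl hterm, Finset.sum_add_distrib, Finset.sum_const,
        Finset.sum_ite_eq']
      rw [if_pos (Finset.mem_range.mpr (show q - 1 < q by omega))]
      simp only [Finset.card_range, smul_eq_mul]
      omega
    omega

theorem main (p q l : ℕ) (hl : 1 ≤ l) (hpq : q = 0 → 1 ≤ p)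
    (α : Fin (p + 2 * q) → ℕ)
    (hEven : ∀ i : Fin (p + 2 * q), (i : ℕ) < p → Even (α i) ∧ 0 < α i)
    (hOdd : ∀ i : Fin (p + 2 * q), p ≤ (i : ℕ) → Odd (α i) ∧ 0 < α i)
    (L : ℕ) (hLdef : L = 3 * (∑ i, α i) / 2 + p + 3 * q + l - 1) (hL : 0 < L) :
    ∀ c ∈ (Origami.sigmaB L hL p q l α).cycleType, c = 3 ∨ c = 5 := by
  have hshiftL := shift_total_le p q l hl hpq α hEven hOdd L hLdef
  obtain ⟨hnodupJ, hboundJ⟩ := prefix_spec p q l hl α (p + q) le_rfl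
  have hJ : ((List.range (p + q)).map (blockCycles p q l α)).flatten.flatten =
      (allCycles p q l α).flatten := rfl
  rw [hJ] at hnodupJ hboundJ
  have hboundL : ∀ x ∈ (allCycles p q l α).flatten, x < L := by
    intro x hx
    exact lt_of_lt_of_le (hboundJ x hx) hshiftL
  -- nodup and pairwise disjoint of the cycle supports
  rw [List.nodup_flatten] at hnodupJ
  obtain ⟨hnodupEach, hpwDisj⟩ := hnodupJ
  have hmemLT : ∀ c ∈ allCycles p q l α, ∀ x ∈ c, x < L := by
    intro c hc x hx
    exact hboundL x (List.mem_flatten.mpr ⟨c, hc, hx⟩)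
  have hlen : ∀ c ∈ allCycles p q l α, c.length = 3 ∨ c.length = 5 := by
    intro c hc
    rw [allCycles, List.mem_flatten] at hc
    obtain ⟨B, hB, hcB⟩ := hc
    rw [List.mem_map] at hB
    obtain ⟨j, _, rfl⟩ := hB
    exact mem_blockCycles_length hcB
  -- mkFin is injective on naturals < L
  have hmkFin : ∀ a, ∀ ha : a < L, mkFin L hL a = ⟨a, ha⟩ := by
    intro a ha
    simp [mkFin, Nat.mod_eq_of_lt ha]
  have hinj : ∀ a < L, ∀ b < L, mkFin L hL a = mkFin L hL b → a = b := by
    intro a ha b hb h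
    rw [hmkFin a ha, hmkFin b hb] at h
    exact congrArg Fin.val h
  have hmapNodup : ∀ c ∈ allCycles p q l α, (c.map (mkFin L hL)).Nodup := by
    intro c hc
    refine (hnodupEach c hc).map_on ?_
    intro x hx y hy h
    exact hinj x (hmemLT c hc x hx) y (hmemLT c hc y hy) h
  -- cycles
  have hcycle : ∀ σ ∈ (allCycles p q l α).map (toPerm L hL), σ.IsCycle := by
    intro σ hσ
    rw [List.mem_map] at hσ
    obtain ⟨c, hc, rfl⟩ := hσ
    refine List.isCycle_formPerm (hmapNodup c hc) ?_
    rw [List.length_map]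
    rcases hlen c hc with h | h <;> omega
  -- supports
  have hsupp : ∀ c ∈ allCycles p q l α, (toPerm L hL c).support = (c.map (mkFin L hL)).toFinset := by
    intro c hc
    refine List.support_formPerm_of_nodup _ (hmapNodup c hc) ?_
    intro x hx
    have := congrArg List.length hx
    rw [List.length_map] at this
    rcases hlen c hc with h | h <;> simp [h] at this
  -- pairwise disjoint
  have hdisj : ((allCycles p q l α).map (toPerm L hL)).Pairwise Equiv.Perm.Disjoint := by
    rw [List.pairwise_map]
    refine hpwDisj.imp_of_mem ?_
    intro c₁ c₂ hc₁ hc₂ hd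
    rw [Equiv.Perm.disjoint_iff_disjoint_support, hsupp c₁ hc₁, hsupp c₂ hc₂]
    rw [List.disjoint_toFinset_iff_disjoint]
    intro z hz hz'
    rw [List.mem_map] at hz hz'
    obtain ⟨x, hx, rfl⟩ := hz
    obtain ⟨y, hy, hxy⟩ := hz'
    have : y = x := hinj y (hmemLT c₂ hc₂ y hy) x (hmemLT c₁ hc₁ x hx) hxy
    subst this
    exact hd hx hy
  -- conclude
  intro c hc
  rw [sigmaB_eq] at hc
  rw [Equiv.Perm.cycleType_eq ((allCycles p q l α).map (toPerm L hL)) rfl hcycle hdisj] at hc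
  rw [List.map_map] at hc
  rw [Multiset.mem_coe, List.mem_map] at hc
  obtain ⟨c', hc', hcc⟩ := hc
  have : (toPerm L hL c').support.card = c'.length := by
    rw [hsupp c' hc', List.toFinset_card_of_nodup (hmapNodup c' hc'), List.length_map]
  rw [Function.comp_apply, Function.comp_apply] at hcc
  rw [this] at hcc
  rw [← hcc]
  exact hlen c' hc'

end SigmaBProof

/-- **Lemma.** Let `α₁, …, α_p` be positive even and `α_{p+1}, …, α_{p+2q}` positive odd
numbers (`p ≥ 1` if `q = 0`), `l ≥ 1`, and `L = (3/2)(α₁+⋯+α_{p+2q}) + p + 3q + l - 1`.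
Every length occurring in the cycle type of the product `σ_b` of the shifted block
permutations equals `3` or `5` (i.e. every cycle of `σ_b` has length `1`, `3` or `5`). -/
theorem sigmaB_cycle_lengths (p q l : ℕ) (hl : 1 ≤ l) (hpq : q = 0 → 1 ≤ p)
    (α : Fin (p + 2 * q) → ℕ)
    (hEven : ∀ i : Fin (p + 2 * q), (i : ℕ) < p → Even (α i) ∧ 0 < α i)
    (hOdd : ∀ i : Fin (p + 2 * q), p ≤ (i : ℕ) → Odd (α i) ∧ 0 < α i)
    (L : ℕ) (hLdef : L = 3 * (∑ i, α i) / 2 + p + 3 * q + l - 1) (hL : 0 < L) :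
    ∀ c ∈ (Origami.sigmaB L hL p q l α).cycleType, c = 3 ∨ c = 5 := by
  exact SigmaBProof.main p q l hl hpq α hEven hOdd L hLdef hL
end
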